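/- arXiv:1907.01543 — 8 statements merged into one kernel-verified Lean document; each statement's English description precedes it below -/
import Mathlib

section
/- Let f : ℝ^p → ℝ ∪ {+∞} be a proper lower semi-continuous function that is L-weakly convex (i.e. x ↦ f(x) + (L/2)‖x‖² is convex), and let λ > 0 satisfy λL < 1. Then the Moreau envelope f_λ is everywhere differentiable and its gradient is Lipschitz continuous with constant (1/λ) + 1/(λ(1 − λL)). -/
set_option maxHeartbeats 1000000

open scoped RealInnerProductSpace

section Aux

lemma lsc_min_on_compact {α : Type*} [TopologicalSpace α] [T2Space α] {f : α → EReal}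
    (hf : LowerSemicontinuous f) {s : Set α} (hs : IsCompact s) (hne : s.Nonempty) :
    ∃ x ∈ s, ∀ y ∈ s, f x ≤ f y := by
  set m := sInf (f '' s) with hm
  have hle : ∀ y ∈ s, m ≤ f y := fun y hy => sInf_le ⟨y, hy, rfl⟩
  suffices h : ∃ x ∈ s, f x ≤ m by
    obtain ⟨x, hx, hxm⟩ := h
    exact ⟨x, hx, fun y hy => hxm.trans (hle y hy)⟩
  by_cases htop : m = ⊤
  · obtain ⟨x, hx⟩ := hne
    exact ⟨x, hx, by simp [htop]⟩
  · have : Nonempty {a : EReal // m < a} := ⟨⟨⊤, lt_top_iff_ne_top.2 htop⟩⟩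
    set t : {a : EReal // m < a} → Set α := fun a => s ∩ f ⁻¹' (Set.Iic a.1) with ht
    have hts : ∀ a, (t a).Nonempty := by
      intro a
      obtain ⟨b, ⟨y, hy, rfl⟩, hb⟩ := sInf_lt_iff.1 a.2
      exact ⟨y, hy, le_of_lt hb⟩
    have htc : ∀ a, IsCompact (t a) :=
      fun a => hs.inter_right (hf.isClosed_preimage a.1)
    have htcl : ∀ a, IsClosed (t a) :=
      fun a => (hs.isClosed).inter (hf.isClosed_preimage a.1)
    have hdir : Directed (· ⊇ ·) t := by
      intro a b
      refine ⟨⟨min a.1 b.1, lt_min a.2 b.2⟩, ?_, ?_⟩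
      · intro z hz
        simp only [ht, Set.mem_inter_iff, Set.mem_preimage, Set.mem_Iic] at hz ⊢
        exact ⟨hz.1, hz.2.trans (min_le_left _ _)⟩
      · intro z hz
        simp only [ht, Set.mem_inter_iff, Set.mem_preimage, Set.mem_Iic] at hz ⊢
        exact ⟨hz.1, hz.2.trans (min_le_right _ _)⟩
    obtain ⟨x, hx⟩ := IsCompact.nonempty_iInter_of_directed_nonempty_isCompact_isClosed
      t hdir hts htc htcl
    simp only [Set.mem_iInter] at hx
    have hxs : x ∈ s := (hx ⟨⊤, lt_top_iff_ne_top.2 htop⟩).1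
    refine ⟨x, hxs, ?_⟩
    by_contra hlt
    push_neg at hlt
    obtain ⟨a, ham, haf⟩ := exists_between hlt
    exact absurd ((hx ⟨a, ham⟩).2 : f x ≤ a) (not_le.2 haf)

variable {E : Type*} [NormedAddCommGroup E] [InnerProductSpace ℝ E]

lemma comb_norm_sq (a b : ℝ) (hab : a + b = 1) (x y : E) :
    ‖a • x + b • y‖ ^ 2 = a * ‖x‖ ^ 2 + b * ‖y‖ ^ 2 - a * b * ‖x - y‖ ^ 2 := by
  have h1 : ‖a • x + b • y‖ ^ 2
      = a ^ 2 * ‖x‖ ^ 2 + 2 * (a * b) * ⟪x, y⟫ + b ^ 2 * ‖y‖ ^ 2 := by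
    rw [norm_add_sq_real, real_inner_smul_left, real_inner_smul_right, norm_smul, norm_smul]
    simp [Real.norm_eq_abs, mul_pow, sq_abs]
    ring
  have h2 : ‖x - y‖ ^ 2 = ‖x‖ ^ 2 - 2 * ⟪x, y⟫ + ‖y‖ ^ 2 := norm_sub_sq_real x y
  have hb : b = 1 - a := by linarith
  subst hb
  rw [h1, h2]; ring

lemma four_pt (x y u v : E) :
    ‖x - v‖ ^ 2 - ‖x - u‖ ^ 2 + ‖y - u‖ ^ 2 - ‖y - v‖ ^ 2 = 2 * ⟪x - y, u - v⟫ := by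
  simp only [norm_sub_sq_real, inner_sub_left, inner_sub_right]
  have h1 : ⟪y, x⟫ = ⟪x, y⟫ := real_inner_comm x y
  have h2 : ⟪v, u⟫ = ⟪u, v⟫ := real_inner_comm u v
  ring

lemma expand_sq (x y u : E) :
    ‖y - u‖ ^ 2 = ‖y - x‖ ^ 2 + 2 * ⟪x - u, y - x⟫ + ‖x - u‖ ^ 2 := by
  have h : y - u = (y - x) + (x - u) := by abel
  rw [h, norm_add_sq_real]
  rw [real_inner_comm]

end Aux

section Main

lemma moreau_main {E : Type*} [NormedAddCommGroup E] [InnerProductSpace ℝ E]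
    [ProperSpace E] [CompleteSpace E] (f : E → EReal) (L lam : ℝ)
    (hlam : 0 < lam) (hlamL : lam * L < 1)
    (hproper : ∃ x, f x ≠ ⊤) (hbot : ∀ x, f x ≠ ⊥)
    (hlsc : LowerSemicontinuous f)
    (hwc : ∀ x y : E, ∀ a b : ℝ, 0 ≤ a → 0 ≤ b → a + b = 1 →
      f (a • x + b • y) + ((L / 2 * ‖a • x + b • y‖ ^ 2 : ℝ) : EReal) ≤
        (a : EReal) * (f x + ((L / 2 * ‖x‖ ^ 2 : ℝ) : EReal)) +
          (b : EReal) * (f y + ((L / 2 * ‖y‖ ^ 2 : ℝ) : EReal))) :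
    ∃ F : E → ℝ,
      (∀ x, (F x : EReal) = ⨅ x', f x' + ((1 / (2 * lam) * ‖x - x'‖ ^ 2 : ℝ) : EReal)) ∧
      Differentiable ℝ F ∧
      ∀ x y, ‖gradient F x - gradient F y‖ ≤ (1 / lam + 1 / (lam * (1 - lam * L))) * ‖x - y‖ := by
  classical
  obtain ⟨x₀, hx₀⟩ := hproper
  have h1L : 0 < 1 - lam * L := by linarith
  set c : ℝ := 1 / (2 * lam) with hcdef
  have hc : 0 < c := by rw [hcdef]; positivity
  set ν : ℝ := c - L / 2 with hνdef
  have hν_eq : ν = (1 - lam * L) / (2 * lam) := by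
    rw [hνdef, hcdef]; field_simp
  have hν : 0 < ν := by rw [hν_eq]; positivity
  set φ : E → ℝ := fun z => (f z).toReal with hφdef
  have hDco : ∀ z, f z ≠ ⊤ → f z = ((φ z : ℝ) : EReal) :=
    fun z hz => (EReal.coe_toReal hz (hbot z)).symm
  clear_value c ν φ
  -- real-valued Jensen inequality
  have hj : ∀ x y : E, f x ≠ ⊤ → f y ≠ ⊤ → ∀ a b : ℝ, 0 ≤ a → 0 ≤ b → a + b = 1 →
      f (a • x + b • y) ≠ ⊤ ∧
      φ (a • x + b • y) + L / 2 * ‖a • x + b • y‖ ^ 2 ≤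
        a * (φ x + L / 2 * ‖x‖ ^ 2) + b * (φ y + L / 2 * ‖y‖ ^ 2) := by
    intro x y hx hy a b ha hb hab
    have h := hwc x y a b ha hb hab
    rw [hDco x hx, hDco y hy, ← EReal.coe_add, ← EReal.coe_add, ← EReal.coe_mul, ← EReal.coe_mul,
      ← EReal.coe_add] at h
    have hmem : f (a • x + b • y) ≠ ⊤ := by
      intro htop
      rw [htop, EReal.top_add_coe] at h
      exact (EReal.coe_lt_top _).not_ge h
    refine ⟨hmem, ?_⟩
    rw [hDco _ hmem, ← EReal.coe_add] at h
    exact_mod_cast h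
  -- strong convexity of the Moreau objective
  have hstr : ∀ (x z₁ z₂ : E), f z₁ ≠ ⊤ → f z₂ ≠ ⊤ → ∀ a b : ℝ, 0 ≤ a → 0 ≤ b → a + b = 1 →
      f (a • z₁ + b • z₂) ≠ ⊤ ∧
      φ (a • z₁ + b • z₂) + c * ‖x - (a • z₁ + b • z₂)‖ ^ 2 ≤
        a * (φ z₁ + c * ‖x - z₁‖ ^ 2) + b * (φ z₂ + c * ‖x - z₂‖ ^ 2)
          - ν * (a * b * ‖z₁ - z₂‖ ^ 2) := by
    intro x z₁ z₂ h1 h2 a b ha hb hab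
    obtain ⟨hmem, hineq⟩ := hj z₁ z₂ h1 h2 a b ha hb hab
    refine ⟨hmem, ?_⟩
    have e1 : ‖a • z₁ + b • z₂‖ ^ 2 = a * ‖z₁‖ ^ 2 + b * ‖z₂‖ ^ 2 - a * b * ‖z₁ - z₂‖ ^ 2 :=
      comb_norm_sq a b hab z₁ z₂
    have e2 : ‖x - (a • z₁ + b • z₂)‖ ^ 2
        = a * ‖x - z₁‖ ^ 2 + b * ‖x - z₂‖ ^ 2 - a * b * ‖z₁ - z₂‖ ^ 2 := by
      have hx : x - (a • z₁ + b • z₂) = a • (x - z₁) + b • (x - z₂) := by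
        have hxx : a • (x - z₁) + b • (x - z₂) = (a + b) • x - (a • z₁ + b • z₂) := by
          rw [smul_sub, smul_sub, add_smul]; abel
        rw [hxx, hab, one_smul]
      rw [hx, comb_norm_sq a b hab]
      have : (x - z₁) - (x - z₂) = z₂ - z₁ := by abel
      rw [this, norm_sub_rev z₂ z₁]
    rw [e1] at hineq
    rw [e2, hνdef]
    nlinarith [hineq]
  -- the Moreau objective
  set H : E → E → EReal := fun x z => f z + ((c * ‖x - z‖ ^ 2 : ℝ) : EReal) with hHdef
  have hHco : ∀ x z, f z ≠ ⊤ → H x z = ((φ z + c * ‖x - z‖ ^ 2 : ℝ) : EReal) := by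
    intro x z hz
    simp only [hHdef]
    rw [hDco z hz, ← EReal.coe_add]
  have hHbot : ∀ x z, H x z ≠ ⊥ := by
    intro x z
    simp only [hHdef]
    by_cases hz : f z = ⊤
    · rw [hz, EReal.top_add_coe]; exact top_ne_bot
    · rw [hDco z hz, ← EReal.coe_add]; exact EReal.coe_ne_bot _
  have hHlsc : ∀ x, LowerSemicontinuous (H x) := by
    intro x
    apply hlsc.add'
    · have hcont : Continuous fun z : E => ((c * ‖x - z‖ ^ 2 : ℝ) : EReal) :=
        continuous_coe_real_ereal.comp
          (continuous_const.mul (((continuous_const.sub continuous_id).norm).pow 2))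
      exact hcont.lowerSemicontinuous
    · intro z
      exact EReal.continuousAt_add (Or.inr (EReal.coe_ne_bot _)) (Or.inr (EReal.coe_ne_top _))
  -- existence of a minimizer at every point
  have exmin : ∀ x : E, ∃ w : E, f w ≠ ⊤ ∧ ∀ z, H x w ≤ H x z := by
    intro x
    obtain ⟨w, hwB, hwmin⟩ := lsc_min_on_compact (hHlsc x) (isCompact_closedBall x₀ 1)
      ⟨x₀, Metric.mem_closedBall_self zero_le_one⟩
    set m : ℝ := (H x w).toReal with hmdef
    have hHx₀ : H x x₀ = ((φ x₀ + c * ‖x - x₀‖ ^ 2 : ℝ) : EReal) := hHco x x₀ hx₀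
    have hwx₀ : H x w ≤ H x x₀ := hwmin x₀ (Metric.mem_closedBall_self zero_le_one)
    have hwtop : H x w ≠ ⊤ := by
      rw [hHx₀] at hwx₀
      exact (hwx₀.trans_lt (EReal.coe_lt_top _)).ne
    have hmco : (m : EReal) = H x w := EReal.coe_toReal hwtop (hHbot x w)
    set P : ℝ := φ x₀ + c * ‖x - x₀‖ ^ 2 with hPdef
    -- coercivity / growth estimate
    have hgrow : ∀ z : E, f z ≠ ⊤ → 1 ≤ ‖z - x₀‖ →
        ‖z - x₀‖ * m ≤ (‖z - x₀‖ - 1) * P + (φ z + c * ‖x - z‖ ^ 2)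
          - ν * (‖z - x₀‖ - 1) * ‖z - x₀‖ := by
      intro z hz hd
      have hd0 : (0:ℝ) < ‖z - x₀‖ := lt_of_lt_of_le one_pos hd
      obtain ⟨hmem, hineq⟩ := hstr x x₀ z hx₀ hz (1 - 1/‖z - x₀‖) (1/‖z - x₀‖)
        (by rw [sub_nonneg, div_le_one hd0]; linarith) (by positivity) (by ring)
      have hyB : (1 - 1/‖z - x₀‖) • x₀ + (1/‖z - x₀‖) • z ∈ Metric.closedBall x₀ 1 := by
        have hy : (1 - 1/‖z - x₀‖) • x₀ + (1/‖z - x₀‖) • z - x₀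
            = (1/‖z - x₀‖) • (z - x₀) := by
          rw [sub_smul, one_smul, smul_sub]; abel
        rw [Metric.mem_closedBall, dist_eq_norm, hy, norm_smul, Real.norm_eq_abs,
          abs_of_pos (by positivity)]
        rw [one_div, inv_mul_cancel₀ hd0.ne']
      have hmy : m ≤ φ ((1 - 1/‖z - x₀‖) • x₀ + (1/‖z - x₀‖) • z)
          + c * ‖x - ((1 - 1/‖z - x₀‖) • x₀ + (1/‖z - x₀‖) • z)‖ ^ 2 := by
        have h := hwmin _ hyB
        rw [← hmco, hHco x _ hmem] at h
        exact_mod_cast h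
      have hnr : ‖x₀ - z‖ = ‖z - x₀‖ := norm_sub_rev x₀ z
      rw [hnr] at hineq
      have hm2 : m ≤ (1 - 1/‖z - x₀‖) * P + (1/‖z - x₀‖) * (φ z + c * ‖x - z‖ ^ 2)
          - ν * (‖z - x₀‖ - 1) := by
        have e3 : (1 - 1/‖z - x₀‖) * (1/‖z - x₀‖) * ‖z - x₀‖ ^ 2 = ‖z - x₀‖ - 1 := by
          have h9 : ‖z - x₀‖ ≠ 0 := hd0.ne'
          field_simp
        calc m ≤ φ ((1 - 1/‖z - x₀‖) • x₀ + (1/‖z - x₀‖) • z)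
              + c * ‖x - ((1 - 1/‖z - x₀‖) • x₀ + (1/‖z - x₀‖) • z)‖ ^ 2 := hmy
          _ ≤ (1 - 1/‖z - x₀‖) * (φ x₀ + c * ‖x - x₀‖ ^ 2)
              + (1/‖z - x₀‖) * (φ z + c * ‖x - z‖ ^ 2)
              - ν * ((1 - 1/‖z - x₀‖) * (1/‖z - x₀‖) * ‖z - x₀‖ ^ 2) := hineq
          _ = _ := by rw [e3, hPdef]
      have h6 := mul_le_mul_of_nonneg_left hm2 hd0.le
      have e4 : ‖z - x₀‖ * ((1 - 1/‖z - x₀‖) * P + (1/‖z - x₀‖) * (φ z + c * ‖x - z‖ ^ 2)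
          - ν * (‖z - x₀‖ - 1))
          = (‖z - x₀‖ - 1) * P + (φ z + c * ‖x - z‖ ^ 2)
            - ν * (‖z - x₀‖ - 1) * ‖z - x₀‖ := by
        field_simp
      rw [e4] at h6
      exact h6
    -- radius of a ball containing a global minimizer
    set K : ℝ := max 0 (P - m) with hKdef
    set R : ℝ := max 1 (1 + (K + 1) / ν) with hRdef
    have hR1 : (1:ℝ) ≤ R := le_max_left _ _
    have hout : ∀ z : E, R ≤ ‖z - x₀‖ → H x x₀ ≤ H x z := by
      intro z hz
      by_cases hzt : f z = ⊤
      · simp only [hHdef, hzt, EReal.top_add_coe]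
        exact le_top
      · have hd1 : 1 ≤ ‖z - x₀‖ := le_trans hR1 hz
        have hd0 : (0:ℝ) < ‖z - x₀‖ := lt_of_lt_of_le one_pos hd1
        have hg := hgrow z hzt hd1
        rw [hHx₀, hHco x z hzt]
        rw [EReal.coe_le_coe_iff]
        have hK1 : K + 1 ≤ ν * (‖z - x₀‖ - 1) := by
          have h7 : 1 + (K + 1) / ν ≤ ‖z - x₀‖ := le_trans (le_max_right _ _) hz
          rw [← sub_nonneg]
          have : (K + 1) / ν ≤ ‖z - x₀‖ - 1 := by linarith
          calc (0:ℝ) ≤ ν * ((‖z - x₀‖ - 1) - (K + 1) / ν) := by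
                apply mul_nonneg hν.le
                rw [sub_nonneg]; exact this
            _ = ν * (‖z - x₀‖ - 1) - (K + 1) := by
                rw [mul_sub ν]
                congr 1
                rw [mul_div_cancel₀ _ hν.ne']
        have hKP : P - m ≤ K := le_max_right _ _
        have hK0 : 0 ≤ K := le_max_left _ _
        have hA : ‖z - x₀‖ * (K + 1) ≤ ‖z - x₀‖ * (ν * (‖z - x₀‖ - 1)) :=
          mul_le_mul_of_nonneg_left hK1 hd0.le
        have hB : 0 ≤ ‖z - x₀‖ * ((m - P) + K) :=
          mul_nonneg hd0.le (by linarith)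
        nlinarith [hg, hA, hB, hd1]
    obtain ⟨w', hw'B, hw'min⟩ := lsc_min_on_compact (hHlsc x) (isCompact_closedBall x₀ R)
      ⟨x₀, Metric.mem_closedBall_self (by linarith)⟩
    have hx₀B : x₀ ∈ Metric.closedBall x₀ R := Metric.mem_closedBall_self (by linarith)
    have hglobal : ∀ z, H x w' ≤ H x z := by
      intro z
      by_cases hzB : z ∈ Metric.closedBall x₀ R
      · exact hw'min z hzB
      · refine le_trans (hw'min x₀ hx₀B) (hout z ?_)
        rw [Metric.mem_closedBall, dist_eq_norm] at hzB
        push_neg at hzB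
        exact hzB.le
    refine ⟨w', ?_, hglobal⟩
    intro hw't
    have h := hglobal x₀
    rw [hHx₀] at h
    simp only [hHdef, hw't, EReal.top_add_coe] at h
    exact (EReal.coe_lt_top _).not_ge h
  choose u hutop humin using exmin
  set F : E → ℝ := fun x => φ (u x) + c * ‖x - u x‖ ^ 2 with hFdef
  have hFeval : ∀ x, F x = φ (u x) + c * ‖x - u x‖ ^ 2 := fun _ => rfl
  clear_value F
  have hFco : ∀ x, (F x : EReal) = H x (u x) := by
    intro x
    rw [hHco x (u x) (hutop x), hFeval x]
  have huminR : ∀ x z : E, f z ≠ ⊤ → F x ≤ φ z + c * ‖x - z‖ ^ 2 := by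
    intro x z hz
    have h := humin x z
    rw [hHco x z hz, hHco x (u x) (hutop x)] at h
    rw [hFeval x]
    exact_mod_cast h
  -- the key strong-minimality inequality
  have hK : ∀ x z : E, f z ≠ ⊤ → F x + ν * ‖z - u x‖ ^ 2 ≤ φ z + c * ‖x - z‖ ^ 2 := by
    intro x z hz
    have hF : ∀ t : ℝ, t ∈ Set.Ioo (0:ℝ) 1 →
        F x + ν * ((1 - t) * ‖z - u x‖ ^ 2) ≤ φ z + c * ‖x - z‖ ^ 2 := by
      intro t ht
      obtain ⟨hmem, hineq⟩ := hstr x (u x) z (hutop x) hz (1 - t) t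
        (by linarith [ht.2]) (le_of_lt ht.1) (by ring)
      have hle : F x ≤ φ ((1-t) • u x + t • z) + c * ‖x - ((1-t) • u x + t • z)‖ ^ 2 :=
        huminR x _ hmem
      have hFx : F x = φ (u x) + c * ‖x - u x‖ ^ 2 := hFeval x
      have hnr : ‖u x - z‖ = ‖z - u x‖ := norm_sub_rev _ _
      rw [hnr, ← hFx] at hineq
      have hcomb : t * (F x + ν * ((1 - t) * ‖z - u x‖ ^ 2))
          ≤ t * (φ z + c * ‖x - z‖ ^ 2) := by nlinarith [hle, hineq]
      exact le_of_mul_le_mul_left hcomb ht.1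
    have htend : Filter.Tendsto (fun t : ℝ => F x + ν * ((1 - t) * ‖z - u x‖ ^ 2))
        (nhdsWithin 0 (Set.Ioi 0)) (nhds (F x + ν * ((1 - 0) * ‖z - u x‖ ^ 2))) := by
      apply Filter.Tendsto.mono_left _ nhdsWithin_le_nhds
      exact Continuous.tendsto (continuous_const.add (continuous_const.mul
        ((continuous_const.sub continuous_id).mul continuous_const))) 0
    have hev : ∀ᶠ t in nhdsWithin (0:ℝ) (Set.Ioi 0),
        F x + ν * ((1 - t) * ‖z - u x‖ ^ 2) ≤ φ z + c * ‖x - z‖ ^ 2 := by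
      filter_upwards [Ioo_mem_nhdsGT_of_mem (by norm_num : (0:ℝ) ∈ Set.Ico 0 1)] with t ht
      exact hF t ht
    have hlim := le_of_tendsto htend hev
    simpa using hlim
  -- the proximal map is Lipschitz
  have huLip : ∀ x y : E, ‖u x - u y‖ ≤ (c / ν) * ‖x - y‖ := by
    intro x y
    have h1 := hK x (u y) (hutop y)
    have h2 := hK y (u x) (hutop x)
    have hFx : F x = φ (u x) + c * ‖x - u x‖ ^ 2 := hFeval x
    have hFy : F y = φ (u y) + c * ‖y - u y‖ ^ 2 := hFeval y
    rw [hFx] at h1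
    rw [hFy] at h2
    have hfour := four_pt x y (u x) (u y)
    have hnr : ‖u y - u x‖ = ‖u x - u y‖ := norm_sub_rev _ _
    rw [hnr] at h1
    have hfour' : c * (‖x - u y‖ ^ 2 - ‖x - u x‖ ^ 2 + ‖y - u x‖ ^ 2 - ‖y - u y‖ ^ 2)
        = c * (2 * ⟪x - y, u x - u y⟫) := by rw [hfour]
    have hip : 2 * ν * ‖u x - u y‖ ^ 2 ≤ 2 * c * ⟪x - y, u x - u y⟫ := by
      nlinarith [h1, h2, hfour']
    have hcs : ⟪x - y, u x - u y⟫ ≤ ‖x - y‖ * ‖u x - u y‖ := real_inner_le_norm _ _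
    by_cases hN : ‖u x - u y‖ = 0
    · rw [hN]
      exact mul_nonneg (le_of_lt (div_pos hc hν)) (norm_nonneg _)
    · have hN0 : 0 < ‖u x - u y‖ := (norm_nonneg _).lt_of_ne (Ne.symm hN)
      rw [div_mul_eq_mul_div, le_div_iff₀ hν]
      nlinarith [hip, hN0, mul_le_mul_of_nonneg_left hcs (by linarith : (0:ℝ) ≤ 2*c),
        mul_pos hN0 hN0]
  -- gradient
  set v : E → E := fun x => (2*c) • (x - u x) with hvdef
  have hgrad : ∀ x, HasGradientAt F (v x) x := by
    intro x
    have einner : ∀ y : E, ⟪v x, y - x⟫ = 2*c*⟪x - u x, y - x⟫ := by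
      intro y
      simp only [hvdef]
      rw [real_inner_smul_left]
    have hub : ∀ y, F y - F x - ⟪v x, y - x⟫ ≤ (c + 2*c*(c/ν)) * ‖y - x‖ ^ 2 := by
      intro y
      have h1 : F y ≤ φ (u x) + c * ‖y - u x‖ ^ 2 := huminR y (u x) (hutop x)
      have hFx : F x = φ (u x) + c * ‖x - u x‖ ^ 2 := hFeval x
      have e : ‖y - u x‖ ^ 2 = ‖y - x‖ ^ 2 + 2 * ⟪x - u x, y - x⟫ + ‖x - u x‖ ^ 2 :=
        expand_sq x y (u x)
      have ec : c * ‖y - u x‖ ^ 2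
          = c * (‖y - x‖ ^ 2 + 2 * ⟪x - u x, y - x⟫ + ‖x - u x‖ ^ 2) := by rw [e]
      rw [einner y]
      have key : F y - F x - 2*c*⟪x - u x, y - x⟫ ≤ c * ‖y - x‖ ^ 2 := by
        linarith [h1, ec, hFx]
      have hpos : 0 ≤ (2*c*(c/ν)) * ‖y - x‖ ^ 2 :=
        mul_nonneg (mul_nonneg (by linarith) (le_of_lt (div_pos hc hν))) (sq_nonneg _)
      rw [add_mul]; linarith only [key, hpos]
    have hlb : ∀ y, -((c + 2*c*(c/ν)) * ‖y - x‖ ^ 2) ≤ F y - F x - ⟪v x, y - x⟫ := by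
      intro y
      have h1 : F x ≤ φ (u y) + c * ‖x - u y‖ ^ 2 := huminR x (u y) (hutop y)
      have hFy : F y = φ (u y) + c * ‖y - u y‖ ^ 2 := hFeval y
      have e : ‖y - u y‖ ^ 2 = ‖y - x‖ ^ 2 + 2 * ⟪x - u y, y - x⟫ + ‖x - u y‖ ^ 2 :=
        expand_sq x y (u y)
      have esplit : ⟪x - u y, y - x⟫ = ⟪x - u x, y - x⟫ + ⟪u x - u y, y - x⟫ := by
        rw [← inner_add_left]
        congr 1
        abel
      have ebnd : -(‖u x - u y‖ * ‖y - x‖) ≤ ⟪u x - u y, y - x⟫ := by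
        have := abs_real_inner_le_norm (u x - u y) (y - x)
        have h' := neg_abs_le (⟪u x - u y, y - x⟫)
        linarith
      have elip : ‖u x - u y‖ * ‖y - x‖ ≤ (c/ν) * ‖y - x‖ * ‖y - x‖ := by
        have h2 := huLip x y
        rw [norm_sub_rev x y] at h2
        have := mul_le_mul_of_nonneg_right h2 (norm_nonneg (y - x))
        linarith [this]
      have hprod : 2*c*(-((c/ν) * ‖y - x‖ * ‖y - x‖)) ≤ 2*c*⟪u x - u y, y - x⟫ := by
        apply mul_le_mul_of_nonneg_left _ (by linarith : (0:ℝ) ≤ 2*c)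
        linarith
      have ec : c * ‖y - u y‖ ^ 2
          = c * (‖y - x‖ ^ 2 + 2 * ⟪x - u y, y - x⟫ + ‖x - u y‖ ^ 2) := by rw [e]
      have ec2 : (2*c) * ⟪x - u y, y - x⟫
          = (2*c) * (⟪x - u x, y - x⟫ + ⟪u x - u y, y - x⟫) := by rw [esplit]
      rw [einner y]
      have key : c * ‖y - x‖ ^ 2 + 2*c*⟪u x - u y, y - x⟫
          ≤ F y - F x - 2*c*⟪x - u x, y - x⟫ := by
        linarith [h1, ec, ec2, hFy]
      have key2 : -((2*c*(c/ν)) * ‖y - x‖ ^ 2) ≤ 2*c*⟪u x - u y, y - x⟫ := by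
        have e9 : (2*c*(c/ν)) * ‖y - x‖ ^ 2 = 2*c*((c/ν) * ‖y - x‖ * ‖y - x‖) := by ring
        rw [e9]
        linarith [hprod]
      have hpos : 0 ≤ c * ‖y - x‖ ^ 2 := mul_nonneg hc.le (sq_nonneg _)
      linarith only [key, key2, hpos]
    rw [hasGradientAt_iff_hasFDerivAt]
    apply HasFDerivAt.of_isLittleO
    have hbig : (fun y => F y - F x - (InnerProductSpace.toDual ℝ E (v x)) (y - x))
        =O[nhds x] (fun y => ‖y - x‖ ^ 2) := by
      apply Asymptotics.IsBigO.of_bound (c + 2*c*(c/ν))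
      filter_upwards with y
      rw [InnerProductSpace.toDual_apply_apply]
      have hn2 : ‖(‖y - x‖ ^ 2 : ℝ)‖ = ‖y - x‖ ^ 2 := by
        rw [Real.norm_eq_abs, abs_of_nonneg (sq_nonneg _)]
      rw [hn2, Real.norm_eq_abs, abs_le]
      exact ⟨hlb y, hub y⟩
    have hlit : (fun y : E => ‖y - x‖ ^ 2) =o[nhds x] fun y => y - x := by
      rw [Asymptotics.isLittleO_iff]
      intro ε hε
      filter_upwards [Metric.ball_mem_nhds x hε] with y hy
      have hyd : ‖y - x‖ < ε := by
        rw [← dist_eq_norm]; exact hy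
      rw [Real.norm_eq_abs, abs_of_nonneg (sq_nonneg _)]
      calc ‖y - x‖ ^ 2 = ‖y - x‖ * ‖y - x‖ := sq ‖y - x‖
        _ ≤ ε * ‖y - x‖ := mul_le_mul_of_nonneg_right hyd.le (norm_nonneg _)
    exact hbig.trans_isLittleO hlit
  have hconst : 2*c*(1 + c/ν) = 1/lam + 1/(lam*(1 - lam*L)) := by
    rw [hcdef, hν_eq]
    field_simp
  refine ⟨F, ?_, fun x => (hgrad x).differentiableAt, ?_⟩
  · intro x
    rw [hFco x]
    exact le_antisymm (le_iInf (humin x)) (iInf_le _ (u x))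
  · intro x y
    rw [(hgrad x).gradient, (hgrad y).gradient]
    have e : v x - v y = (2*c) • ((x - y) - (u x - u y)) := by
      simp only [hvdef]
      rw [← smul_sub]
      congr 1
      abel
    rw [e, norm_smul, Real.norm_eq_abs, abs_of_pos (by linarith : (0:ℝ) < 2*c)]
    have h1 : ‖(x - y) - (u x - u y)‖ ≤ ‖x - y‖ + ‖u x - u y‖ := norm_sub_le _ _
    have h2 := huLip x y
    calc (2*c) * ‖(x - y) - (u x - u y)‖ ≤ (2*c) * (‖x - y‖ + (c/ν) * ‖x - y‖) := by
          apply mul_le_mul_of_nonneg_left _ (by linarith : (0:ℝ) ≤ 2*c)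
          linarith
      _ = (2*c*(1 + c/ν)) * ‖x - y‖ := by ring
      _ = (1/lam + 1/(lam*(1 - lam*L))) * ‖x - y‖ := by rw [hconst]

end Main

/-- Lemma 1(b): For a proper l.s.c. `L`-weakly convex
`f : ℝ^p → ℝ ∪ {+∞}` and `0 < λ` with `λL < 1`, the Moreau envelope `f_λ` is
(real-valued and) everywhere differentiable, with gradient Lipschitz of constant
`1/λ + 1/(λ(1 − λL))`. -/
theorem stmt_2 {p : ℕ} (f : EuclideanSpace ℝ (Fin p) → EReal) (L lam : ℝ)
    (hlam : 0 < lam) (hlamL : lam * L < 1)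
    (hproper : ∃ x, f x ≠ ⊤) (hbot : ∀ x, f x ≠ ⊥)
    (hlsc : LowerSemicontinuous f)
    (hwc : ∀ x y : EuclideanSpace ℝ (Fin p), ∀ a b : ℝ, 0 ≤ a → 0 ≤ b → a + b = 1 →
      f (a • x + b • y) + ((L / 2 * ‖a • x + b • y‖ ^ 2 : ℝ) : EReal) ≤
        (a : EReal) * (f x + ((L / 2 * ‖x‖ ^ 2 : ℝ) : EReal)) +
          (b : EReal) * (f y + ((L / 2 * ‖y‖ ^ 2 : ℝ) : EReal))) :
    ∃ F : EuclideanSpace ℝ (Fin p) → ℝ,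
      (∀ x, (F x : EReal) = ⨅ x', f x' + ((1 / (2 * lam) * ‖x - x'‖ ^ 2 : ℝ) : EReal)) ∧
      Differentiable ℝ F ∧
      ∀ x y, ‖gradient F x - gradient F y‖ ≤ (1 / lam + 1 / (lam * (1 - lam * L))) * ‖x - y‖ :=
  moreau_main f L lam hlam hlamL hproper hbot hlsc hwc
end

section
/- Let f : ℝ^p → ℝ ∪ {+∞} be a proper lower semi-continuous function that is L-weakly convex (i.e. x ↦ f(x) + (L/2)‖x‖² is convex), and let λ > 0 satisfy λL < 1. For every x ∈ ℝ^p, let x̂_λ(x) be the unique minimizer of x' ↦ f(x') + (1/(2λ))‖x − x'‖². Then the Moreau envelope f_λ is differentiable at x with ∇f_λ(x) = (x − x̂_λ(x))/λ, and the vector u = (x − x̂_λ(x))/λ is a Fréchet subgradient of f at x̂_λ(x); in particular min_{u ∈ ∂f(x̂_λ(x))} ‖u‖ ≤ (1/λ)‖x̂_λ(x) − x‖ = ‖∇f_λ(x)‖. -/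
open scoped InnerProductSpace

set_option maxHeartbeats 1000000 in
/-- Lemma 1(c): For a proper l.s.c. `L`-weakly convex
`f : ℝ^p → ℝ ∪ {+∞}`, `0 < λ`, `λL < 1`, and `x̂ = x̂_λ(x)` the minimizer of
`x' ↦ f x' + (1/(2λ))‖x − x'‖²`, the Moreau envelope `f_λ` is differentiable at `x`
with `∇f_λ(x) = (x − x̂)/λ`, and `u = (x − x̂)/λ` is a Fréchet subgradient of `f` at `x̂`
(stated via the equivalent ε-form of the liminf inequality); in particular
`min_{u ∈ ∂f(x̂)} ‖u‖ ≤ (1/λ)‖x̂ − x‖ = ‖∇f_λ(x)‖`. -/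
theorem stmt_3 {p : ℕ} (f : EuclideanSpace ℝ (Fin p) → EReal) (L lam : ℝ)
    (hlam : 0 < lam) (hlamL : lam * L < 1)
    (hproper : ∃ x, f x ≠ ⊤) (hbot : ∀ x, f x ≠ ⊥)
    (hlsc : LowerSemicontinuous f)
    (hwc : ∀ x y : EuclideanSpace ℝ (Fin p), ∀ a b : ℝ, 0 ≤ a → 0 ≤ b → a + b = 1 →
      f (a • x + b • y) + ((L / 2 * ‖a • x + b • y‖ ^ 2 : ℝ) : EReal) ≤
        (a : EReal) * (f x + ((L / 2 * ‖x‖ ^ 2 : ℝ) : EReal)) +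
          (b : EReal) * (f y + ((L / 2 * ‖y‖ ^ 2 : ℝ) : EReal)))
    (x xhat : EuclideanSpace ℝ (Fin p))
    (hmin : ∀ x', f xhat + ((1 / (2 * lam) * ‖x - xhat‖ ^ 2 : ℝ) : EReal) ≤
        f x' + ((1 / (2 * lam) * ‖x - x'‖ ^ 2 : ℝ) : EReal)) :
    ∃ F : EuclideanSpace ℝ (Fin p) → ℝ,
      (∀ z, (F z : EReal) = ⨅ x', f x' + ((1 / (2 * lam) * ‖z - x'‖ ^ 2 : ℝ) : EReal)) ∧
      HasGradientAt F ((1 / lam) • (x - xhat)) x ∧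
      (∀ ε : ℝ, 0 < ε → ∀ᶠ x' in nhds xhat,
        f xhat + ((⟪(1 / lam) • (x - xhat), x' - xhat⟫_ℝ - ε * ‖x' - xhat‖ : ℝ) : EReal) ≤ f x') ∧
      ‖(1 / lam) • (x - xhat)‖ = (1 / lam) * ‖xhat - x‖ := by
  -- f xhat is real
  have hfhat_ne_top : f xhat ≠ ⊤ := by
    obtain ⟨x₀, hx₀⟩ := hproper
    intro htop
    have hs : f x₀ = ((f x₀).toReal : EReal) := (EReal.coe_toReal hx₀ (hbot x₀)).symm
    have h := hmin x₀
    rw [htop, hs, EReal.top_add_coe, ← EReal.coe_add] at h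
    exact (EReal.coe_lt_top _).not_ge h
  obtain ⟨r, hr⟩ : ∃ r : ℝ, r = (f xhat).toReal := ⟨_, rfl⟩
  have hfhat : f xhat = (r : EReal) := by rw [hr]; exact (EReal.coe_toReal hfhat_ne_top (hbot xhat)).symm
  -- real version of hmin
  have hA : ∀ (x' : EuclideanSpace ℝ (Fin p)) (s : ℝ), f x' = (s : EReal) →
      r + 1 / (2 * lam) * ‖x - xhat‖ ^ 2 ≤ s + 1 / (2 * lam) * ‖x - x'‖ ^ 2 := by
    intro x' s hs
    have h := hmin x'
    rw [hfhat, hs] at h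
    exact_mod_cast h
  -- subgradient inequality (lemma B)
  have hB : ∀ (x' : EuclideanSpace ℝ (Fin p)) (s : ℝ), f x' = (s : EReal) →
      ⟪x - xhat, x' - xhat⟫_ℝ ≤ lam * (s - r) + lam * L / 2 * ‖x' - xhat‖ ^ 2 := by
    intro x' s hs
    set d : EuclideanSpace ℝ (Fin p) := x' - xhat with hd
    -- per-t inequality
    have key : ∀ t : ℝ, 0 < t → t ≤ 1 →
        ⟪x - xhat, d⟫_ℝ ≤ lam * (s - r) + lam * L / 2 * ‖d‖ ^ 2
          + t * ((1 - lam * L) / 2) * ‖d‖ ^ 2 := by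
      intro t ht ht1
      set w : EuclideanSpace ℝ (Fin p) := xhat + t • d with hw
      have hwweq : t • x' + (1 - t) • xhat = w := by
        rw [hw, hd]; module
      have hwc' := hwc x' xhat t (1 - t) ht.le (by linarith) (by ring)
      rw [hwweq, hs, hfhat] at hwc'
      -- f w is real
      have hfw_ne_top : f w ≠ ⊤ := by
        intro htop
        rw [htop, EReal.top_add_coe] at hwc'
        have : ((t : EReal) * ((s : EReal) + ((L / 2 * ‖x'‖ ^ 2 : ℝ) : EReal)) +
            ((1 - t : ℝ) : EReal) * ((r : EReal) + ((L / 2 * ‖xhat‖ ^ 2 : ℝ) : EReal)))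
            = ((t * (s + L / 2 * ‖x'‖ ^ 2) + (1 - t) * (r + L / 2 * ‖xhat‖ ^ 2) : ℝ) : EReal) := by
          push_cast; ring
        rw [this] at hwc'
        exact (EReal.coe_lt_top _).not_ge hwc'
      set m : ℝ := (f w).toReal with hmdef
      have hm : f w = (m : EReal) := (EReal.coe_toReal hfw_ne_top (hbot w)).symm
      rw [hm] at hwc'
      have hi : m + L / 2 * ‖w‖ ^ 2 ≤ t * (s + L / 2 * ‖x'‖ ^ 2) + (1 - t) * (r + L / 2 * ‖xhat‖ ^ 2) := by
        have : ((t : EReal) * ((s : EReal) + ((L / 2 * ‖x'‖ ^ 2 : ℝ) : EReal)) +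
            ((1 - t : ℝ) : EReal) * ((r : EReal) + ((L / 2 * ‖xhat‖ ^ 2 : ℝ) : EReal)))
            = ((t * (s + L / 2 * ‖x'‖ ^ 2) + (1 - t) * (r + L / 2 * ‖xhat‖ ^ 2) : ℝ) : EReal) := by
          push_cast; ring
        rw [this] at hwc'
        exact_mod_cast hwc'
      have hii := hA w m hm
      -- expansions
      have e1 : ‖w‖ ^ 2 = ‖xhat‖ ^ 2 + 2 * t * ⟪xhat, d⟫_ℝ + t ^ 2 * ‖d‖ ^ 2 := by
        rw [hw]
        rw [@norm_add_sq_real, inner_smul_right, norm_smul]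
        simp [Real.norm_eq_abs, abs_of_pos ht, mul_pow]
        ring
      have e2 : ‖x - w‖ ^ 2 = ‖x - xhat‖ ^ 2 - 2 * t * ⟪x - xhat, d⟫_ℝ + t ^ 2 * ‖d‖ ^ 2 := by
        have : x - w = (x - xhat) - t • d := by rw [hw]; abel
        rw [this, @norm_sub_sq_real, inner_smul_right, norm_smul]
        simp [Real.norm_eq_abs, abs_of_pos ht, mul_pow]
        ring
      have e3 : ‖x'‖ ^ 2 = ‖xhat‖ ^ 2 + 2 * ⟪xhat, d⟫_ℝ + ‖d‖ ^ 2 := by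
        have : x' = xhat + d := by rw [hd]; abel
        rw [this, @norm_add_sq_real]
      rw [e1] at hi
      rw [e2] at hii
      rw [e3] at hi
      -- combine: multiplied by t then divide
      have hmul : t * ⟪x - xhat, d⟫_ℝ ≤ t * (lam * (s - r) + lam * L / 2 * ‖d‖ ^ 2
          + t * ((1 - lam * L) / 2) * ‖d‖ ^ 2) := by
        have hlam' : (0:ℝ) < 2 * lam := by linarith
        have hstep : (1 / (2 * lam)) * (2 * t * ⟪x - xhat, d⟫_ℝ - t ^ 2 * ‖d‖ ^ 2) ≤ m - r := by
          linarith
        have hcc : 2 * lam * (1 / (2 * lam)) = 1 := by field_simp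
        have h2'' : 2 * t * ⟪x - xhat, d⟫_ℝ - t ^ 2 * ‖d‖ ^ 2 ≤ 2 * lam * (m - r) := by
          have h := mul_le_mul_of_nonneg_left hstep hlam'.le
          rw [← mul_assoc, hcc, one_mul] at h
          linarith
        have h3 := mul_le_mul_of_nonneg_left hi hlam.le
        nlinarith [h3, h2'']
      exact le_of_mul_le_mul_left (by linarith [hmul]) ht
    -- take t → 0
    have hK : 0 ≤ ((1 - lam * L) / 2) * ‖d‖ ^ 2 := by
      have h0 : (0:ℝ) ≤ (1 - lam * L) / 2 := by linarith
      exact mul_nonneg h0 (sq_nonneg _)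
    refine le_of_forall_pos_le_add ?_
    intro ε hε
    set K := ((1 - lam * L) / 2) * ‖d‖ ^ 2 with hKdef
    have htpos : 0 < min 1 (ε / (K + 1)) := lt_min one_pos (div_pos hε (by linarith))
    have := key (min 1 (ε / (K + 1))) htpos (min_le_left _ _)
    have hKle : min 1 (ε / (K + 1)) * ((1 - lam * L) / 2) * ‖d‖ ^ 2 ≤ ε := by
      have h1 : min 1 (ε / (K + 1)) ≤ ε / (K + 1) := min_le_right _ _
      have h2 : min 1 (ε / (K + 1)) * K ≤ (ε / (K + 1)) * K :=
        mul_le_mul_of_nonneg_right h1 hK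
      have h3 : (ε / (K + 1)) * K ≤ ε := by
        rw [div_mul_eq_mul_div, div_le_iff₀ (by linarith : (0:ℝ) < K + 1)]
        nlinarith
      calc min 1 (ε / (K + 1)) * ((1 - lam * L) / 2) * ‖d‖ ^ 2
          = min 1 (ε / (K + 1)) * K := by rw [hKdef]; ring
        _ ≤ ε := le_trans h2 h3
    linarith
  -- setup constants
  obtain ⟨mu, hmu_def⟩ : ∃ mu : ℝ, mu = 1 - lam * L := ⟨_, rfl⟩
  have hmu : 0 < mu := by rw [hmu_def]; linarith
  obtain ⟨C, hC_def⟩ : ∃ C : ℝ, C = 1 / (2 * lam * mu) := ⟨_, rfl⟩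
  have hCpos : 0 < C := by rw [hC_def]; positivity
  have hlam2 : (0:ℝ) < 2 * lam := by linarith
  have hcc : 2 * lam * (1 / (2 * lam)) = 1 := by field_simp
  -- multiplied version of hA
  have hAmul : ∀ (x' : EuclideanSpace ℝ (Fin p)) (s : ℝ), f x' = (s : EReal) →
      ‖x - xhat‖ ^ 2 - ‖x - x'‖ ^ 2 ≤ 2 * lam * (s - r) := by
    intro x' s hs
    have h := hA x' s hs
    have h' : (1 / (2 * lam)) * (‖x - xhat‖ ^ 2 - ‖x - x'‖ ^ 2) ≤ s - r := by linarith
    have h'' := mul_le_mul_of_nonneg_left h' hlam2.le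
    rw [← mul_assoc, hcc, one_mul] at h''
    linarith
  -- pure scalar core inequality
  have calc_aux : ∀ A IP IPV IPDV ND NV S : ℝ,
      IP ≤ lam * (S - r) + (1 - mu) / 2 * ND ^ 2 → IPDV ≤ ND * NV →
      r + 1 / (2 * lam) * A + (1 / lam) * IPV - C * NV ^ 2 ≤
        S + 1 / (2 * lam) * (A - 2 * IP + ND ^ 2 + 2 * (IPV - IPDV) + NV ^ 2) := by
    intro A IP IPV IPDV ND NV S h1 h2
    have hpos : (0:ℝ) < 2 * lam * mu := by positivity
    refine le_of_mul_le_mul_left ?_ hpos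
    have eL : (2 * lam * mu) * (r + 1 / (2 * lam) * A + (1 / lam) * IPV - C * NV ^ 2) =
        2 * lam * mu * r + mu * A + 2 * mu * IPV - NV ^ 2 := by
      rw [hC_def]; field_simp
    have eR : (2 * lam * mu) * (S + 1 / (2 * lam) * (A - 2 * IP + ND ^ 2 + 2 * (IPV - IPDV) + NV ^ 2)) =
        2 * lam * mu * S + mu * (A - 2 * IP + ND ^ 2 + 2 * (IPV - IPDV) + NV ^ 2) := by
      field_simp
    rw [eL, eR]
    nlinarith [mul_le_mul_of_nonneg_left h1 (by positivity : (0:ℝ) ≤ 2 * mu),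
      mul_le_mul_of_nonneg_left h2 (by positivity : (0:ℝ) ≤ 2 * mu),
      sq_nonneg (mu * ND - NV), mul_nonneg hmu.le (sq_nonneg NV)]
  -- pointwise lower bound (lemma C)
  have hFlow : ∀ (z x' : EuclideanSpace ℝ (Fin p)) (s : ℝ), f x' = (s : EReal) →
      r + 1 / (2 * lam) * ‖x - xhat‖ ^ 2 + (1 / lam) * ⟪x - xhat, z - x⟫_ℝ - C * ‖z - x‖ ^ 2 ≤
        s + 1 / (2 * lam) * ‖z - x'‖ ^ 2 := by
    intro z x' s hs
    have hBd := hB x' s hs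
    have e1 : ‖z - x'‖ ^ 2 = ‖x - x'‖ ^ 2 + 2 * ⟪x - x', z - x⟫_ℝ + ‖z - x‖ ^ 2 := by
      have h : z - x' = (x - x') + (z - x) := by abel
      rw [h, @norm_add_sq_real]
    have e2 : ‖x - x'‖ ^ 2 = ‖x - xhat‖ ^ 2 - 2 * ⟪x - xhat, x' - xhat⟫_ℝ + ‖x' - xhat‖ ^ 2 := by
      have h : x - x' = (x - xhat) - (x' - xhat) := by abel
      rw [h, @norm_sub_sq_real]
    have e3 : ⟪x - x', z - x⟫_ℝ = ⟪x - xhat, z - x⟫_ℝ - ⟪x' - xhat, z - x⟫_ℝ := by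
      have h : x - x' = (x - xhat) - (x' - xhat) := by abel
      rw [h, inner_sub_left]
    have e : ‖z - x'‖ ^ 2 = ‖x - xhat‖ ^ 2 - 2 * ⟪x - xhat, x' - xhat⟫_ℝ + ‖x' - xhat‖ ^ 2
        + 2 * (⟪x - xhat, z - x⟫_ℝ - ⟪x' - xhat, z - x⟫_ℝ) + ‖z - x‖ ^ 2 := by
      rw [e1, e2, e3]
    rw [e]
    have hBd' : ⟪x - xhat, x' - xhat⟫_ℝ ≤ lam * (s - r) + (1 - mu) / 2 * ‖x' - xhat‖ ^ 2 := by
      rw [hmu_def]; ring_nf; ring_nf at hBd; linarith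
    exact calc_aux _ _ _ _ _ _ _ hBd' (real_inner_le_norm _ _)
  -- bounds on the EReal infimum
  have hub : ∀ z, (⨅ x', f x' + ((1 / (2 * lam) * ‖z - x'‖ ^ 2 : ℝ) : EReal)) ≤
      ((r + 1 / (2 * lam) * ‖z - xhat‖ ^ 2 : ℝ) : EReal) := by
    intro z
    have h := iInf_le (fun x' => f x' + ((1 / (2 * lam) * ‖z - x'‖ ^ 2 : ℝ) : EReal)) xhat
    rw [hfhat, ← EReal.coe_add] at h
    exact h
  have hlb : ∀ z, ((r + 1 / (2 * lam) * ‖x - xhat‖ ^ 2 + (1 / lam) * ⟪x - xhat, z - x⟫_ℝ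
        - C * ‖z - x‖ ^ 2 : ℝ) : EReal) ≤
      ⨅ x', f x' + ((1 / (2 * lam) * ‖z - x'‖ ^ 2 : ℝ) : EReal) := by
    intro z
    refine le_iInf fun x' => ?_
    rcases eq_or_ne (f x') ⊤ with h | h
    · rw [h, EReal.top_add_coe]; exact le_top
    · have hs : f x' = (((f x').toReal : ℝ) : EReal) := (EReal.coe_toReal h (hbot x')).symm
      rw [hs, ← EReal.coe_add]
      exact_mod_cast hFlow z x' _ hs
  have hne_top : ∀ z, (⨅ x', f x' + ((1 / (2 * lam) * ‖z - x'‖ ^ 2 : ℝ) : EReal)) ≠ ⊤ :=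
    fun z h => absurd (h ▸ hub z) (EReal.coe_lt_top _).not_ge
  have hne_bot : ∀ z, (⨅ x', f x' + ((1 / (2 * lam) * ‖z - x'‖ ^ 2 : ℝ) : EReal)) ≠ ⊥ :=
    fun z h => absurd (h ▸ hlb z) (EReal.bot_lt_coe _).not_ge
  have hcoe : ∀ z, (((⨅ x', f x' + ((1 / (2 * lam) * ‖z - x'‖ ^ 2 : ℝ) : EReal)).toReal : ℝ) : EReal)
      = ⨅ x', f x' + ((1 / (2 * lam) * ‖z - x'‖ ^ 2 : ℝ) : EReal) :=
    fun z => EReal.coe_toReal (hne_top z) (hne_bot z)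
  -- real bounds on the envelope
  have hFle : ∀ z, (⨅ x', f x' + ((1 / (2 * lam) * ‖z - x'‖ ^ 2 : ℝ) : EReal)).toReal ≤
      r + 1 / (2 * lam) * ‖z - xhat‖ ^ 2 := by
    intro z
    have h := hub z
    rw [← hcoe z] at h
    exact_mod_cast h
  have hFge : ∀ z, r + 1 / (2 * lam) * ‖x - xhat‖ ^ 2 + (1 / lam) * ⟪x - xhat, z - x⟫_ℝ
      - C * ‖z - x‖ ^ 2 ≤ (⨅ x', f x' + ((1 / (2 * lam) * ‖z - x'‖ ^ 2 : ℝ) : EReal)).toReal := by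
    intro z
    have h := hlb z
    rw [← hcoe z] at h
    exact_mod_cast h
  have hFxval : (⨅ x', f x' + ((1 / (2 * lam) * ‖x - x'‖ ^ 2 : ℝ) : EReal)).toReal =
      r + 1 / (2 * lam) * ‖x - xhat‖ ^ 2 := by
    refine le_antisymm (hFle x) ?_
    have h := hFge x
    simp only [sub_self, inner_zero_right, norm_zero] at h
    linarith [h]
  -- the Moreau envelope
  refine ⟨fun z => (⨅ x', f x' + ((1 / (2 * lam) * ‖z - x'‖ ^ 2 : ℝ) : EReal)).toReal,
    ?_, ?_, ?_, ?_⟩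
  · intro z
    exact hcoe z
  · -- gradient
    obtain ⟨K, hK_def⟩ : ∃ K : ℝ, K = max (1 / (2 * lam)) C := ⟨_, rfl⟩
    have hK : 0 < K := by
      rw [hK_def]; exact lt_max_of_lt_left (by positivity)
    rw [hasGradientAt_iff_isLittleO, Asymptotics.isLittleO_iff]
    intro c hc
    rw [Metric.eventually_nhds_iff]
    refine ⟨c / (K + 1), by positivity, fun z hz => ?_⟩
    have eu : ⟪(1 / lam) • (x - xhat), z - x⟫_ℝ = (1 / lam) * ⟪x - xhat, z - x⟫_ℝ :=
      real_inner_smul_left _ _ _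
    have eexp : ‖z - xhat‖ ^ 2 = ‖x - xhat‖ ^ 2 + 2 * ⟪x - xhat, z - x⟫_ℝ + ‖z - x‖ ^ 2 := by
      have h : z - xhat = (x - xhat) + (z - x) := by abel
      rw [h, @norm_add_sq_real]
    have hq : (1 : ℝ) / lam = 2 * (1 / (2 * lam)) := by field_simp
    have hupz : (⨅ x', f x' + ((1 / (2 * lam) * ‖z - x'‖ ^ 2 : ℝ) : EReal)).toReal
        - (⨅ x', f x' + ((1 / (2 * lam) * ‖x - x'‖ ^ 2 : ℝ) : EReal)).toReal
        - ⟪(1 / lam) • (x - xhat), z - x⟫_ℝ ≤ K * ‖z - x‖ ^ 2 := by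
      have h1 := hFle z
      rw [eexp] at h1
      have h2 : 1 / (2 * lam) * ‖z - x‖ ^ 2 ≤ K * ‖z - x‖ ^ 2 :=
        mul_le_mul_of_nonneg_right (hK_def ▸ le_max_left _ _) (sq_nonneg _)
      rw [hFxval, eu, hq]
      linarith
    have hloz : -(K * ‖z - x‖ ^ 2) ≤ (⨅ x', f x' + ((1 / (2 * lam) * ‖z - x'‖ ^ 2 : ℝ) : EReal)).toReal
        - (⨅ x', f x' + ((1 / (2 * lam) * ‖x - x'‖ ^ 2 : ℝ) : EReal)).toReal
        - ⟪(1 / lam) • (x - xhat), z - x⟫_ℝ := by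
      have h1 := hFge z
      have h2 : C * ‖z - x‖ ^ 2 ≤ K * ‖z - x‖ ^ 2 :=
        mul_le_mul_of_nonneg_right (hK_def ▸ le_max_right _ _) (sq_nonneg _)
      rw [hFxval, eu]
      linarith
    have habs : ‖(⨅ x', f x' + ((1 / (2 * lam) * ‖z - x'‖ ^ 2 : ℝ) : EReal)).toReal
        - (⨅ x', f x' + ((1 / (2 * lam) * ‖x - x'‖ ^ 2 : ℝ) : EReal)).toReal
        - ⟪(1 / lam) • (x - xhat), z - x⟫_ℝ‖ ≤ K * ‖z - x‖ ^ 2 := by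
      rw [Real.norm_eq_abs]
      exact abs_le.mpr ⟨hloz, hupz⟩
    have hnv : ‖z - x‖ < c / (K + 1) := by rwa [← dist_eq_norm]
    have h5 : (K + 1) * ‖z - x‖ < c := by
      rw [mul_comm]
      exact (lt_div_iff₀ (by positivity)).mp hnv
    nlinarith [habs, h5, norm_nonneg (z - x), hK]
  · -- subgradient
    intro eps heps
    rw [Metric.eventually_nhds_iff]
    refine ⟨2 * lam * eps, by positivity, fun x' hx' => ?_⟩
    rcases eq_or_ne (f x') ⊤ with h | h
    · rw [h]; exact le_top
    · have hs : f x' = (((f x').toReal : ℝ) : EReal) := (EReal.coe_toReal h (hbot x')).symm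
      rw [hfhat, hs, ← EReal.coe_add]
      rw [EReal.coe_le_coe_iff]
      have key : ∀ ip nd st : ℝ, 0 ≤ nd → nd < 2 * lam * eps → 2 * ip - nd ^ 2 ≤ 2 * lam * (st - r) →
          r + ((1 / lam) * ip - eps * nd) ≤ st := by
        intro ip nd st h0 h1 h2
        refine le_of_mul_le_mul_left ?_ hlam2
        have eL : (2 * lam) * (r + ((1 / lam) * ip - eps * nd)) =
            2 * lam * r + 2 * ip - 2 * lam * eps * nd := by field_simp; ring
        rw [eL]
        nlinarith [mul_le_mul_of_nonneg_right h1.le h0]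
      have eu : ⟪(1 / lam) • (x - xhat), x' - xhat⟫_ℝ = (1 / lam) * ⟪x - xhat, x' - xhat⟫_ℝ :=
        real_inner_smul_left _ _ _
      rw [eu]
      have hAm := hAmul x' _ hs
      have e2 : ‖x - x'‖ ^ 2 = ‖x - xhat‖ ^ 2 - 2 * ⟪x - xhat, x' - xhat⟫_ℝ + ‖x' - xhat‖ ^ 2 := by
        have hh : x - x' = (x - xhat) - (x' - xhat) := by abel
        rw [hh, @norm_sub_sq_real]
      rw [e2] at hAm
      have hnd : ‖x' - xhat‖ < 2 * lam * eps := by rwa [← dist_eq_norm]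
      exact key _ _ _ (norm_nonneg _) hnd (by linarith)
  · rw [norm_smul, Real.norm_eq_abs, abs_of_pos (by positivity : (0:ℝ) < 1 / lam), norm_sub_rev]
end

section
/- Let 𝒳 ⊆ ℝ^p be a nonempty closed convex set and let g : 𝒳 × ℝ^q → ℝ be L-smooth with g(·, y) σ-strongly convex for every y (0 < σ ≤ L). For each y let x*(y) = argmin_{x ∈ 𝒳} g(x, y) be the unique minimizer. Then the map y ↦ x*(y) is (L/σ)-Lipschitz: ‖x*(y₁) − x*(y₂)‖ ≤ (L/σ)‖y₁ − y₂‖ for all y₁, y₂. -/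
open InnerProductSpace Set

local notation "⟪" x ", " y "⟫" => @inner ℝ _ _ x y

section Aux

variable {F : Type*} [NormedAddCommGroup F] [InnerProductSpace ℝ F] [CompleteSpace F]

lemma aux_inner_gradient_eq (f : F → ℝ) (x v : F) :
    ⟪gradient f x, v⟫ = fderiv ℝ f x v := by
  rw [← InnerProductSpace.toDual_apply_apply, gradient, LinearIsometryEquiv.apply_symm_apply]

/-- derivative of `f` along a line. -/
lemma aux_line_hasDerivAt (f : F → ℝ) (hf : Differentiable ℝ f) (a v : F) (t : ℝ) :
    HasDerivAt (fun t : ℝ => f (a + t • v)) ⟪gradient f (a + t • v), v⟫ t := by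
  have hc : HasDerivAt (fun t : ℝ => a + t • v) v t := by
    simpa using ((hasDerivAt_id t).smul_const v).const_add a
  have := (hf (a + t • v)).hasFDerivAt.comp_hasDerivAt t hc
  rwa [aux_inner_gradient_eq]

/-- derivative of the squared norm along a line. -/
lemma aux_line_normsq_hasDerivAt (a v : F) (t : ℝ) :
    HasDerivAt (fun t : ℝ => ‖a + t • v‖ ^ 2) (2 * ⟪a + t • v, v⟫) t := by
  have hc : HasDerivAt (fun t : ℝ => a + t • v) v t := by
    simpa using ((hasDerivAt_id t).smul_const v).const_add a
  have h := hc.inner ℝ hc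
  have heq : (fun t : ℝ => ⟪a + t • v, a + t • v⟫) = fun t : ℝ => ‖a + t • v‖ ^ 2 := by
    funext s; rw [real_inner_self_eq_norm_sq]
  rw [heq] at h
  refine h.congr_deriv ?_
  rw [real_inner_comm]; ring

/-- Strong monotonicity of the gradient, from convexity of `f - σ/2‖·‖²` on `X`. -/
lemma aux_strong_mono {X : Set F} (hXconv : Convex ℝ X) (f : F → ℝ) (σ : ℝ)
    (hf : Differentiable ℝ f)
    (hsc : ConvexOn ℝ X fun x => f x - σ / 2 * ‖x‖ ^ 2)
    {a b : F} (ha : a ∈ X) (hb : b ∈ X) :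
    σ * ⟪b - a, b - a⟫ ≤ ⟪gradient f b - gradient f a, b - a⟫ := by
  set v := b - a with hv
  set c : ℝ → F := fun t => a + t • v with hc
  have hderiv : ∀ t : ℝ, HasDerivAt (fun t : ℝ => f (c t) - σ / 2 * ‖c t‖ ^ 2)
      (⟪gradient f (c t), v⟫ - σ / 2 * (2 * ⟪c t, v⟫)) t := fun t =>
    (aux_line_hasDerivAt f hf a v t).sub ((aux_line_normsq_hasDerivAt a v t).const_mul (σ / 2))
  -- convexity of the restriction to the segment
  have hmem : ∀ t ∈ Icc (0 : ℝ) 1, c t ∈ X := by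
    intro t ht
    have : c t = (1 - t) • a + t • b := by
      simp only [hc, hv, smul_sub]; module
    rw [this]
    exact hXconv ha hb (by linarith [ht.2]) ht.1 (by ring)
  have hline : ∀ t : ℝ, (AffineMap.lineMap a b : ℝ →ᵃ[ℝ] F) t = c t := by
    intro t
    simp only [AffineMap.lineMap_apply_module, hc, hv, smul_sub]
    module
  have hψconv : ConvexOn ℝ (Icc (0 : ℝ) 1) (fun t => f (c t) - σ / 2 * ‖c t‖ ^ 2) := by
    have hA : ConvexOn ℝ ((AffineMap.lineMap a b : ℝ →ᵃ[ℝ] F) ⁻¹' X)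
        ((fun x => f x - σ / 2 * ‖x‖ ^ 2) ∘ (AffineMap.lineMap a b : ℝ →ᵃ[ℝ] F)) :=
      hsc.comp_affineMap _
    have hsub : Icc (0 : ℝ) 1 ⊆ (AffineMap.lineMap a b : ℝ →ᵃ[ℝ] F) ⁻¹' X := by
      intro t ht
      simp only [mem_preimage, hline t]
      exact hmem t ht
    have := hA.subset hsub (convex_Icc 0 1)
    refine this.congr ?_
    intro t _
    simp only [Function.comp_apply, hline t]
  -- derivative at 0 ≤ slope ≤ derivative at 1
  have h01 : (0 : ℝ) ∈ Icc (0 : ℝ) 1 := by constructor <;> norm_num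
  have h11 : (1 : ℝ) ∈ Icc (0 : ℝ) 1 := by constructor <;> norm_num
  have hle0 := hψconv.le_slope_of_hasDerivAt h01 h11 one_pos (hderiv 0)
  have hle1 := hψconv.slope_le_of_hasDerivAt h01 h11 one_pos (hderiv 1)
  have hkey := hle0.trans hle1
  have hc0 : c 0 = a := by simp [hc]
  have hc1 : c 1 = b := by simp [hc, hv]
  rw [hc0, hc1] at hkey
  have := hkey
  rw [inner_sub_left, hv, inner_sub_left]
  nlinarith [this]

/-- First-order optimality condition. -/
lemma aux_opt {X : Set F} (hXconv : Convex ℝ X) (f : F → ℝ) (hf : Differentiable ℝ f)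
    {x₀ x : F} (hx₀ : x₀ ∈ X) (hx : x ∈ X) (hmin : ∀ z ∈ X, f x₀ ≤ f z) :
    0 ≤ ⟪gradient f x₀, x - x₀⟫ := by
  have hminon : IsLocalMinOn f X x₀ := (isMinOn_iff.2 hmin).localize
  have htc : x - x₀ ∈ posTangentConeAt X x₀ :=
    sub_mem_posTangentConeAt_of_segment_subset (hXconv.segment_subset hx₀ hx)
  have := hminon.hasFDerivWithinAt_nonneg (hf x₀).hasFDerivAt.hasFDerivWithinAt htc
  rwa [aux_inner_gradient_eq]

end Aux

/-- Lipschitzness of the argmin map, Eq. (18) in the paper: if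
`g : 𝒳 × ℝ^q → ℝ` is `L`-smooth and `g(·,y)` is `σ`-strongly convex (`0 < σ ≤ L`) on the
nonempty closed convex set `𝒳`, then the minimizers `x*(y)` satisfy
`‖x*(y₁) − x*(y₂)‖ ≤ (L/σ)‖y₁ − y₂‖`. -/
theorem stmt_8 {p q : ℕ} (X : Set (EuclideanSpace ℝ (Fin p))) (hXne : X.Nonempty)
    (hXcl : IsClosed X) (hXconv : Convex ℝ X)
    (g : EuclideanSpace ℝ (Fin p) × EuclideanSpace ℝ (Fin q) → ℝ) (L σ : ℝ)
    (hσ : 0 < σ) (hσL : σ ≤ L)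
    (hdx : ∀ y, Differentiable ℝ fun x => g (x, y))
    (hdy : ∀ x, Differentiable ℝ fun y => g (x, y))
    (hsmooth : ∀ x y x' y',
      ‖gradient (fun z => g (z, y)) x - gradient (fun z => g (z, y')) x'‖ ≤
          L * (‖x - x'‖ + ‖y - y'‖) ∧
      ‖gradient (fun z => g (x, z)) y - gradient (fun z => g (x', z)) y'‖ ≤
          L * (‖x - x'‖ + ‖y - y'‖))
    (hsc : ∀ y, ConvexOn ℝ X fun x => g (x, y) - σ / 2 * ‖x‖ ^ 2)
    (y₁ y₂ : EuclideanSpace ℝ (Fin q)) (x₁ x₂ : EuclideanSpace ℝ (Fin p))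
    (hx₁ : x₁ ∈ X) (hx₂ : x₂ ∈ X)
    (hmin₁ : ∀ x ∈ X, g (x₁, y₁) ≤ g (x, y₁))
    (hmin₂ : ∀ x ∈ X, g (x₂, y₂) ≤ g (x, y₂)) :
    ‖x₁ - x₂‖ ≤ L / σ * ‖y₁ - y₂‖ := by
  set G₁ := gradient (fun z => g (z, y₁)) with hG₁
  set G₂ := gradient (fun z => g (z, y₂)) with hG₂
  set u := x₁ - x₂ with hu
  -- strong monotonicity at y₁
  have hmono : σ * ⟪u, u⟫ ≤ ⟪G₁ x₁ - G₁ x₂, u⟫ :=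
    aux_strong_mono hXconv (fun z => g (z, y₁)) σ (hdx y₁) (hsc y₁) hx₂ hx₁
  -- optimality conditions
  have hopt₁ : 0 ≤ ⟪G₁ x₁, x₂ - x₁⟫ :=
    aux_opt hXconv (fun z => g (z, y₁)) (hdx y₁) hx₁ hx₂ hmin₁
  have hopt₂ : 0 ≤ ⟪G₂ x₂, u⟫ :=
    aux_opt hXconv (fun z => g (z, y₂)) (hdx y₂) hx₂ hx₁ hmin₂
  have hopt₁' : ⟪G₁ x₁, u⟫ ≤ 0 := by
    have : x₂ - x₁ = -u := by rw [hu]; abel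
    rw [this, inner_neg_right] at hopt₁
    linarith
  -- smoothness bound
  have hsm : ‖G₂ x₂ - G₁ x₂‖ ≤ L * ‖y₂ - y₁‖ := by
    have := (hsmooth x₂ y₂ x₂ y₁).1
    simpa using this
  have hcs : ⟪G₂ x₂ - G₁ x₂, u⟫ ≤ ‖G₂ x₂ - G₁ x₂‖ * ‖u‖ := real_inner_le_norm _ _
  have hchain : σ * ‖u‖ ^ 2 ≤ L * ‖y₂ - y₁‖ * ‖u‖ := by
    have h1 : σ * ⟪u, u⟫ ≤ ⟪G₂ x₂ - G₁ x₂, u⟫ := by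
      have e1 : ⟪G₁ x₁ - G₁ x₂, u⟫ = ⟪G₁ x₁, u⟫ - ⟪G₁ x₂, u⟫ := inner_sub_left _ _ _
      have e2 : ⟪G₂ x₂ - G₁ x₂, u⟫ = ⟪G₂ x₂, u⟫ - ⟪G₁ x₂, u⟫ := inner_sub_left _ _ _
      linarith [hmono]
    have e3 : ⟪u, u⟫ = ‖u‖ ^ 2 := real_inner_self_eq_norm_sq u
    calc σ * ‖u‖ ^ 2 = σ * ⟪u, u⟫ := by rw [e3]
      _ ≤ ⟪G₂ x₂ - G₁ x₂, u⟫ := h1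
      _ ≤ ‖G₂ x₂ - G₁ x₂‖ * ‖u‖ := hcs
      _ ≤ L * ‖y₂ - y₁‖ * ‖u‖ := by
          apply mul_le_mul_of_nonneg_right hsm (norm_nonneg u)
  rw [norm_sub_rev y₂ y₁] at hchain
  have hL : 0 < L := lt_of_lt_of_le hσ hσL
  rcases eq_or_lt_of_le (norm_nonneg u) with h0 | h0
  · rw [← h0]
    exact mul_nonneg (div_nonneg hL.le hσ.le) (norm_nonneg _)
  · rw [div_mul_eq_mul_div, le_div_iff₀ hσ]
    nlinarith [hchain, h0]
end

section
/- Let 𝒴 ⊆ ℝ^q be a nonempty compact convex set with diameter D_𝒴 = max_{y,y' ∈ 𝒴} ‖y − y'‖, and let g : ℝ^p × 𝒴 → ℝ be L-smooth, with g(·, y) σ-strongly convex for every y (0 < σ ≤ L) and g(x, ·) concave for every x. Set β = 2L²/σ, z₀ = y₀ ∈ 𝒴, and let nonnegative tolerances ε_step^{(k)} be given. Suppose the sequences satisfy, for each k ≥ 0: τ_k = 2/(k+2), η_k = (k+1)/(2β), w_k = (1 − τ_k) y_k + τ_k z_k, the pair (x_{k+1}, y_{k+1}) satisfies g(x_{k+1},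 y_{k+1}) ≤ min_{x ∈ ℝ^p} g(x, y_{k+1}) + ε_step^{(k+1)} together with y_{k+1} = P_𝒴(w_k + (1/β) ∇_y g(x_{k+1}, w_k)), and z_{k+1} = P_𝒴(z_k + η_k ∇_y g(x_{k+1}, w_k)). Define x̄_K = (2/(K(K+1))) Σ_{i=1}^{K} i · x_i. Then for every K ≥ 1, max_{ỹ ∈ 𝒴} g(x̄_K, ỹ) − min_{x̃ ∈ ℝ^p} g(x̃, y_K) ≤ (4 (L²/σ) D_𝒴² + Σ_{k=1}^{K} k(k+1) ε_step^{(k)}) / (K(K+1)). -/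
set_option maxHeartbeats 1000000
set_option linter.unusedSectionVars false

open Set InnerProductSpace

section DiagAux

variable {E : Type*} [NormedAddCommGroup E] [InnerProductSpace ℝ E]

lemma diag_line_hasDerivAt [CompleteSpace E] (f : E → ℝ) (hf : Differentiable ℝ f)
    (w v : E) (t : ℝ) :
    HasDerivAt (fun s : ℝ => f (w + s • v)) ⟪gradient f (w + t • v), v⟫_ℝ t := by
  have hp : HasDerivAt (fun s : ℝ => w + s • v) v t := by
    simpa using ((hasDerivAt_id t).smul_const v).const_add w
  have hg := (hf (w + t • v)).hasGradientAt.hasFDerivAt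
  have := hg.comp_hasDerivAt t hp
  exact this.congr_deriv (by simp [InnerProductSpace.toDual_apply_apply])

/-- First-order upper bound for a differentiable concave function. -/
lemma diag_concave_ub [CompleteSpace E] (f : E → ℝ) (hf : Differentiable ℝ f) {s : Set E}
    (hcf : ConcaveOn ℝ s f) {w u : E} (hw : w ∈ s) (hu : u ∈ s) :
    f u ≤ f w + ⟪gradient f w, u - w⟫_ℝ := by
  set φ : ℝ → ℝ := fun t => f (w + t • (u - w)) with hφ
  have h0 : φ 0 = f w := by simp [hφ]
  have hd : HasDerivAt φ ⟪gradient f w, u - w⟫_ℝ 0 := by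
    have := diag_line_hasDerivAt f hf w (u - w) 0
    simpa using this
  have hslope : ∀ t ∈ Ioc (0:ℝ) 1, f u - f w ≤ slope φ 0 t := by
    intro t ht
    have hcomb : w + t • (u - w) = (1 - t) • w + t • u := by module
    have := hcf.2 hw hu (by linarith [ht.2] : (0:ℝ) ≤ 1 - t) (le_of_lt ht.1)
      (by ring : (1 - t) + t = 1)
    have hφt : (1 - t) * f w + t * f u ≤ φ t := by
      simpa [hφ, hcomb, smul_eq_mul] using this
    rw [slope_def_field]
    have : f u - f w ≤ (φ t - φ 0) / t := by
      rw [le_div_iff₀ ht.1, h0]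
      nlinarith
    simpa [div_eq_inv_mul, h0] using this
  have htend : Filter.Tendsto (slope φ 0) (nhdsWithin 0 (Ioi 0))
      (nhds ⟪gradient f w, u - w⟫_ℝ) := by
    have := hasDerivAt_iff_tendsto_slope.1 hd
    exact this.mono_left (nhdsWithin_mono _ (fun x hx => ne_of_gt hx))
  have : f u - f w ≤ ⟪gradient f w, u - w⟫_ℝ := by
    refine ge_of_tendsto htend ?_
    filter_upwards [Ioc_mem_nhdsGT_of_mem (by norm_num : (0:ℝ) ∈ Ico (0:ℝ) 1)] with t ht
    exact hslope t ht
  linarith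

/-- First-order lower bound for a differentiable convex function. -/
lemma diag_convex_lb [CompleteSpace E] (f : E → ℝ) (hf : Differentiable ℝ f) {s : Set E}
    (hcf : ConvexOn ℝ s f) {w u : E} (hw : w ∈ s) (hu : u ∈ s) :
    f w + ⟪gradient f w, u - w⟫_ℝ ≤ f u := by
  have := diag_concave_ub (fun v => -(f v)) hf.neg hcf.neg hw hu
  have hgrad : gradient (fun v => -(f v)) w = -(gradient f w) := by
    have h1 : HasGradientAt f (gradient f w) w := (hf w).hasGradientAt
    have h2 : HasGradientAt (fun v => -(f v)) (-(gradient f w)) w := by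
      rw [hasGradientAt_iff_hasFDerivAt]
      have := h1.hasFDerivAt.neg
      exact this.congr_fderiv (by ext v; simp [InnerProductSpace.toDual_apply_apply, inner_neg_left])
    exact h2.gradient
  simp only [hgrad, inner_neg_left] at this
  linarith

/-- A differentiable strongly convex function is bounded below. -/
lemma diag_sc_bddBelow [CompleteSpace E] (f : E → ℝ) (hf : Differentiable ℝ f)
    (σ : ℝ) (hσ : 0 < σ)
    (hsc : ConvexOn ℝ univ fun v => f v - σ / 2 * ‖v‖ ^ 2) :
    BddBelow (Set.range f) := by
  set φ : E → ℝ := fun v => f v - σ / 2 * ‖v‖ ^ 2 with hφ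
  have hφdiff : Differentiable ℝ φ := by
    have hn : Differentiable ℝ fun v : E => σ / 2 * ‖v‖ ^ 2 := by
      have : Differentiable ℝ fun v : E => ⟪v, v⟫_ℝ :=
        differentiable_id.inner ℝ differentiable_id
      have h2 : Differentiable ℝ fun v : E => ‖v‖ ^ 2 := by
        convert this using 2 with v
        rw [real_inner_self_eq_norm_sq]
      exact h2.const_mul _
    exact hf.sub hn
  set G := gradient φ 0 with hG
  refine ⟨φ 0 - ‖G‖ ^ 2 / (2 * σ), ?_⟩
  rintro _ ⟨v, rfl⟩
  have hlb := diag_convex_lb φ hφdiff hsc (mem_univ (0:E)) (mem_univ v)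
  simp only [sub_zero, ← hG] at hlb
  have hinner : -(‖G‖ * ‖v‖) ≤ ⟪G, v⟫_ℝ := by
    have := real_inner_le_norm G (-v)
    rw [inner_neg_right, norm_neg] at this
    linarith
  have hfv : f v = φ v + σ / 2 * ‖v‖ ^ 2 := by simp [hφ]
  have hq' : ‖G‖ * ‖v‖ - σ / 2 * ‖v‖ ^ 2 ≤ ‖G‖ ^ 2 / (2 * σ) := by
    rw [le_div_iff₀ (by linarith : (0:ℝ) < 2 * σ)]
    nlinarith [sq_nonneg (σ * ‖v‖ - ‖G‖)]
  have h1 : φ 0 + ⟪G, v⟫_ℝ + σ / 2 * ‖v‖ ^ 2 ≤ f v := by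
    rw [hfv]; exact add_le_add_left hlb _
  linarith [h1, hinner, hq']

/-- Descent lemma: quadratic lower bound from a Lipschitz gradient. -/
lemma diag_descent [CompleteSpace E] (f : E → ℝ) (hf : Differentiable ℝ f) (L : ℝ)
    (hLip : ∀ a b : E, ‖gradient f a - gradient f b‖ ≤ L * ‖a - b‖) (w u : E) :
    f w + ⟪gradient f w, u - w⟫_ℝ - L / 2 * ‖u - w‖ ^ 2 ≤ f u := by
  set v := u - w with hv
  set ψ : ℝ → ℝ := fun t =>
    f (w + t • v) - t * ⟪gradient f w, v⟫_ℝ + L * t ^ 2 / 2 * ‖v‖ ^ 2 with hψ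
  have hderiv : ∀ t : ℝ, HasDerivAt ψ
      (⟪gradient f (w + t • v), v⟫_ℝ - ⟪gradient f w, v⟫_ℝ + L * t * ‖v‖ ^ 2) t := by
    intro t
    have h1 := diag_line_hasDerivAt f hf w v t
    have h2 : HasDerivAt (fun t : ℝ => t * ⟪gradient f w, v⟫_ℝ) ⟪gradient f w, v⟫_ℝ t := by
      simpa using (hasDerivAt_id t).mul_const ⟪gradient f w, v⟫_ℝ
    have h3 : HasDerivAt (fun t : ℝ => L * t ^ 2 / 2 * ‖v‖ ^ 2) (L * t * ‖v‖ ^ 2) t := by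
      have : HasDerivAt (fun t : ℝ => t ^ 2) (2 * t) t := by
        simpa using (hasDerivAt_pow 2 t)
      have := ((this.const_mul L).div_const 2).mul_const (‖v‖ ^ 2)
      exact this.congr_deriv (by ring)
    exact (h1.sub h2).add h3
  have hmono : MonotoneOn ψ (Icc (0:ℝ) 1) := by
    apply monotoneOn_of_hasDerivWithinAt_nonneg (convex_Icc 0 1)
      (Continuous.continuousOn (by
        have : ∀ t, DifferentiableAt ℝ ψ t := fun t => (hderiv t).differentiableAt
        exact (Differentiable.continuous this)))
      (fun t ht => (hderiv t).hasDerivWithinAt)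
    intro t ht
    rw [interior_Icc] at ht
    have hlip := hLip (w + t • v) w
    have : ‖(w + t • v) - w‖ = t * ‖v‖ := by
      rw [add_sub_cancel_left, norm_smul, Real.norm_eq_abs, abs_of_nonneg (le_of_lt ht.1)]
    rw [this] at hlip
    have hinner : ⟪gradient f w - gradient f (w + t • v), v⟫_ℝ ≤ L * (t * ‖v‖) * ‖v‖ := by
      calc ⟪gradient f w - gradient f (w + t • v), v⟫_ℝ
          ≤ ‖gradient f w - gradient f (w + t • v)‖ * ‖v‖ := real_inner_le_norm _ _
        _ ≤ L * (t * ‖v‖) * ‖v‖ := by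
            apply mul_le_mul_of_nonneg_right _ (norm_nonneg _)
            rw [← norm_neg]; simpa [neg_sub] using hlip
    rw [inner_sub_left] at hinner
    nlinarith [hinner]
  have h01 := hmono (by norm_num : (0:ℝ) ∈ Icc (0:ℝ) 1) (by norm_num : (1:ℝ) ∈ Icc (0:ℝ) 1)
    (by norm_num)
  have hψ0 : ψ 0 = f w := by simp [hψ]
  have hψ1 : ψ 1 = f u - ⟪gradient f w, v⟫_ℝ + L / 2 * ‖v‖ ^ 2 := by
    simp [hψ, hv]
  rw [hψ0, hψ1] at h01
  linarith

/-- Variational inequality for metric projection onto a convex set. -/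
lemma diag_proj_vi {Y : Set E} (hY : Convex ℝ Y) {c pt : E} (hpt : pt ∈ Y)
    (hmin : ∀ v ∈ Y, ‖c - pt‖ ≤ ‖c - v‖) : ∀ v ∈ Y, ⟪c - pt, v - pt⟫_ℝ ≤ 0 := by
  have hne : Nonempty Y := ⟨⟨pt, hpt⟩⟩
  have heq : ‖c - pt‖ = ⨅ w : Y, ‖c - w‖ := by
    apply le_antisymm
    · exact le_ciInf fun w => hmin w w.2
    · exact ciInf_le ⟨0, fun _ ⟨_, h⟩ => h ▸ norm_nonneg _⟩ (⟨pt, hpt⟩ : Y)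
  exact (norm_eq_iInf_iff_real_inner_le_zero hY hpt).1 heq

/-- Quadratic-model comparison for the projected gradient step. -/
lemma diag_gradstep {β : ℝ} (hβ : 0 < β) (W G a v : E)
    (hmin : ‖W + β⁻¹ • G - a‖ ≤ ‖W + β⁻¹ • G - v‖) :
    ⟪G, v - W⟫_ℝ - β/2*‖v - W‖^2 ≤ ⟪G, a - W⟫_ℝ - β/2*‖a - W‖^2 := by
  have hsq := pow_le_pow_left₀ (norm_nonneg _) hmin 2
  have hexp : ∀ u : E, ‖W + β⁻¹ • G - u‖^2
      = β⁻¹^2*‖G‖^2 - 2*β⁻¹*⟪G, u - W⟫_ℝ + ‖u - W‖^2 := by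
    intro u
    have h : W + β⁻¹ • G - u = β⁻¹ • G - (u - W) := by module
    rw [h, norm_sub_sq_real, real_inner_smul_left, norm_smul]
    rw [Real.norm_eq_abs, abs_of_nonneg (inv_nonneg.2 hβ.le)]
    ring
  rw [hexp a, hexp v] at hsq
  have h3 : ‖a - W‖^2 - 2*β⁻¹*⟪G, a - W⟫_ℝ ≤ ‖v - W‖^2 - 2*β⁻¹*⟪G, v - W⟫_ℝ := by
    linarith
  have h4 := mul_le_mul_of_nonneg_left h3 (by positivity : (0:ℝ) ≤ β/2)
  have e : ∀ s r : ℝ, β/2*(s - 2*β⁻¹*r) = β/2*s - r := by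
    intro s r; field_simp
  rw [e, e] at h4
  linarith

/-- One iteration of the DIAG estimate-sequence recursion (scaled by `4β`). -/
lemma diag_onestep (m β : ℝ) (hm : 0 ≤ m) (hβ : 0 < β)
    (u W yk zk zk1 a G : E) (P gu Hk Ha Ek : ℝ)
    (hW : W = (1 - 2/(m+2)) • yk + (2/(m+2)) • zk)
    (h_c1 : gu ≤ P + ⟪G, u - W⟫_ℝ)
    (h_c2 : Hk ≤ P + ⟪G, yk - W⟫_ℝ)
    (h_zvi : ⟪zk + ((m+1)/(2*β)) • G - zk1, u - zk1⟫_ℝ ≤ 0)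
    (h_y' : ⟪G, ((1 - 2/(m+2)) • yk + (2/(m+2)) • zk1) - W⟫_ℝ
        - β/2*‖((1 - 2/(m+2)) • yk + (2/(m+2)) • zk1) - W‖^2
        ≤ ⟪G, a - W⟫_ℝ - β/2*‖a - W‖^2)
    (h_y2 : ⟪G, a - W⟫_ℝ - β/2*‖a - W‖^2 ≤ Ha + Ek - P) :
    2*(m+1)*gu ≤ (m+1)*(m+2)*(Ha + Ek) - m*(m+1)*Hk
      + 2*β*(‖u - zk‖^2 - ‖u - zk1‖^2) := by
  have hm2 : (0:ℝ) < m + 2 := by linarith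
  have hm2' : m + 2 ≠ 0 := ne_of_gt hm2
  obtain ⟨t, ht⟩ : ∃ t : ℝ, (m+2)⁻¹ = t := ⟨_, rfl⟩
  have ht0 : 0 < t := ht ▸ inv_pos.2 hm2
  have htt : (m+2)*t = 1 := by rw [← ht]; exact mul_inv_cancel₀ hm2'
  have hv1 : u - W = (u - zk) + (m*t) • (zk - yk) := by
    subst ht; rw [hW]; match_scalars <;> field_simp <;> ring
  have e1 : ⟪G, u - W⟫_ℝ = ⟪G, u - zk⟫_ℝ + (m*t) * ⟪G, zk - yk⟫_ℝ := by
    rw [hv1, inner_add_right, real_inner_smul_right]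
  have eflip : ⟪G, zk - yk⟫_ℝ = -⟪G, yk - zk⟫_ℝ := by
    rw [show zk - yk = -(yk - zk) by module, inner_neg_right]
  have hv2 : yk - W = (2*t) • (yk - zk) := by
    subst ht; rw [hW]; match_scalars <;> field_simp <;> ring
  have e2 : ⟪G, yk - W⟫_ℝ = (2*t) * ⟪G, yk - zk⟫_ℝ := by
    rw [hv2, real_inner_smul_right]
  have hv3 : ((1 - 2/(m+2)) • yk + (2/(m+2)) • zk1) - W = (2*t) • (zk1 - zk) := by
    subst ht; rw [hW]; match_scalars <;> field_simp <;> ring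
  have e3 : ⟪G, ((1 - 2/(m+2)) • yk + (2/(m+2)) • zk1) - W⟫_ℝ
      = (2*t) * ⟪G, zk1 - zk⟫_ℝ := by rw [hv3, real_inner_smul_right]
  have n3 : ‖((1 - 2/(m+2)) • yk + (2/(m+2)) • zk1) - W‖^2
      = (2*t)^2 * ‖zk1 - zk‖^2 := by
    rw [hv3, norm_smul, mul_pow, Real.norm_eq_abs, sq_abs]
  have e4 : ⟪G, u - zk⟫_ℝ = ⟪G, u - zk1⟫_ℝ + ⟪G, zk1 - zk⟫_ℝ := by
    rw [show u - zk = (u - zk1) + (zk1 - zk) by module, inner_add_right]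
  have ezvi : ((m+1)/(2*β)) * ⟪G, u - zk1⟫_ℝ ≤ ⟪zk1 - zk, u - zk1⟫_ℝ := by
    have hv5 : zk + ((m+1)/(2*β)) • G - zk1 = ((m+1)/(2*β)) • G - (zk1 - zk) := by module
    rw [hv5, inner_sub_left, real_inner_smul_left] at h_zvi
    linarith
  have id1 : ⟪zk1 - zk, u - zk1⟫_ℝ
      = (‖u - zk‖^2 - ‖u - zk1‖^2 - ‖zk1 - zk‖^2)/2 := by
    have hexp : u - zk = (u - zk1) + (zk1 - zk) := by module
    have hns := norm_add_sq_real (u - zk1) (zk1 - zk)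
    rw [← hexp] at hns
    rw [real_inner_comm]
    linarith
  have Z1 : (m+1) * ⟪G, u - zk1⟫_ℝ
      ≤ β*(‖u - zk‖^2 - ‖u - zk1‖^2 - ‖zk1 - zk‖^2) := by
    have h2b : (0:ℝ) < 2*β := by linarith
    calc (m+1) * ⟪G, u - zk1⟫_ℝ
        = 2*β*(((m+1)/(2*β)) * ⟪G, u - zk1⟫_ℝ) := by field_simp
      _ ≤ 2*β*⟪zk1 - zk, u - zk1⟫_ℝ := mul_le_mul_of_nonneg_left ezvi h2b.le
      _ = β*(‖u - zk‖^2 - ‖u - zk1‖^2 - ‖zk1 - zk‖^2) := by rw [id1]; ring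
  have hyy : (2*t) * ⟪G, zk1 - zk⟫_ℝ - β/2*((2*t)^2 * ‖zk1 - zk‖^2)
      ≤ Ha + Ek - P := by
    rw [e3, n3] at h_y'
    linarith
  have Y1 : 2*(m+1)*⟪G, zk1 - zk⟫_ℝ - 2*β*‖zk1 - zk‖^2
      ≤ (m+1)*(m+2)*(Ha + Ek - P) := by
    have hmul := mul_le_mul_of_nonneg_left hyy
      (by positivity : (0:ℝ) ≤ (m+1)*(m+2))
    have eL : (m+1)*(m+2)*((2*t) * ⟪G, zk1 - zk⟫_ℝ - β/2*((2*t)^2 * ‖zk1 - zk‖^2))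
        = 2*(m+1)*⟪G, zk1 - zk⟫_ℝ - 2*β*(m+1)*t*‖zk1 - zk‖^2 := by
      linear_combination (2*(m+1)*⟪G, zk1 - zk⟫_ℝ
        - 2*β*(m+1)*t*‖zk1 - zk‖^2) * htt
    have hmt1 : (m+1)*t ≤ 1 := by nlinarith
    have eX : 2*β*(m+1)*t*‖zk1 - zk‖^2 ≤ 2*β*‖zk1 - zk‖^2 := by
      have h0 : (0:ℝ) ≤ 2*β*‖zk1 - zk‖^2 := by positivity
      calc 2*β*(m+1)*t*‖zk1 - zk‖^2 = ((m+1)*t) * (2*β*‖zk1 - zk‖^2) := by ring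
        _ ≤ 1 * (2*β*‖zk1 - zk‖^2) := mul_le_mul_of_nonneg_right hmt1 h0
        _ = 2*β*‖zk1 - zk‖^2 := by ring
    rw [eL] at hmul
    linarith
  have h_c1' : gu ≤ P + ⟪G, u - zk⟫_ℝ - (m*t) * ⟪G, yk - zk⟫_ℝ := by
    rw [e1, eflip] at h_c1; linarith
  have M1 := mul_le_mul_of_nonneg_left h_c1'
    (by positivity : (0:ℝ) ≤ 2*(m+1))
  have h_c2' : Hk ≤ P + (2*t) * ⟪G, yk - zk⟫_ℝ := by
    rw [e2] at h_c2; linarith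
  have M2 := mul_le_mul_of_nonneg_left h_c2'
    (by positivity : (0:ℝ) ≤ m*(m+1))
  have e4' : 2*(m+1)*⟪G, u - zk⟫_ℝ
      = 2*(m+1)*⟪G, u - zk1⟫_ℝ + 2*(m+1)*⟪G, zk1 - zk⟫_ℝ := by rw [e4]; ring
  linarith [M1, M2, Z1, Y1, e4']

end DiagAux

lemma diag_sum_Icc_one {M : Type*} [AddCommMonoid M] (f : ℕ → M) (K : ℕ) :
    ∑ k ∈ Finset.Icc 1 K, f k = ∑ j ∈ Finset.range K, f (j+1) := by
  induction K with
  | zero => simp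
  | succ n ih =>
      rw [Finset.sum_Icc_succ_top (by omega : 1 ≤ n+1), ih, Finset.sum_range_succ]

lemma diag_gauss (n : ℕ) :
    (∑ i ∈ Finset.range n, ((i:ℝ)+1)) = (n:ℝ)*((n:ℝ)+1)/2 := by
  induction n with
  | zero => simp
  | succ n ih => rw [Finset.sum_range_succ, ih]; push_cast; ring

/-- Theorem 1, general tolerance version: convergence of the DIAG
iteration for smooth strongly-convex–concave minimax problems. With `β = 2L²/σ`,
`τ_k = 2/(k+2)`, `η_k = (k+1)/(2β)`, inexact minimization tolerances `ε_step`, and the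
stated updates, the primal-dual gap of `(x̄_K, y_K)` is at most
`(4(L²/σ)D_𝒴² + Σ_{k=1}^K k(k+1) ε_step^{(k)}) / (K(K+1))`. -/
theorem stmt_10 {p q : ℕ} (Y : Set (EuclideanSpace ℝ (Fin q))) (hYne : Y.Nonempty)
    (hYcomp : IsCompact Y) (hYconv : Convex ℝ Y)
    (D : ℝ) (hD : ∀ a ∈ Y, ∀ b ∈ Y, ‖a - b‖ ≤ D)
    (g : EuclideanSpace ℝ (Fin p) × EuclideanSpace ℝ (Fin q) → ℝ) (L σ : ℝ)
    (hσ : 0 < σ) (hσL : σ ≤ L)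
    (hdx : ∀ y, Differentiable ℝ fun x => g (x, y))
    (hdy : ∀ x, Differentiable ℝ fun y => g (x, y))
    (hsmooth : ∀ x y x' y',
      ‖gradient (fun z => g (z, y)) x - gradient (fun z => g (z, y')) x'‖ ≤
          L * (‖x - x'‖ + ‖y - y'‖) ∧
      ‖gradient (fun z => g (x, z)) y - gradient (fun z => g (x', z)) y'‖ ≤
          L * (‖x - x'‖ + ‖y - y'‖))
    (hsc : ∀ y, ConvexOn ℝ Set.univ fun x => g (x, y) - σ / 2 * ‖x‖ ^ 2)
    (hconc : ∀ x, ConcaveOn ℝ Y fun y => g (x, y))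
    (β : ℝ) (hβ : β = 2 * L ^ 2 / σ)
    (εstep : ℕ → ℝ) (hεnn : ∀ k, 0 ≤ εstep k)
    (x : ℕ → EuclideanSpace ℝ (Fin p)) (y z w : ℕ → EuclideanSpace ℝ (Fin q))
    (hy0 : y 0 ∈ Y) (hz0 : z 0 = y 0)
    (hw : ∀ k, w k = (1 - 2 / ((k : ℝ) + 2)) • y k + (2 / ((k : ℝ) + 2)) • z k)
    (hxstep : ∀ k, g (x (k + 1), y (k + 1)) ≤
        (⨅ x' : EuclideanSpace ℝ (Fin p), g (x', y (k + 1))) + εstep (k + 1))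
    (hymem : ∀ k, y (k + 1) ∈ Y)
    (hyproj : ∀ k, ∀ v ∈ Y,
      ‖w k + β⁻¹ • gradient (fun y' => g (x (k + 1), y')) (w k) - y (k + 1)‖ ≤
        ‖w k + β⁻¹ • gradient (fun y' => g (x (k + 1), y')) (w k) - v‖)
    (hzmem : ∀ k, z (k + 1) ∈ Y)
    (hzproj : ∀ k, ∀ v ∈ Y,
      ‖z k + (((k : ℝ) + 1) / (2 * β)) • gradient (fun y' => g (x (k + 1), y')) (w k)
          - z (k + 1)‖ ≤
        ‖z k + (((k : ℝ) + 1) / (2 * β)) • gradient (fun y' => g (x (k + 1), y')) (w k) - v‖)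
    (K : ℕ) (hK : 1 ≤ K)
    (xbar : EuclideanSpace ℝ (Fin p))
    (hxbar : xbar = (2 / ((K : ℝ) * ((K : ℝ) + 1))) • ∑ i ∈ Finset.Icc 1 K, (i : ℝ) • x i) :
    ∀ ytil ∈ Y, ∀ xtil : EuclideanSpace ℝ (Fin p),
      g (xbar, ytil) - g (xtil, y K) ≤
        (4 * (L ^ 2 / σ) * D ^ 2 +
            ∑ k ∈ Finset.Icc 1 K, ((k : ℝ) * ((k : ℝ) + 1)) * εstep k) /
          ((K : ℝ) * ((K : ℝ) + 1)) := by
  intro ytil hytil xtil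
  have hL : 0 < L := lt_of_lt_of_le hσ hσL
  have hβpos : 0 < β := by rw [hβ]; positivity
  have hLβ : L ≤ β := by
    rw [hβ, le_div_iff₀ hσ]; nlinarith
  -- memberships of the iterates
  have hymemA : ∀ k, y k ∈ Y := fun k => Nat.casesOn k hy0 (fun n => hymem n)
  have hzmemA : ∀ k, z k ∈ Y := fun k => Nat.casesOn k (hz0 ▸ hy0) (fun n => hzmem n)
  have hcoef : ∀ k : ℕ, 0 ≤ 1 - 2/((k:ℝ)+2) ∧ 0 ≤ 2/((k:ℝ)+2)
      ∧ (1 - 2/((k:ℝ)+2)) + 2/((k:ℝ)+2) = 1 := by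
    intro k
    have h2 : (0:ℝ) < (k:ℝ)+2 := by positivity
    have hk0 : (0:ℝ) ≤ (k:ℝ) := Nat.cast_nonneg k
    refine ⟨?_, by positivity, by ring⟩
    rw [sub_nonneg, div_le_one h2]; linarith
  have hwmem : ∀ k, w k ∈ Y := by
    intro k
    rw [hw k]
    exact hYconv (hymemA k) (hzmemA k) (hcoef k).1 (hcoef k).2.1 (hcoef k).2.2
  -- the dual function
  set hh : EuclideanSpace ℝ (Fin q) → ℝ := fun u => ⨅ x', g (x', u) with hhdef
  have hbdd : ∀ u, BddBelow (Set.range fun x' => g (x', u)) := fun u =>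
    diag_sc_bddBelow _ (hdx u) σ hσ (hsc u)
  have hh_le : ∀ u x', hh u ≤ g (x', u) := fun u x' => ciInf_le (hbdd u) x'
  have hh_step : ∀ k, g (x (k+1), y (k+1)) ≤ hh (y (k+1)) + εstep (k+1) :=
    fun k => hxstep k
  -- y-direction gradient Lipschitz bound
  have hLipy : ∀ (X : EuclideanSpace ℝ (Fin p)) (a b : EuclideanSpace ℝ (Fin q)),
      ‖gradient (fun y' => g (X, y')) a - gradient (fun y' => g (X, y')) b‖
        ≤ L * ‖a - b‖ := by
    intro X a b
    have := (hsmooth X a X b).2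
    simpa using this
  have hdesc : ∀ (X : EuclideanSpace ℝ (Fin p)) (a b : EuclideanSpace ℝ (Fin q)),
      g (X, a) + ⟪gradient (fun y' => g (X, y')) a, b - a⟫_ℝ - L/2*‖b - a‖^2 ≤ g (X, b) :=
    fun X a b => diag_descent _ (hdy X) L (hLipy X) a b
  have hcub : ∀ (X : EuclideanSpace ℝ (Fin p)), ∀ a ∈ Y, ∀ b ∈ Y,
      g (X, b) ≤ g (X, a) + ⟪gradient (fun y' => g (X, y')) a, b - a⟫_ℝ :=
    fun X a ha b hb => diag_concave_ub _ (hdy X) (hconc X) ha hb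
  -- per-iteration estimate
  have key : ∀ k : ℕ, 2*((k:ℝ)+1) * g (x (k+1), ytil)
      ≤ ((k:ℝ)+1)*((k:ℝ)+2)*(hh (y (k+1)) + εstep (k+1)) - (k:ℝ)*((k:ℝ)+1)*hh (y k)
        + 2*β*(‖ytil - z k‖^2 - ‖ytil - z (k+1)‖^2) := by
    intro k
    set G := gradient (fun y' => g (x (k+1), y')) (w k) with hGdef
    have h_c1 : g (x (k+1), ytil) ≤ g (x (k+1), w k) + ⟪G, ytil - w k⟫_ℝ :=
      hcub (x (k+1)) (w k) (hwmem k) ytil hytil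
    have h_c2 : hh (y k) ≤ g (x (k+1), w k) + ⟪G, y k - w k⟫_ℝ :=
      le_trans (hh_le (y k) (x (k+1))) (hcub (x (k+1)) (w k) (hwmem k) (y k) (hymemA k))
    have h_zvi : ⟪z k + (((k:ℝ)+1)/(2*β)) • G - z (k+1), ytil - z (k+1)⟫_ℝ ≤ 0 :=
      diag_proj_vi hYconv (hzmem k) (fun v hv => hzproj k v hv) ytil hytil
    have hy'mem : (1 - 2/((k:ℝ)+2)) • y k + (2/((k:ℝ)+2)) • z (k+1) ∈ Y :=
      hYconv (hymemA k) (hzmem k) (hcoef k).1 (hcoef k).2.1 (hcoef k).2.2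
    have h_y' := diag_gradstep hβpos (w k) G (y (k+1))
      ((1 - 2/((k:ℝ)+2)) • y k + (2/((k:ℝ)+2)) • z (k+1))
      (hyproj k _ hy'mem)
    have h_y2 : ⟪G, y (k+1) - w k⟫_ℝ - β/2*‖y (k+1) - w k‖^2
        ≤ hh (y (k+1)) + εstep (k+1) - g (x (k+1), w k) := by
      have hdesc1 := hdesc (x (k+1)) (w k) (y (k+1))
      have hxs := hh_step k
      have hnw : (0:ℝ) ≤ ‖y (k+1) - w k‖^2 := sq_nonneg _
      have hLB : L/2*‖y (k+1) - w k‖^2 ≤ β/2*‖y (k+1) - w k‖^2 := by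
        nlinarith [mul_nonneg (by linarith : (0:ℝ) ≤ β - L) hnw]
      linarith
    have := diag_onestep ((k:ℝ)) β (Nat.cast_nonneg k) hβpos
      ytil (w k) (y k) (z k) (z (k+1)) (y (k+1)) G
      (g (x (k+1), w k)) (g (x (k+1), ytil)) (hh (y k)) (hh (y (k+1))) (εstep (k+1))
      (hw k) h_c1 h_c2 h_zvi h_y' h_y2
    linarith [this]
  -- telescoping
  set F : ℕ → ℝ := fun n => (n:ℝ)*((n:ℝ)+1) * hh (y n)
      + (∑ j ∈ Finset.range n, ((j:ℝ)+1)*((j:ℝ)+2) * εstep (j+1))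
      - 2*β*‖ytil - z n‖^2 with hFdef
  have hstep : ∀ k ∈ Finset.range K,
      2*((k:ℝ)+1) * g (x (k+1), ytil) ≤ F (k+1) - F k := by
    intro k _
    have hkey := key k
    have hFd : F (k+1) - F k
        = ((k:ℝ)+1)*((k:ℝ)+2)*(hh (y (k+1)) + εstep (k+1)) - (k:ℝ)*((k:ℝ)+1)*hh (y k)
          + 2*β*(‖ytil - z k‖^2 - ‖ytil - z (k+1)‖^2) := by
      simp only [hFdef, Finset.sum_range_succ]
      push_cast
      ring
    rw [hFd]
    exact hkey
  have hsumF : ∑ k ∈ Finset.range K, (2*((k:ℝ)+1) * g (x (k+1), ytil)) ≤ F K - F 0 :=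
    calc ∑ k ∈ Finset.range K, (2*((k:ℝ)+1) * g (x (k+1), ytil))
        ≤ ∑ k ∈ Finset.range K, (F (k+1) - F k) := Finset.sum_le_sum hstep
      _ = F K - F 0 := Finset.sum_range_sub F K
  have hF0 : F 0 = -(2*β*‖ytil - z 0‖^2) := by simp [hFdef]
  -- reindexing the tolerance sum
  have hreidx : (∑ k ∈ Finset.Icc 1 K, ((k:ℝ)*((k:ℝ)+1)) * εstep k)
      = ∑ j ∈ Finset.range K, ((j:ℝ)+1)*((j:ℝ)+2) * εstep (j+1) := by
    rw [diag_sum_Icc_one (fun k => ((k:ℝ)*((k:ℝ)+1)) * εstep k) K]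
    apply Finset.sum_congr rfl
    intro j _
    push_cast
    ring
  -- bound on F K - F 0
  have hzD : ‖ytil - z 0‖ ≤ D := by
    rw [hz0]; exact hD ytil hytil (y 0) hy0
  have hzD2 : 2*β*‖ytil - z 0‖^2 ≤ 4*(L^2/σ)*D^2 := by
    have h1 : ‖ytil - z 0‖^2 ≤ D^2 := pow_le_pow_left₀ (norm_nonneg _) hzD 2
    calc 2*β*‖ytil - z 0‖^2 ≤ 2*β*D^2 :=
          mul_le_mul_of_nonneg_left h1 (by positivity)
      _ = 4*(L^2/σ)*D^2 := by rw [hβ]; ring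
  have hFKF0 : F K - F 0 ≤ (K:ℝ)*((K:ℝ)+1) * g (xtil, y K)
      + (∑ k ∈ Finset.Icc 1 K, ((k:ℝ)*((k:ℝ)+1)) * εstep k) + 4*(L^2/σ)*D^2 := by
    have h1 : hh (y K) ≤ g (xtil, y K) := hh_le _ _
    have h2 : (0:ℝ) ≤ (K:ℝ)*((K:ℝ)+1) := by positivity
    have h3 := mul_le_mul_of_nonneg_left h1 h2
    have h4 : (0:ℝ) ≤ 2*β*‖ytil - z K‖^2 := by positivity
    rw [hF0, hreidx]
    simp only [hFdef]
    linarith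
  -- convexity of g in x and Jensen
  have hnsq : ConvexOn ℝ (Set.univ : Set (EuclideanSpace ℝ (Fin p)))
      (fun v => σ/2 * ‖v‖^2) := by
    have h1 : ConvexOn ℝ (Set.univ : Set (EuclideanSpace ℝ (Fin p)))
        (fun v => ‖v‖^2) := by
      refine ⟨convex_univ, ?_⟩
      intro a _ b _ s t hs ht hst
      simp only [smul_eq_mul]
      have hn : ‖s • a + t • b‖ ≤ s*‖a‖ + t*‖b‖ := by
        calc ‖s • a + t • b‖ ≤ ‖s • a‖ + ‖t • b‖ := norm_add_le _ _
          _ = s*‖a‖ + t*‖b‖ := by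
              rw [norm_smul, norm_smul, Real.norm_eq_abs, Real.norm_eq_abs,
                abs_of_nonneg hs, abs_of_nonneg ht]
      have h2 : ‖s • a + t • b‖^2 ≤ (s*‖a‖ + t*‖b‖)^2 :=
        pow_le_pow_left₀ (norm_nonneg _) hn 2
      nlinarith [sq_nonneg (‖a‖ - ‖b‖), mul_nonneg hs ht, h2]
    simpa [smul_eq_mul] using h1.smul (c := σ/2) (by positivity)
  have hconvg : ConvexOn ℝ Set.univ (fun x' => g (x', ytil)) := by
    have := (hsc ytil).add hnsq
    refine this.congr (fun v _ => ?_)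
    simp only [Pi.add_apply]
    ring
  have hK1 : (1:ℝ) ≤ (K:ℝ) := by exact_mod_cast hK
  have hKKpos : (0:ℝ) < (K:ℝ)*((K:ℝ)+1) := by nlinarith
  have hxbar' : xbar = ∑ i ∈ Finset.range K,
      (2*((i:ℝ)+1)/((K:ℝ)*((K:ℝ)+1))) • x (i+1) := by
    rw [hxbar, diag_sum_Icc_one (fun i => (i:ℝ) • x i) K, Finset.smul_sum]
    apply Finset.sum_congr rfl
    intro i _
    rw [smul_smul]
    congr 1
    push_cast
    ring
  have hwsum : ∑ i ∈ Finset.range K, 2*((i:ℝ)+1)/((K:ℝ)*((K:ℝ)+1)) = 1 := by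
    have h2g : ∑ i ∈ Finset.range K, 2*((i:ℝ)+1) = (K:ℝ)*((K:ℝ)+1) := by
      rw [← Finset.mul_sum, diag_gauss]
      ring
    rw [← Finset.sum_div, h2g, div_self (ne_of_gt hKKpos)]
  have hjen : g (xbar, ytil) ≤ ∑ i ∈ Finset.range K,
      (2*((i:ℝ)+1)/((K:ℝ)*((K:ℝ)+1))) * g (x (i+1), ytil) := by
    have := hconvg.map_sum_le (t := Finset.range K)
      (w := fun i => 2*((i:ℝ)+1)/((K:ℝ)*((K:ℝ)+1)))
      (p := fun i => x (i+1))
      (fun i _ => by positivity) hwsum (fun i _ => Set.mem_univ _)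
    rw [hxbar']
    simpa [smul_eq_mul] using this
  have hfinal1 : g (xbar, ytil) ≤ ((K:ℝ)*((K:ℝ)+1))⁻¹
      * ∑ k ∈ Finset.range K, (2*((k:ℝ)+1) * g (x (k+1), ytil)) := by
    rw [Finset.mul_sum]
    refine le_trans hjen (le_of_eq (Finset.sum_congr rfl ?_))
    intro i _
    ring
  have hfinal2 := mul_le_mul_of_nonneg_left hsumF
    (inv_nonneg.2 hKKpos.le)
  have hfinal3 := mul_le_mul_of_nonneg_left hFKF0
    (inv_nonneg.2 hKKpos.le)
  have heq : ((K:ℝ)*((K:ℝ)+1))⁻¹ * ((K:ℝ)*((K:ℝ)+1) * g (xtil, y K)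
      + (∑ k ∈ Finset.Icc 1 K, ((k:ℝ)*((k:ℝ)+1)) * εstep k) + 4*(L^2/σ)*D^2)
      = g (xtil, y K) + (4*(L^2/σ)*D^2
        + ∑ k ∈ Finset.Icc 1 K, ((k:ℝ)*((k:ℝ)+1)) * εstep k)/((K:ℝ)*((K:ℝ)+1)) := by
    field_simp
    ring
  rw [heq] at hfinal3
  have hchain : g (xbar, ytil) ≤ g (xtil, y K) + (4*(L^2/σ)*D^2
      + ∑ k ∈ Finset.Icc 1 K, ((k:ℝ)*((k:ℝ)+1)) * εstep k)/((K:ℝ)*((K:ℝ)+1)) :=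
    le_trans hfinal1 (le_trans hfinal2 hfinal3)
  linarith [hchain]
end

section
/- In the setting of the DIAG iteration (𝒴 ⊆ ℝ^q nonempty compact convex with diameter D_𝒴, g : ℝ^p × 𝒴 → ℝ L-smooth, g(·,y) σ-strongly convex for every y with 0 < σ ≤ L, g(x,·) concave for every x, β = 2L²/σ, z₀ = y₀, and for each k: τ_k = 2/(k+2), η_k = (k+1)/(2β), w_k = (1 − τ_k) y_k + τ_k z_k, g(x_{k+1}, y_{k+1}) ≤ min_x g(x, y_{k+1}) + ε_step^{(k+1)}, y_{k+1} = P_𝒴(w_k + (1/β)∇_y g(x_{k+1}, w_k)), z_{k+1} = P_𝒴(z_k + η_k ∇_y g(x_{k+1}, w_k)), x̄_K = (2/(K(K+1))) Σ_{i=1}^{K} i·x_i), if the tolerances are chosen as ε_step^{(k)} = L² D_𝒴² / (σ k³ (k+1)), then for every K ≥ 1, max_{ỹ ∈ 𝒴} g(x̄_K, ỹ) − min_{x̃ ∈ ℝ^p} g(x̃, y_K) ≤ 6 (L²/σ) D_𝒴² / (K(K+1)). -/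
open scoped RealInnerProductSpace

section helpers

variable {F : Type*} [NormedAddCommGroup F] [InnerProductSpace ℝ F] [CompleteSpace F]

lemma line_hasDerivAt {f : F → ℝ} (hf : Differentiable ℝ f) (a d : F) (t : ℝ) :
    HasDerivAt (fun s : ℝ => f (a + s • d)) ⟪gradient f (a + t • d), d⟫ t := by
  have hg := (hf (a + t • d)).hasGradientAt
  rw [hasGradientAt_iff_hasFDerivAt] at hg
  have hline : HasDerivAt (fun s : ℝ => a + s • d) d t := by
    simpa using ((hasDerivAt_id t).smul_const d).const_add a
  have h2 := hg.comp_hasDerivAt t hline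
  rw [InnerProductSpace.toDual_apply_apply] at h2
  exact h2

lemma mem_of_seg {s : Set F} (hs : Convex ℝ s) {a b : F} (ha : a ∈ s) (hb : b ∈ s)
    {t : ℝ} (h0 : 0 ≤ t) (h1 : t ≤ 1) : a + t • (b - a) ∈ s := by
  have h := hs ha hb (by linarith : (0:ℝ) ≤ 1 - t) h0 (by ring)
  convert h using 1
  module

lemma concave_tangent_le {s : Set F} (hs : Convex ℝ s) {f : F → ℝ} (hf : Differentiable ℝ f)
    (hc : ConcaveOn ℝ s f) {a b : F} (ha : a ∈ s) (hb : b ∈ s) :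
    f b ≤ f a + ⟪gradient f a, b - a⟫ := by
  set ψ : ℝ → ℝ := fun t => f (a + t • (b - a)) with hψdef
  have hconc : ConcaveOn ℝ (Set.Icc (0:ℝ) 1) ψ := by
    refine ⟨convex_Icc 0 1, ?_⟩
    intro u hu v hv la mu hla hmu hsum
    have h1 : la • (a + u • (b - a)) + mu • (a + v • (b - a))
        = (la + mu) • a + (la * u + mu * v) • (b - a) := by module
    have h2 : ψ (la • u + mu • v) = f (la • (a + u • (b - a)) + mu • (a + v • (b - a))) := by
      rw [h1, hsum, one_smul, hψdef]
      simp [smul_eq_mul]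
    rw [h2]
    exact hc.2 (mem_of_seg hs ha hb hu.1 hu.2) (mem_of_seg hs ha hb hv.1 hv.2) hla hmu hsum
  have hd : HasDerivAt ψ ⟪gradient f a, b - a⟫ 0 := by
    simpa using line_hasDerivAt hf a (b - a) 0
  have h0m : (0:ℝ) ∈ Set.Icc (0:ℝ) 1 := by norm_num
  have h1m : (1:ℝ) ∈ Set.Icc (0:ℝ) 1 := by norm_num
  have hslope := hconc.slope_le_of_hasDerivAt h0m h1m zero_lt_one hd
  rw [slope_def_field] at hslope
  have e1 : ψ 1 = f b := by simp [hψdef]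
  have e0 : ψ 0 = f a := by simp [hψdef]
  rw [e1, e0] at hslope
  have : (f b - f a) / (1 - 0) = f b - f a := by norm_num
  rw [this] at hslope
  linarith

lemma convex_tangent_le {f : F → ℝ} (hf : Differentiable ℝ f)
    (hc : ConvexOn ℝ Set.univ f) (a b : F) :
    f a + ⟪gradient f a, b - a⟫ ≤ f b := by
  set ψ : ℝ → ℝ := fun t => f (a + t • (b - a)) with hψdef
  have hcv : ConvexOn ℝ (Set.univ : Set ℝ) ψ := by
    refine ⟨convex_univ, ?_⟩
    intro u _ v _ la mu hla hmu hsum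
    have h1 : la • (a + u • (b - a)) + mu • (a + v • (b - a))
        = (la + mu) • a + (la * u + mu * v) • (b - a) := by module
    have h2 : ψ (la • u + mu • v) = f (la • (a + u • (b - a)) + mu • (a + v • (b - a))) := by
      rw [h1, hsum, one_smul, hψdef]
      simp [smul_eq_mul]
    rw [h2]
    exact hc.2 trivial trivial hla hmu hsum
  have hd : HasDerivAt ψ ⟪gradient f a, b - a⟫ 0 := by
    simpa using line_hasDerivAt hf a (b - a) 0
  have hslope := hcv.le_slope_of_hasDerivAt (Set.mem_univ 0) (Set.mem_univ 1) zero_lt_one hd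
  rw [slope_def_field] at hslope
  have e1 : ψ 1 = f b := by simp [hψdef]
  have e0 : ψ 0 = f a := by simp [hψdef]
  rw [e1, e0] at hslope
  have : (f b - f a) / (1 - 0) = f b - f a := by norm_num
  rw [this] at hslope
  linarith


section helpers2

variable {F : Type*} [NormedAddCommGroup F] [InnerProductSpace ℝ F] [CompleteSpace F]

lemma line_hasDerivAt' {f : F → ℝ} (hf : Differentiable ℝ f) (a d : F) (t : ℝ) :
    HasDerivAt (fun s : ℝ => f (a + s • d)) ⟪gradient f (a + t • d), d⟫ t := by
  have hg := (hf (a + t • d)).hasGradientAt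
  rw [hasGradientAt_iff_hasFDerivAt] at hg
  have hline : HasDerivAt (fun s : ℝ => a + s • d) d t := by
    simpa using ((hasDerivAt_id t).smul_const d).const_add a
  have h2 := hg.comp_hasDerivAt t hline
  rw [InnerProductSpace.toDual_apply_apply] at h2
  exact h2

lemma descent_le {f : F → ℝ} (hf : Differentiable ℝ f) {L : ℝ} (hL0 : 0 ≤ L)
    (hLip : ∀ u v : F, ‖gradient f u - gradient f v‖ ≤ L * ‖u - v‖) (a b : F) :
    f a + ⟪gradient f a, b - a⟫ - L * ‖b - a‖ ^ 2 ≤ f b := by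
  set d := b - a with hd
  set φ : ℝ → ℝ := fun t => f (a + t • d) - t * ⟪gradient f a, d⟫ with hφ
  have hder : ∀ t ∈ Set.Icc (0:ℝ) 1,
      HasDerivWithinAt φ (⟪gradient f (a + t • d) - gradient f a, d⟫) (Set.Icc (0:ℝ) 1) t := by
    intro t _
    have h1 := (line_hasDerivAt' hf a d t).sub ((hasDerivAt_id t).mul_const ⟪gradient f a, d⟫)
    have h2 : ⟪gradient f (a + t • d), d⟫ - 1 * ⟪gradient f a, d⟫
        = ⟪gradient f (a + t • d) - gradient f a, d⟫ := by
      rw [inner_sub_left]; ring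
    rw [h2] at h1
    exact h1.hasDerivWithinAt
  have hbound : ∀ t ∈ Set.Ico (0:ℝ) 1,
      ‖⟪gradient f (a + t • d) - gradient f a, d⟫‖ ≤ L * ‖d‖ ^ 2 := by
    intro t ht
    have h1 : |⟪gradient f (a + t • d) - gradient f a, d⟫| ≤
        ‖gradient f (a + t • d) - gradient f a‖ * ‖d‖ := abs_real_inner_le_norm _ _
    have h2 : ‖gradient f (a + t • d) - gradient f a‖ ≤ L * ‖t • d‖ := by
      have := hLip (a + t • d) a
      simpa using this
    have h3 : ‖t • d‖ = |t| * ‖d‖ := by rw [norm_smul, Real.norm_eq_abs]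
    have h4 : |t| ≤ 1 := by rw [abs_of_nonneg ht.1]; linarith [ht.2]
    have h5 : ‖gradient f (a + t • d) - gradient f a‖ * ‖d‖ ≤ L * ‖d‖ ^ 2 := by
      have h6 : ‖gradient f (a + t • d) - gradient f a‖ ≤ L * ‖d‖ := by
        rw [h3] at h2
        nlinarith [norm_nonneg d, mul_nonneg hL0 (norm_nonneg d), abs_nonneg t]
      nlinarith [norm_nonneg d]
    calc ‖⟪gradient f (a + t • d) - gradient f a, d⟫‖
        = |⟪gradient f (a + t • d) - gradient f a, d⟫| := rfl
      _ ≤ _ := le_trans h1 h5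
  have hfin := norm_image_sub_le_of_norm_deriv_le_segment_01' hder hbound
  have e1 : φ 1 = f b - ⟪gradient f a, d⟫ := by simp [hφ, hd]
  have e0 : φ 0 = f a := by simp [hφ]
  rw [e1, e0] at hfin
  have := abs_le.mp hfin
  rw [hd] at *
  linarith [this.1, this.2]

lemma bdd_of_sc {f : F → ℝ} (hf : Differentiable ℝ f) {σ : ℝ} (hσ : 0 < σ)
    (hc : ConvexOn ℝ Set.univ fun x => f x - σ / 2 * ‖x‖ ^ 2) :
    BddBelow (Set.range f) := by
  have hin : Differentiable ℝ fun x : F => ⟪x, x⟫ := differentiable_id.inner ℝ differentiable_id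
  have hdsq : Differentiable ℝ fun x : F => σ / 2 * ‖x‖ ^ 2 := by
    have h1 : (fun x : F => σ / 2 * ‖x‖ ^ 2) = fun x : F => σ / 2 * ⟪x, x⟫ := by
      funext xx; rw [real_inner_self_eq_norm_sq]
    rw [h1]
    exact hin.const_mul _
  have hf0 : Differentiable ℝ fun x : F => f x - σ / 2 * ‖x‖ ^ 2 := hf.sub hdsq
  set v := gradient (fun x : F => f x - σ / 2 * ‖x‖ ^ 2) 0 with hv
  refine ⟨(f 0 - σ / 2 * ‖(0:F)‖ ^ 2) - ‖v‖ ^ 2 / (2 * σ), ?_⟩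
  rintro r ⟨xx, rfl⟩
  have ht := convex_tangent_le hf0 hc 0 xx
  have hinner : -(‖v‖ * ‖xx‖) ≤ ⟪v, xx - 0⟫ := by
    have h1 := abs_real_inner_le_norm v (xx - 0)
    have h2 := (abs_le.mp h1).1
    simpa using h2
  have hnn : 0 ≤ ‖xx‖ := norm_nonneg xx
  have hvnn : 0 ≤ ‖v‖ := norm_nonneg v
  have hcl : ‖v‖ ^ 2 / (2 * σ) * (2 * σ) = ‖v‖ ^ 2 := by field_simp
  nlinarith [sq_nonneg (σ * ‖xx‖ - ‖v‖), ht]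

lemma proj_vi {s : Set F} (hs : Convex ℝ s) {m c : F} (hm : m ∈ s)
    (hmin : ∀ v ∈ s, ‖c - m‖ ≤ ‖c - v‖) : ∀ v ∈ s, ⟪c - m, v - m⟫ ≤ 0 := by
  haveI : Nonempty s := ⟨⟨m, hm⟩⟩
  have heq : ‖c - m‖ = ⨅ w : s, ‖c - w‖ :=
    le_antisymm (le_ciInf fun ww => hmin ww ww.2)
      (ciInf_le (show BddBelow (Set.range fun w : s => ‖c - w‖) from ⟨0, by rintro r ⟨ww, rfl⟩; positivity⟩) ⟨m, hm⟩)
  exact (norm_eq_iInf_iff_real_inner_le_zero hs hm).mp heq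

lemma convexOn_normsq : ConvexOn ℝ (Set.univ : Set F) fun xx => ‖xx‖ ^ 2 := by
  refine ⟨convex_univ, ?_⟩
  intro a _ b _ la mu hla hmu hsum
  simp only [smul_eq_mul]
  have h := norm_add_sq_real (la • a) (mu • b)
  rw [norm_smul, norm_smul, real_inner_smul_left, real_inner_smul_right,
    Real.norm_eq_abs, Real.norm_eq_abs, abs_of_nonneg hla, abs_of_nonneg hmu] at h
  have hab := real_inner_le_norm a b
  nlinarith [sq_nonneg (‖a‖ - ‖b‖), norm_nonneg a, norm_nonneg b, mul_nonneg hla hmu,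
    mul_nonneg (mul_nonneg hla hmu) (sq_nonneg (‖a‖ - ‖b‖))]

lemma sum_inv_sq_le (N : ℕ) : ∑ k ∈ Finset.range N, (1:ℝ) / ((k:ℝ) + 1) ^ 2 ≤ 2 := by
  have key : ∀ n : ℕ, ∑ k ∈ Finset.range n, (1:ℝ) / ((k:ℝ) + 1) ^ 2 ≤ 2 - 2 / ((n:ℝ) + 1) := by
    intro n
    induction n with
    | zero => norm_num
    | succ n ih =>
      rw [Finset.sum_range_succ]
      push_cast
      have hn : (0:ℝ) < (n:ℝ) + 1 := by positivity
      have hn2 : (0:ℝ) < (n:ℝ) + 2 := by positivity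
      have hstep : 1 / ((n:ℝ) + 1) ^ 2 ≤ 2 / ((n:ℝ) + 1) - 2 / ((n:ℝ) + 2) := by
        rw [div_sub_div _ _ (ne_of_gt hn) (ne_of_gt hn2), div_le_div_iff₀ (by positivity) (by positivity)]
        nlinarith [show (0:ℝ) ≤ (n:ℝ) from Nat.cast_nonneg n]
      have : ((n:ℝ) + 1 + 1) = (n:ℝ) + 2 := by ring
      rw [this]
      linarith
  have h2 : 0 ≤ 2 / ((N:ℝ) + 1) := by positivity
  linarith [key N]

lemma sum_Icc_id_cast (K : ℕ) : ∑ i ∈ Finset.Icc 1 K, (i:ℝ) = (K:ℝ) * ((K:ℝ) + 1) / 2 := by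
  induction K with
  | zero => simp
  | succ n ih =>
    rw [Finset.sum_Icc_succ_top (by omega)]
    push_cast
    push_cast at ih
    linarith

lemma sum_Icc_one_eq_range (f : ℕ → ℝ) (K : ℕ) :
    ∑ i ∈ Finset.Icc 1 K, f i = ∑ k ∈ Finset.range K, f (k + 1) := by
  induction K with
  | zero => simp
  | succ n ih => rw [Finset.sum_Icc_succ_top (by omega), Finset.sum_range_succ, ih]

end helpers2

end helpers



set_option maxHeartbeats 1600000 in
/-- Theorem 1, specific tolerances: in the DIAG iteration, choosing
`ε_step^{(k)} = L²D_𝒴²/(σ k³(k+1))` yields a primal-dual gap of `(x̄_K, y_K)` of at most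
`6(L²/σ)D_𝒴²/(K(K+1))`. -/
theorem stmt_11 {p q : ℕ} (Y : Set (EuclideanSpace ℝ (Fin q))) (hYne : Y.Nonempty)
    (hYcomp : IsCompact Y) (hYconv : Convex ℝ Y)
    (D : ℝ) (hD : ∀ a ∈ Y, ∀ b ∈ Y, ‖a - b‖ ≤ D)
    (g : EuclideanSpace ℝ (Fin p) × EuclideanSpace ℝ (Fin q) → ℝ) (L σ : ℝ)
    (hσ : 0 < σ) (hσL : σ ≤ L)
    (hdx : ∀ y, Differentiable ℝ fun x => g (x, y))
    (hdy : ∀ x, Differentiable ℝ fun y => g (x, y))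
    (hsmooth : ∀ x y x' y',
      ‖gradient (fun z => g (z, y)) x - gradient (fun z => g (z, y')) x'‖ ≤
          L * (‖x - x'‖ + ‖y - y'‖) ∧
      ‖gradient (fun z => g (x, z)) y - gradient (fun z => g (x', z)) y'‖ ≤
          L * (‖x - x'‖ + ‖y - y'‖))
    (hsc : ∀ y, ConvexOn ℝ Set.univ fun x => g (x, y) - σ / 2 * ‖x‖ ^ 2)
    (hconc : ∀ x, ConcaveOn ℝ Y fun y => g (x, y))
    (β : ℝ) (hβ : β = 2 * L ^ 2 / σ)
    (εstep : ℕ → ℝ)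
    (hεdef : ∀ k : ℕ, 1 ≤ k → εstep k = L ^ 2 * D ^ 2 / (σ * (k : ℝ) ^ 3 * ((k : ℝ) + 1)))
    (x : ℕ → EuclideanSpace ℝ (Fin p)) (y z w : ℕ → EuclideanSpace ℝ (Fin q))
    (hy0 : y 0 ∈ Y) (hz0 : z 0 = y 0)
    (hw : ∀ k, w k = (1 - 2 / ((k : ℝ) + 2)) • y k + (2 / ((k : ℝ) + 2)) • z k)
    (hxstep : ∀ k, g (x (k + 1), y (k + 1)) ≤
        (⨅ x' : EuclideanSpace ℝ (Fin p), g (x', y (k + 1))) + εstep (k + 1))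
    (hymem : ∀ k, y (k + 1) ∈ Y)
    (hyproj : ∀ k, ∀ v ∈ Y,
      ‖w k + β⁻¹ • gradient (fun y' => g (x (k + 1), y')) (w k) - y (k + 1)‖ ≤
        ‖w k + β⁻¹ • gradient (fun y' => g (x (k + 1), y')) (w k) - v‖)
    (hzmem : ∀ k, z (k + 1) ∈ Y)
    (hzproj : ∀ k, ∀ v ∈ Y,
      ‖z k + (((k : ℝ) + 1) / (2 * β)) • gradient (fun y' => g (x (k + 1), y')) (w k)
          - z (k + 1)‖ ≤
        ‖z k + (((k : ℝ) + 1) / (2 * β)) • gradient (fun y' => g (x (k + 1), y')) (w k) - v‖)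
    (K : ℕ) (hK : 1 ≤ K)
    (xbar : EuclideanSpace ℝ (Fin p))
    (hxbar : xbar = (2 / ((K : ℝ) * ((K : ℝ) + 1))) • ∑ i ∈ Finset.Icc 1 K, (i : ℝ) • x i) :
    ∀ ytil ∈ Y, ∀ xtil : EuclideanSpace ℝ (Fin p),
      g (xbar, ytil) - g (xtil, y K) ≤
        6 * (L ^ 2 / σ) * D ^ 2 / ((K : ℝ) * ((K : ℝ) + 1)) := by
  intro ytil hytil xtil
  have hL : 0 < L := lt_of_lt_of_le hσ hσL
  have hβpos : 0 < β := by rw [hβ]; positivity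
  have hbdd : ∀ u, BddBelow (Set.range fun x' : EuclideanSpace ℝ (Fin p) => g (x', u)) :=
    fun u => bdd_of_sc (hdx u) hσ (hsc u)
  set h : EuclideanSpace ℝ (Fin q) → ℝ :=
    fun u => ⨅ x' : EuclideanSpace ℝ (Fin p), g (x', u) with hhdef
  have h_le : ∀ u x', h u ≤ g (x', u) := fun u x' => ciInf_le (hbdd u) x'
  have hymem' : ∀ k, y k ∈ Y := by
    intro k; cases k with
    | zero => exact hy0
    | succ n => exact hymem n
  have hzmem' : ∀ k, z k ∈ Y := by
    intro k; cases k with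
    | zero => rw [hz0]; exact hy0
    | succ n => exact hzmem n
  have hwmem : ∀ k, w k ∈ Y := by
    intro k
    rw [hw k]
    have h2 : (0:ℝ) < (k:ℝ) + 2 := by positivity
    have hτ1 : 2 / ((k:ℝ) + 2) ≤ 1 := by
      rw [div_le_one h2]; linarith [show (0:ℝ) ≤ (k:ℝ) from Nat.cast_nonneg k]
    exact hYconv (hymem' k) (hzmem' k) (by linarith) (by positivity) (by ring)
  set γ : ℕ → EuclideanSpace ℝ (Fin q) :=
    fun k => gradient (fun y' => g (x (k + 1), y')) (w k) with hγdef
  set ℓ : ℕ → EuclideanSpace ℝ (Fin q) → ℝ :=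
    fun k u => g (x (k + 1), w k) + ⟪γ k, u - w k⟫ with hℓdef
  have hgradlip : ∀ k (u v : EuclideanSpace ℝ (Fin q)),
      ‖gradient (fun y' => g (x (k + 1), y')) u - gradient (fun y' => g (x (k + 1), y')) v‖
        ≤ L * ‖u - v‖ := by
    intro k u v
    have h1 := (hsmooth (x (k + 1)) u (x (k + 1)) v).2
    simpa using h1
  have hdescent : ∀ k, ℓ k (y (k + 1)) - L * ‖y (k + 1) - w k‖ ^ 2 ≤ g (x (k + 1), y (k + 1)) := by
    intro k
    have h1 := descent_le (hdy (x (k + 1))) hL.le (hgradlip k) (w k) (y (k + 1))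
    simpa [hℓdef, hγdef] using h1
  have hconcub : ∀ k, ∀ u ∈ Y, g (x (k + 1), u) ≤ ℓ k u := by
    intro k u hu
    have h1 := concave_tangent_le hYconv (hdy (x (k + 1))) (hconc (x (k + 1))) (hwmem k) hu
    simpa [hℓdef, hγdef] using h1
  have hquad : ∀ k, ∀ u ∈ Y, ⟪γ k, u - w k⟫ - β / 2 * ‖u - w k‖ ^ 2 ≤
      ⟪γ k, y (k + 1) - w k⟫ - β / 2 * ‖y (k + 1) - w k‖ ^ 2 := by
    intro k u hu
    have hpr := hyproj k u hu
    have hpr' := pow_le_pow_left₀ (norm_nonneg _) hpr 2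
    have key : ∀ v : EuclideanSpace ℝ (Fin q), ⟪γ k, v - w k⟫ - β / 2 * ‖v - w k‖ ^ 2
        = β / 2 * ‖β⁻¹ • γ k‖ ^ 2 - β / 2 * ‖w k + β⁻¹ • γ k - v‖ ^ 2 := by
      intro v
      have e1 : w k + β⁻¹ • γ k - v = (w k - v) + β⁻¹ • γ k := by abel
      rw [e1, norm_add_sq_real, real_inner_smul_right]
      have e2 : ⟪w k - v, γ k⟫ = -⟪γ k, v - w k⟫ := by
        rw [real_inner_comm, show w k - v = -(v - w k) from by abel, inner_neg_right]
      rw [e2]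
      have e3 : ‖v - w k‖ = ‖w k - v‖ := norm_sub_rev _ _
      rw [e3, norm_smul, Real.norm_eq_abs, abs_of_pos (inv_pos.mpr hβpos)]
      have hβne : β ≠ 0 := ne_of_gt hβpos
      field_simp
      ring
    rw [key u, key (y (k + 1))]
    have h3 := mul_le_mul_of_nonneg_left hpr' (show (0:ℝ) ≤ β / 2 by positivity)
    linarith
  have hzvi : ∀ k : ℕ, ∀ u ∈ Y, (((k:ℝ) + 1) / β) * ⟪γ k, u - z (k + 1)⟫ ≤
      ‖u - z k‖ ^ 2 - ‖u - z (k + 1)‖ ^ 2 - ‖z (k + 1) - z k‖ ^ 2 := by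
    intro k u hu
    have hvi := proj_vi hYconv (hzmem k) (fun v hv => hzproj k v hv) u hu
    have e1 : z k + (((k:ℝ) + 1) / (2 * β)) • γ k - z (k + 1)
        = (z k - z (k + 1)) + (((k:ℝ) + 1) / (2 * β)) • γ k := by abel
    rw [e1, inner_add_left, real_inner_smul_left] at hvi
    have e2 : ⟪z k - z (k + 1), u - z (k + 1)⟫
        = (‖z (k + 1) - z k‖ ^ 2 + ‖u - z (k + 1)‖ ^ 2 - ‖u - z k‖ ^ 2) / 2 := by
      have h3 := norm_sub_sq_real (z k - z (k + 1)) (u - z (k + 1))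
      have e4 : z k - z (k + 1) - (u - z (k + 1)) = z k - u := by abel
      rw [e4] at h3
      have e5 : ‖z k - u‖ = ‖u - z k‖ := norm_sub_rev _ _
      have e6 : ‖z k - z (k + 1)‖ = ‖z (k + 1) - z k‖ := norm_sub_rev _ _
      rw [e5, e6] at h3
      linarith
    rw [e2] at hvi
    have hβne : β ≠ 0 := ne_of_gt hβpos
    have e7 : (((k:ℝ) + 1) / β) * ⟪γ k, u - z (k + 1)⟫
        = 2 * ((((k:ℝ) + 1) / (2 * β)) * ⟪γ k, u - z (k + 1)⟫) := by
      field_simp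
    rw [e7]
    linarith
  have hkey : ∀ k : ℕ, ∀ u ∈ Y,
      (k:ℝ) * ((k:ℝ) + 1) / 2 * h (y k) + ((k:ℝ) + 1) * ℓ k u - β * ‖u - z k‖ ^ 2
          + β * ‖u - z (k + 1)‖ ^ 2 - ((k:ℝ) + 1) * ((k:ℝ) + 2) / 2 * εstep (k + 1)
        ≤ ((k:ℝ) + 1) * ((k:ℝ) + 2) / 2 * h (y (k + 1)) := by
    intro k u hu
    have hκ0 : (0:ℝ) ≤ (k:ℝ) := Nat.cast_nonneg k
    have hm : (0:ℝ) < (k:ℝ) + 1 := by linarith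
    have hn : (0:ℝ) < (k:ℝ) + 2 := by linarith
    have h1 : g (x (k + 1), y (k + 1)) - εstep (k + 1) ≤ h (y (k + 1)) := by
      have := hxstep k; linarith
    have hLβ : L ≤ β / 2 := by
      have h2 : L ≤ L ^ 2 / σ := by
        rw [le_div_iff₀ hσ]; nlinarith
      have h3 : β / 2 = L ^ 2 / σ := by rw [hβ]; ring
      linarith
    have h2 : ℓ k (y (k + 1)) - β / 2 * ‖y (k + 1) - w k‖ ^ 2 ≤ g (x (k + 1), y (k + 1)) := by
      have hd := hdescent k
      have h4 := mul_le_mul_of_nonneg_right hLβ (show (0:ℝ) ≤ ‖y (k + 1) - w k‖ ^ 2 by positivity)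
      exact le_trans (sub_le_sub_left h4 (ℓ k (y (k + 1)))) hd
    set uk := (1 - 2 / ((k:ℝ) + 2)) • y k + (2 / ((k:ℝ) + 2)) • z (k + 1) with hukdef
    have hτ0 : (0:ℝ) ≤ 2 / ((k:ℝ) + 2) := by positivity
    have hτ1 : 2 / ((k:ℝ) + 2) ≤ 1 := by rw [div_le_one hn]; linarith
    have hukY : uk ∈ Y := hYconv (hymem' k) (hzmem k) (by linarith) hτ0 (by ring)
    have h3 := hquad k uk hukY
    have e7 : uk - w k = (1 - 2 / ((k:ℝ) + 2)) • (y k - w k)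
        + (2 / ((k:ℝ) + 2)) • (z (k + 1) - w k) := by
      rw [hukdef]; module
    have e8 : uk - w k = (2 / ((k:ℝ) + 2)) • (z (k + 1) - z k) := by
      rw [hukdef, hw k]; module
    have hIuk : ⟪γ k, uk - w k⟫ = (1 - 2 / ((k:ℝ) + 2)) * ⟪γ k, y k - w k⟫
        + (2 / ((k:ℝ) + 2)) * ⟪γ k, z (k + 1) - w k⟫ := by
      rw [e7, inner_add_right, real_inner_smul_right, real_inner_smul_right]
    have hNuk : ‖uk - w k‖ ^ 2 = (2 / ((k:ℝ) + 2)) ^ 2 * ‖z (k + 1) - z k‖ ^ 2 := by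
      rw [e8, norm_smul, Real.norm_eq_abs, abs_of_nonneg hτ0]; ring
    rw [hIuk, hNuk] at h3
    have h4 : h (y k) ≤ ℓ k (y k) := le_trans (h_le (y k) (x (k + 1))) (hconcub k (y k) (hymem' k))
    have h5 : ⟪γ k, z (k + 1) - w k⟫ = ⟪γ k, u - w k⟫ + (-⟪γ k, u - z (k + 1)⟫) := by
      rw [← inner_neg_right, ← inner_add_right]
      congr 1
      abel
    have h6 := hzvi k u hu
    -- scaled versions
    have hl0 : ℓ k (y k) = g (x (k + 1), w k) + ⟪γ k, y k - w k⟫ := by rw [hℓdef]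
    have hl1 : ℓ k (y (k + 1)) = g (x (k + 1), w k) + ⟪γ k, y (k + 1) - w k⟫ := by rw [hℓdef]
    have hl2 : ℓ k u = g (x (k + 1), w k) + ⟪γ k, u - w k⟫ := by rw [hℓdef]
    have s1 : (1 - 2 / ((k:ℝ) + 2)) * (h (y k) - g (x (k + 1), w k))
        ≤ (1 - 2 / ((k:ℝ) + 2)) * ⟪γ k, y k - w k⟫ := by
      apply mul_le_mul_of_nonneg_left _ (by linarith)
      rw [hl0] at h4; linarith
    have hc5 : (0:ℝ) ≤ 2 * β / (((k:ℝ) + 2) * ((k:ℝ) + 1)) := by positivity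
    have s2 := mul_le_mul_of_nonneg_left h6 hc5
    have eq5 : 2 * β / (((k:ℝ) + 2) * ((k:ℝ) + 1)) * ((((k:ℝ) + 1) / β) * ⟪γ k, u - z (k + 1)⟫)
        = (2 / ((k:ℝ) + 2)) * ⟪γ k, u - z (k + 1)⟫ := by
      have hβne : β ≠ 0 := ne_of_gt hβpos
      field_simp
    rw [eq5] at s2
    -- combine into a6
    have h5' : (2 / ((k:ℝ) + 2)) * ⟪γ k, z (k + 1) - w k⟫
        = (2 / ((k:ℝ) + 2)) * ⟪γ k, u - w k⟫ - (2 / ((k:ℝ) + 2)) * ⟪γ k, u - z (k + 1)⟫ := by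
      rw [h5]; ring
    have a6 : g (x (k + 1), w k) + (1 - 2 / ((k:ℝ) + 2)) * (h (y k) - g (x (k + 1), w k))
        + (2 / ((k:ℝ) + 2)) * ⟪γ k, u - w k⟫
        - 2 * β / (((k:ℝ) + 2) * ((k:ℝ) + 1)) *
            (‖u - z k‖ ^ 2 - ‖u - z (k + 1)‖ ^ 2 - ‖z (k + 1) - z k‖ ^ 2)
        - β / 2 * ((2 / ((k:ℝ) + 2)) ^ 2 * ‖z (k + 1) - z k‖ ^ 2)
        - εstep (k + 1) ≤ h (y (k + 1)) := by
      rw [hl1] at h2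
      linarith [h1, h2, h3, s1, s2, h5']
    have a8 := mul_le_mul_of_nonneg_left a6 (show (0:ℝ) ≤ ((k:ℝ) + 1) * ((k:ℝ) + 2) / 2 by positivity)
    have a9 : ((k:ℝ) + 1) * ((k:ℝ) + 2) / 2 *
        (g (x (k + 1), w k) + (1 - 2 / ((k:ℝ) + 2)) * (h (y k) - g (x (k + 1), w k))
          + (2 / ((k:ℝ) + 2)) * ⟪γ k, u - w k⟫
          - 2 * β / (((k:ℝ) + 2) * ((k:ℝ) + 1)) *
              (‖u - z k‖ ^ 2 - ‖u - z (k + 1)‖ ^ 2 - ‖z (k + 1) - z k‖ ^ 2)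
          - β / 2 * ((2 / ((k:ℝ) + 2)) ^ 2 * ‖z (k + 1) - z k‖ ^ 2)
          - εstep (k + 1))
        = (k:ℝ) * ((k:ℝ) + 1) / 2 * h (y k)
          + ((k:ℝ) + 1) * (g (x (k + 1), w k) + ⟪γ k, u - w k⟫)
          - β * ‖u - z k‖ ^ 2 + β * ‖u - z (k + 1)‖ ^ 2
          + β / ((k:ℝ) + 2) * ‖z (k + 1) - z k‖ ^ 2
          - ((k:ℝ) + 1) * ((k:ℝ) + 2) / 2 * εstep (k + 1) := by
      field_simp
      ring
    rw [a9] at a8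
    have a10 : (0:ℝ) ≤ β / ((k:ℝ) + 2) * ‖z (k + 1) - z k‖ ^ 2 := by positivity
    rw [hl2]
    linarith
  have hmain : ∀ N : ℕ,
      (∑ k ∈ Finset.range N, ((k:ℝ) + 1) * ℓ k ytil) - β * ‖ytil - z 0‖ ^ 2
          + β * ‖ytil - z N‖ ^ 2
          - (∑ k ∈ Finset.range N, ((k:ℝ) + 1) * ((k:ℝ) + 2) / 2 * εstep (k + 1))
        ≤ (N:ℝ) * ((N:ℝ) + 1) / 2 * h (y N) := by
    intro N
    induction N with
    | zero => simp
    | succ n ih =>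
      have hk := hkey n ytil hytil
      rw [Finset.sum_range_succ, Finset.sum_range_succ]
      push_cast
      push_cast at ih hk
      linarith
  have herr : (∑ k ∈ Finset.range K, ((k:ℝ) + 1) * ((k:ℝ) + 2) / 2 * εstep (k + 1))
      ≤ L ^ 2 * D ^ 2 / σ := by
    have hterm : ∀ k ∈ Finset.range K, ((k:ℝ) + 1) * ((k:ℝ) + 2) / 2 * εstep (k + 1)
        = L ^ 2 * D ^ 2 / (2 * σ) * (1 / ((k:ℝ) + 1) ^ 2) := by
      intro k _
      rw [hεdef (k + 1) (by omega)]
      push_cast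
      have hb : (0:ℝ) < (k:ℝ) + 1 := by positivity
      have hb2 : (0:ℝ) < (k:ℝ) + 2 := by positivity
      field_simp
      ring
    rw [Finset.sum_congr rfl hterm, ← Finset.mul_sum]
    have hs := sum_inv_sq_le K
    have hc : (0:ℝ) ≤ L ^ 2 * D ^ 2 / (2 * σ) := by positivity
    calc L ^ 2 * D ^ 2 / (2 * σ) * ∑ k ∈ Finset.range K, (1:ℝ) / ((k:ℝ) + 1) ^ 2
        ≤ L ^ 2 * D ^ 2 / (2 * σ) * 2 := mul_le_mul_of_nonneg_left hs hc
      _ = L ^ 2 * D ^ 2 / σ := by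
          field_simp
  have hD0 : 0 ≤ D := le_trans (norm_nonneg (y 0 - y 0)) (hD (y 0) hy0 (y 0) hy0)
  have hDsq : ‖ytil - z 0‖ ^ 2 ≤ D ^ 2 := by
    have h1 : ‖ytil - z 0‖ ≤ D := hD ytil hytil (z 0) (by rw [hz0]; exact hy0)
    exact pow_le_pow_left₀ (norm_nonneg _) h1 2
  have hKpos : (0:ℝ) < (K:ℝ) := by exact_mod_cast Nat.pos_of_ne_zero (by omega)
  have hKK : (0:ℝ) < (K:ℝ) * ((K:ℝ) + 1) := by positivity
  have hconvx : ConvexOn ℝ Set.univ fun x' : EuclideanSpace ℝ (Fin p) => g (x', ytil) := by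
    have h3 : ConvexOn ℝ (Set.univ : Set (EuclideanSpace ℝ (Fin p)))
        (fun x' => σ / 2 * ‖x'‖ ^ 2) := by
      have h4 := (convexOn_normsq (F := EuclideanSpace ℝ (Fin p))).smul
        (show (0:ℝ) ≤ σ / 2 by positivity)
      simpa [smul_eq_mul] using h4
    have h2 := (hsc ytil).add h3
    have h6 : ((fun x : EuclideanSpace ℝ (Fin p) => g (x, ytil) - σ / 2 * ‖x‖ ^ 2)
        + fun x' : EuclideanSpace ℝ (Fin p) => σ / 2 * ‖x'‖ ^ 2)
        = fun x' : EuclideanSpace ℝ (Fin p) => g (x', ytil) := by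
      funext xx
      simp only [Pi.add_apply]
      ring
    rw [h6] at h2
    exact h2
  have hsumIcc := sum_Icc_id_cast K
  have hjen : g (xbar, ytil) ≤
      ∑ i ∈ Finset.Icc 1 K, (2 * (i:ℝ) / ((K:ℝ) * ((K:ℝ) + 1))) * g (x i, ytil) := by
    have hw0 : ∀ i ∈ Finset.Icc 1 K, (0:ℝ) ≤ 2 * (i:ℝ) / ((K:ℝ) * ((K:ℝ) + 1)) :=
      fun i _ => by positivity
    have hw1 : ∑ i ∈ Finset.Icc 1 K, 2 * (i:ℝ) / ((K:ℝ) * ((K:ℝ) + 1)) = 1 := by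
      have e1 : ∑ i ∈ Finset.Icc 1 K, 2 * (i:ℝ) / ((K:ℝ) * ((K:ℝ) + 1))
          = (2 / ((K:ℝ) * ((K:ℝ) + 1))) * ∑ i ∈ Finset.Icc 1 K, (i:ℝ) := by
        rw [Finset.mul_sum]
        exact Finset.sum_congr rfl fun i _ => by ring
      rw [e1, hsumIcc]
      field_simp
    have hmem : ∀ i ∈ Finset.Icc 1 K, x i ∈ (Set.univ : Set (EuclideanSpace ℝ (Fin p))) :=
      fun _ _ => trivial
    have hjj := hconvx.map_sum_le hw0 hw1 hmem
    have hxb : xbar = ∑ i ∈ Finset.Icc 1 K, (2 * (i:ℝ) / ((K:ℝ) * ((K:ℝ) + 1))) • x i := by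
      rw [hxbar, Finset.smul_sum]
      exact Finset.sum_congr rfl fun i _ => by
        rw [smul_smul]
        congr 1
        ring
    rw [hxb]
    exact hjj
  have hstep2 : ∑ i ∈ Finset.Icc 1 K, (2 * (i:ℝ) / ((K:ℝ) * ((K:ℝ) + 1))) * g (x i, ytil)
      ≤ (2 / ((K:ℝ) * ((K:ℝ) + 1))) * ∑ k ∈ Finset.range K, ((k:ℝ) + 1) * ℓ k ytil := by
    rw [sum_Icc_one_eq_range (fun i => (2 * (i:ℝ) / ((K:ℝ) * ((K:ℝ) + 1))) * g (x i, ytil)) K,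
      Finset.mul_sum]
    apply Finset.sum_le_sum
    intro k _
    have hg1 := hconcub k ytil hytil
    have hco : (0:ℝ) ≤ 2 * ((k:ℝ) + 1) / ((K:ℝ) * ((K:ℝ) + 1)) := by positivity
    calc (2 * ((k + 1 : ℕ):ℝ) / ((K:ℝ) * ((K:ℝ) + 1))) * g (x (k + 1), ytil)
        = (2 * ((k:ℝ) + 1) / ((K:ℝ) * ((K:ℝ) + 1))) * g (x (k + 1), ytil) := by push_cast; ring
      _ ≤ (2 * ((k:ℝ) + 1) / ((K:ℝ) * ((K:ℝ) + 1))) * ℓ k ytil :=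
          mul_le_mul_of_nonneg_left hg1 hco
      _ = 2 / ((K:ℝ) * ((K:ℝ) + 1)) * (((k:ℝ) + 1) * ℓ k ytil) := by ring
  have hprimal : (K:ℝ) * ((K:ℝ) + 1) / 2 * g (xbar, ytil)
      ≤ ∑ k ∈ Finset.range K, ((k:ℝ) + 1) * ℓ k ytil := by
    have h1 : g (xbar, ytil) ≤ (2 / ((K:ℝ) * ((K:ℝ) + 1)))
        * ∑ k ∈ Finset.range K, ((k:ℝ) + 1) * ℓ k ytil := le_trans hjen hstep2
    have h2 := mul_le_mul_of_nonneg_left h1 (show (0:ℝ) ≤ (K:ℝ) * ((K:ℝ) + 1) / 2 by positivity)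
    have h3 : (K:ℝ) * ((K:ℝ) + 1) / 2 * ((2 / ((K:ℝ) * ((K:ℝ) + 1)))
        * ∑ k ∈ Finset.range K, ((k:ℝ) + 1) * ℓ k ytil)
        = ∑ k ∈ Finset.range K, ((k:ℝ) + 1) * ℓ k ytil := by
      field_simp
    rw [h3] at h2
    exact h2
  have hfin1 := hmain K
  have hfin2 : h (y K) ≤ g (xtil, y K) := h_le (y K) xtil
  rw [show (6:ℝ) * (L ^ 2 / σ) * D ^ 2 / ((K:ℝ) * ((K:ℝ) + 1))
    = 6 * (L ^ 2 / σ) * D ^ 2 / ((K:ℝ) * ((K:ℝ) + 1)) from rfl]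
  rw [le_div_iff₀ hKK]
  have h9 : (0:ℝ) ≤ β * ‖ytil - z K‖ ^ 2 := by positivity
  have h10 : β * ‖ytil - z 0‖ ^ 2 ≤ β * D ^ 2 := mul_le_mul_of_nonneg_left hDsq hβpos.le
  have h11 : β * D ^ 2 = 2 * (L ^ 2 / σ) * D ^ 2 := by rw [hβ]; ring
  have h12 := mul_le_mul_of_nonneg_left hfin2
    (show (0:ℝ) ≤ (K:ℝ) * ((K:ℝ) + 1) / 2 by positivity)
  have h13 : L ^ 2 * D ^ 2 / σ = L ^ 2 / σ * D ^ 2 := by ring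
  nlinarith [hprimal, hfin1, herr, h9, h10, h12, h11, h13]
end

section
/- Let f : ℝ^p → ℝ be L-weakly convex (i.e. x ↦ f(x) + (L/2)‖x‖² is convex) and continuous, let ε > 0, and set ε̃ = ε²/(64L). If a point x satisfies f(x) < f_{1/(2L)}(x) + ε̃, where f_{1/(2L)}(x) = min_{x'}[ f(x') + L‖x − x'‖² ] is the Moreau envelope with parameter 1/(2L), then ‖∇f_{1/(2L)}(x)‖ ≤ ε, i.e. x is an ε-first-order stationary point of f. -/
open Filter Set Metric
open scoped Topology

set_option maxHeartbeats 1000000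

/-- Case 2 of the proof of Theorem 2, abstract form: if `f` is
`L`-weakly convex and continuous, `ε > 0`, `ε̃ = ε²/(64L)`, and
`f(x) < f_{1/(2L)}(x) + ε̃` where `f_{1/(2L)}(x) = min_{x'} f(x') + L‖x − x'‖²`,
then `‖∇f_{1/(2L)}(x)‖ ≤ ε`, i.e. `x` is an `ε`-FOSP of `f`. -/
theorem stmt_12 {p : ℕ} (f : EuclideanSpace ℝ (Fin p) → ℝ) (L ε : ℝ)
    (hL : 0 < L) (hε : 0 < ε)
    (hwc : ConvexOn ℝ Set.univ fun v => f v + L / 2 * ‖v‖ ^ 2)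
    (hcont : Continuous f)
    (x : EuclideanSpace ℝ (Fin p))
    (hx : f x < (⨅ x' : EuclideanSpace ℝ (Fin p), f x' + L * ‖x - x'‖ ^ 2) + ε ^ 2 / (64 * L)) :
    ‖gradient (fun v => ⨅ x' : EuclideanSpace ℝ (Fin p), f x' + L * ‖v - x'‖ ^ 2) x‖ ≤ ε := by
  classical
  rcases subsingleton_or_nontrivial (EuclideanSpace ℝ (Fin p)) with hsub | hnt
  · have h0 : gradient (fun v => ⨅ x' : EuclideanSpace ℝ (Fin p), f x' + L * ‖v - x'‖ ^ 2) x
        = 0 := Subsingleton.elim _ _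
    rw [h0, norm_zero]; positivity
  set g : EuclideanSpace ℝ (Fin p) → ℝ :=
    fun v => ⨅ x' : EuclideanSpace ℝ (Fin p), f x' + L * ‖v - x'‖ ^ 2 with hgdef
  set ψ : EuclideanSpace ℝ (Fin p) → ℝ := fun v => f v + L / 2 * ‖v‖ ^ 2 with hψdef
  have hψc : Continuous ψ := by rw [hψdef]; fun_prop
  obtain ⟨u₀, hu₀s, hu₀min'⟩ :=
    (isCompact_sphere (0 : EuclideanSpace ℝ (Fin p)) 1).exists_isMinOn
      (NormedSpace.sphere_nonempty.mpr zero_le_one) hψc.continuousOn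
  have hu₀min : ∀ y ∈ sphere (0 : EuclideanSpace ℝ (Fin p)) 1, ψ u₀ ≤ ψ y :=
    fun y hy => hu₀min' hy
  obtain ⟨z₁, hz₁b, hz₁min'⟩ :=
    (isCompact_closedBall (0 : EuclideanSpace ℝ (Fin p)) 1).exists_isMinOn
      ⟨0, mem_closedBall_self zero_le_one⟩ hψc.continuousOn
  have hz₁min : ∀ y ∈ closedBall (0 : EuclideanSpace ℝ (Fin p)) 1, ψ z₁ ≤ ψ y :=
    fun y hy => hz₁min' hy
  set C : ℝ := max 0 (ψ 0 - ψ u₀) with hCdef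
  have hC0 : 0 ≤ C := le_max_left _ _
  have hCge : ψ 0 - ψ u₀ ≤ C := le_max_right _ _
  have hm₁ : ψ z₁ ≤ ψ 0 := hz₁min 0 (mem_closedBall_self zero_le_one)
  -- linear lower bound on ψ
  have hlb : ∀ v, ψ z₁ - C * ‖v‖ ≤ ψ v := by
    intro v
    rcases le_or_gt ‖v‖ 1 with h1 | h1
    · have h2 : ψ z₁ ≤ ψ v := hz₁min v (mem_closedBall_zero_iff.mpr h1)
      nlinarith [norm_nonneg v]
    · have hrpos : (0:ℝ) < ‖v‖ := by linarith
      have hun : ‖(‖v‖⁻¹ • v)‖ = 1 := by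
        rw [norm_smul, Real.norm_eq_abs, abs_of_pos (inv_pos.mpr hrpos)]
        field_simp
      have hconv := hwc.2 (Set.mem_univ (0 : EuclideanSpace ℝ (Fin p))) (Set.mem_univ v)
        (show (0:ℝ) ≤ 1 - ‖v‖⁻¹ by
          nlinarith [mul_inv_cancel₀ hrpos.ne', mul_pos (sub_pos.mpr h1) (inv_pos.mpr hrpos)])
        (show (0:ℝ) ≤ ‖v‖⁻¹ by positivity) (by ring)
      rw [smul_zero, zero_add] at hconv
      have hu0 : ψ u₀ ≤ ψ (‖v‖⁻¹ • v) :=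
        hu₀min _ (by rw [mem_sphere_zero_iff_norm]; exact hun)
      have hconv' : ψ u₀ ≤ (1 - ‖v‖⁻¹) * ψ 0 + ‖v‖⁻¹ * ψ v := by
        simpa [smul_eq_mul] using hu0.trans hconv
      have hexp : ‖v‖ * ((1 - ‖v‖⁻¹) * ψ 0 + ‖v‖⁻¹ * ψ v) = (‖v‖ - 1) * ψ 0 + ψ v := by
        field_simp
      have hmul := mul_le_mul_of_nonneg_left hconv' hrpos.le
      rw [hexp] at hmul
      have hmul2 := mul_le_mul_of_nonneg_left hCge hrpos.le
      clear_value ψ C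
      nlinarith [hmul, hmul2, hm₁, hrpos]
  -- lower quadratic bound on the objective, for every center v
  have hlow : ∀ v x', ψ z₁ + L * ‖v‖^2 - (C + 2*L*‖v‖) * ‖x'‖ + L/2 * ‖x'‖^2
      ≤ f x' + L * ‖v - x'‖ ^ 2 := by
    intro v x'
    have h1 := hlb x'
    have h2 : |‖x'‖ - ‖v‖| ≤ ‖v - x'‖ := by
      rw [norm_sub_rev]; exact abs_norm_sub_norm_le _ _
    have h3 := abs_le.mp h2
    have h4 : (‖x'‖ - ‖v‖)^2 ≤ ‖v - x'‖^2 := sq_le_sq' h3.1 h3.2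
    have h5 : f x' = ψ x' - L/2 * ‖x'‖^2 := by rw [hψdef]; ring
    clear_value ψ C
    nlinarith [h1, h5, mul_le_mul_of_nonneg_left h4 hL.le, norm_nonneg x', norm_nonneg v,
      norm_nonneg (v - x')]
  have hphibd : ∀ v x',
      ψ z₁ + L * ‖v‖^2 - (C + 2*L*‖v‖)^2/(2*L) ≤ f x' + L * ‖v - x'‖ ^ 2 := by
    intro v x'
    have h1 := hlow v x'
    have hQ : 0 ≤ (L * ‖x'‖ - (C + 2*L*‖v‖))^2 := sq_nonneg _
    have h2 : (C + 2*L*‖v‖)^2/(2*L) * (2*L) = (C + 2*L*‖v‖)^2 := by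
      field_simp
    nlinarith [h1, hQ, h2, hL]
  have hbdd : ∀ v, BddBelow (Set.range fun x' : EuclideanSpace ℝ (Fin p) =>
      f x' + L * ‖v - x'‖ ^ 2) := by
    intro v
    refine ⟨ψ z₁ + L * ‖v‖^2 - (C + 2*L*‖v‖)^2/(2*L), ?_⟩
    rintro y ⟨x', rfl⟩
    exact hphibd v x'
  -- existence of a minimizer for the center x
  have hφcont : Continuous (fun x' : EuclideanSpace ℝ (Fin p) =>
      f x' + L * ‖x - x'‖ ^ 2) := by fun_prop
  have hq : Tendsto (fun r : ℝ => ψ z₁ + L * ‖x‖^2 - (C + 2*L*‖x‖) * r + L/2 * r^2)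
      atTop atTop := by
    have h1 : Tendsto (fun r : ℝ => L/2 * r - (C + 2*L*‖x‖)) atTop atTop :=
      tendsto_atTop_add_const_right _ _ (tendsto_id.const_mul_atTop (by positivity))
    have h2 : Tendsto (fun r : ℝ => r * (L/2 * r - (C + 2*L*‖x‖))) atTop atTop :=
      Tendsto.atTop_mul_atTop₀ tendsto_id h1
    have h3 := tendsto_atTop_add_const_left _ (ψ z₁ + L * ‖x‖^2) h2
    refine h3.congr (fun r => by ring)
  have hcoer : Tendsto (fun x' : EuclideanSpace ℝ (Fin p) => f x' + L * ‖x - x'‖ ^ 2)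
      (cocompact _) atTop := by
    refine tendsto_atTop_mono (fun x' => hlow x x') (hq.comp tendsto_norm_cocompact_atTop)
  obtain ⟨xh, hxh⟩ := hφcont.exists_forall_le hcoer
  have hgx : g x = f xh + L * ‖x - xh‖ ^ 2 :=
    le_antisymm (ciInf_le (hbdd x) xh) (le_ciInf hxh)
  have hxg : f x < g x + ε ^ 2 / (64 * L) := hx
  -- strong convexity gap : midpoint argument
  have hkey : g x + L/4 * ‖x - xh‖^2 ≤ f x := by
    set m : EuclideanSpace ℝ (Fin p) := (2⁻¹ : ℝ) • x + (2⁻¹ : ℝ) • xh with hmdef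
    have hgm : g x ≤ f m + L * ‖x - m‖^2 := ciInf_le (hbdd x) m
    have hconv := hwc.2 (Set.mem_univ x) (Set.mem_univ xh)
      (show (0:ℝ) ≤ 2⁻¹ by norm_num) (show (0:ℝ) ≤ 2⁻¹ by norm_num)
      (show (2⁻¹:ℝ) + 2⁻¹ = 1 by norm_num)
    have hconv' : f m + L/2 * ‖m‖^2 ≤
        2⁻¹ * (f x + L/2 * ‖x‖^2) + 2⁻¹ * (f xh + L/2 * ‖xh‖^2) := by
      simpa [smul_eq_mul, hmdef] using hconv
    have hxm : x - m = (2⁻¹ : ℝ) • (x - xh) := by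
      rw [hmdef]; module
    have hm2 : m = (2⁻¹ : ℝ) • (x + xh) := by rw [hmdef]; module
    have hn1 : ‖x - m‖^2 = 4⁻¹ * ‖x - xh‖^2 := by
      rw [hxm, norm_smul]; norm_num; ring
    have hn2 : ‖m‖^2 = 4⁻¹ * ‖x + xh‖^2 := by
      rw [hm2, norm_smul]; norm_num; ring
    have hpar := parallelogram_law_with_norm ℝ x xh
    have hpar' : ‖x + xh‖^2 + ‖x - xh‖^2 = 2*‖x‖^2 + 2*‖xh‖^2 := by
      nlinarith [hpar]
    have hparL : L * (‖x + xh‖^2 + ‖x - xh‖^2) = L * (2*‖x‖^2 + 2*‖xh‖^2) := by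
      rw [hpar']
    rw [hn1] at hgm
    rw [hn2] at hconv'
    clear_value ψ C g
    nlinarith [hgm, hconv', hgx, hparL]
  -- quadratic upper bound on the envelope at x
  have hub : ∀ u, g (x + u) ≤ g x + 2*L*(inner ℝ (x - xh) u : ℝ) + L*‖u‖^2 := by
    intro u
    have h1 : g (x + u) ≤ f xh + L * ‖x + u - xh‖^2 := ciInf_le (hbdd (x+u)) xh
    have h2 : x + u - xh = (x - xh) + u := by abel
    rw [h2, norm_add_sq_real] at h1
    have hfxh : f xh = g x - L * ‖x - xh‖^2 := by
      clear_value ψ C g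
      linarith [hgx]
    clear_value ψ C g
    nlinarith [h1, hfxh]
  clear_value ψ C g
  by_cases hdiff : DifferentiableAt ℝ g x
  swap
  · rw [gradient_eq_zero_of_not_differentiableAt hdiff, norm_zero]; positivity
  have hgrad := hdiff.hasGradientAt
  set D := gradient g x with hDdef
  have hDle : ∀ w, (inner ℝ D w : ℝ) ≤ 2*L*(inner ℝ (x - xh) w : ℝ) := by
    intro w
    have hline : HasDerivAt (fun t : ℝ => x + t • w) w 0 := by
      simpa using ((hasDerivAt_id (0:ℝ)).smul_const w).const_add x
    have hfd : HasFDerivAt g (InnerProductSpace.toDual ℝ _ D) x :=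
      hasGradientAt_iff_hasFDerivAt.mp hgrad
    have hfd' : HasFDerivAt g (InnerProductSpace.toDual ℝ _ D)
        ((fun t : ℝ => x + t • w) 0) := by simpa using hfd
    have hcomp : HasDerivAt (fun t : ℝ => g (x + t • w)) ((inner ℝ D w : ℝ)) 0 := by
      have hc0 := hfd'.comp_hasDerivAt 0 hline
      simp only [InnerProductSpace.toDual_apply_apply] at hc0
      exact hc0
    rw [hasDerivAt_iff_tendsto_slope] at hcomp
    have hmono : Tendsto (slope (fun t : ℝ => g (x + t • w)) 0) (𝓝[>] 0)
        (𝓝 (inner ℝ D w : ℝ)) :=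
      hcomp.mono_left (nhdsWithin_mono 0 (fun t ht => Set.mem_compl_singleton_iff.mpr
        (ne_of_gt ht)))
    have hlim2 : Tendsto (fun t : ℝ => 2*L*(inner ℝ (x-xh) w : ℝ) + L*t*‖w‖^2) (𝓝[>] 0)
        (𝓝 (2*L*(inner ℝ (x-xh) w : ℝ))) := by
      have hc : Continuous (fun t : ℝ => 2*L*(inner ℝ (x-xh) w : ℝ) + L*t*‖w‖^2) := by
        fun_prop
      have h := tendsto_nhdsWithin_of_tendsto_nhds (s := Set.Ioi (0:ℝ)) (hc.tendsto 0)
      simpa using h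
    refine le_of_tendsto_of_tendsto hmono hlim2 ?_
    filter_upwards [eventually_mem_nhdsWithin] with t ht
    have ht0 : (0:ℝ) < t := ht
    have h4 := hub (t • w)
    have h5 : (inner ℝ (x - xh) (t • w) : ℝ) = t * (inner ℝ (x-xh) w : ℝ) :=
      real_inner_smul_right _ _ _
    have h6 : ‖t • w‖^2 = t^2*‖w‖^2 := by
      rw [norm_smul, Real.norm_eq_abs, mul_pow, sq_abs]
    rw [h5, h6] at h4
    have hslope : slope (fun t : ℝ => g (x + t • w)) 0 t
        = (g (x + t • w) - g x) / t := by
      rw [slope_def_field]; simp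
    rw [hslope, div_le_iff₀ ht0]
    nlinarith [h4]
  have hDeq : D = (2*L) • (x - xh) := by
    have h1 : ∀ w, (inner ℝ (D - (2*L)•(x-xh)) w : ℝ) ≤ 0 := by
      intro w
      have h := hDle w
      rw [inner_sub_left, real_inner_smul_left]
      linarith
    have h2 := h1 (D - (2*L)•(x-xh))
    have h3 := h1 (-(D - (2*L)•(x-xh)))
    rw [inner_neg_right] at h3
    have h4 : (inner ℝ (D - (2*L)•(x-xh)) (D - (2*L)•(x-xh)) : ℝ) = 0 :=
      le_antisymm h2 (by linarith)
    exact sub_eq_zero.mp (inner_self_eq_zero.mp h4)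
  rw [hDeq, norm_smul, Real.norm_eq_abs, abs_of_pos (by positivity : (0:ℝ) < 2*L)]
  have hd2 : L/4 * ‖x - xh‖^2 < ε^2/(64*L) := by linarith
  have hfin : (2*L*‖x - xh‖)^2 < ε^2 := by
    have hq2 : (0:ℝ) < ε^2/4 := by positivity
    calc (2*L*‖x - xh‖)^2 = (16*L)*(L/4 * ‖x - xh‖^2) := by ring
      _ < (16*L)*(ε^2/(64*L)) := by
          exact mul_lt_mul_of_pos_left hd2 (by positivity)
      _ = ε^2/4 := by field_simp; ring
      _ < ε^2 := by linarith
  calc 2*L*‖x - xh‖ ≤ |2*L*‖x - xh‖| := le_abs_self _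
    _ ≤ ε := by
        nlinarith [abs_nonneg (2*L*‖x - xh‖), sq_abs (2*L*‖x - xh‖), hε]
end

section
/- Let f : ℝ^p → ℝ be L-weakly convex (i.e. x ↦ f(x) + (L/2)‖x‖² is convex) and continuous, let ε̃ > 0, and suppose x_k satisfies f(x_k) < min_{x'}[ f(x') + L‖x_k − x'‖² ] + ε̃. Then for every x̃ ∈ ℝ^p with ‖x̃ − x_k‖ ≥ 4√(ε̃/L), one has f(x̃) + L‖x̃ − x_k‖² ≥ f(x_k) + ε̃. Consequently, the minimum of x' ↦ f(x') + L‖x_k − x'‖² is attained inside the ball {x' : ‖x' − x_k‖ ≤ 4√(ε̃/L)}. -/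
section aux
variable {p : ℕ}
local notation "E" => EuclideanSpace ℝ (Fin p)

/-- auxiliary: an affine function of the form `c - L⟪xk, ·⟫` is convex. -/
lemma aux_affine_convex (xk : E) (L c : ℝ) :
    ConvexOn ℝ (Set.univ : Set E) (fun v => c - L * (inner ℝ xk v : ℝ)) := by
  refine ⟨convex_univ, fun x _ y _ a b ha hb hab => le_of_eq ?_⟩
  simp only [inner_add_right, real_inner_smul_right, smul_eq_mul]
  linear_combination (-c) * hab

lemma aux_h_convex (f : E → ℝ) (L : ℝ) (xk : E)
    (hwc : ConvexOn ℝ Set.univ fun v => f v + L / 2 * ‖v‖ ^ 2) :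
    ConvexOn ℝ (Set.univ : Set E) (fun v => f v + L / 2 * ‖xk - v‖ ^ 2) := by
  have heq : (fun v : E => f v + L / 2 * ‖xk - v‖ ^ 2) =
      fun v => (f v + L / 2 * ‖v‖ ^ 2) + (L / 2 * ‖xk‖ ^ 2 - L * (inner ℝ xk v : ℝ)) := by
    funext v
    have h1 : ‖xk - v‖ ^ 2 = ‖xk‖ ^ 2 - 2 * (inner ℝ xk v : ℝ) + ‖v‖ ^ 2 :=
      norm_sub_sq_real xk v
    rw [h1]; ring
  rw [heq]
  exact hwc.add (aux_affine_convex xk L _)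

end aux

section aux2
variable {p : ℕ}
local notation "E" => EuclideanSpace ℝ (Fin p)

/-- auxiliary: the strongly convex objective is bounded below. -/
lemma aux_bddBelow (f : E → ℝ) (L : ℝ) (xk : E) (hL : 0 < L)
    (hwc : ConvexOn ℝ Set.univ fun v => f v + L / 2 * ‖v‖ ^ 2)
    (hcont : Continuous f) :
    BddBelow (Set.range fun x' : E => f x' + L * ‖xk - x'‖ ^ 2) := by
  obtain ⟨h, hh⟩ : ∃ h : E → ℝ, ∀ v, h v = f v + L / 2 * ‖xk - v‖ ^ 2 :=
    ⟨_, fun _ => rfl⟩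
  have hhconv : ConvexOn ℝ (Set.univ : Set E) h := by
    have := aux_h_convex f L xk hwc
    convert this using 1
    funext v; exact hh v
  have hhcont : Continuous h := by
    have : h = fun v => f v + L / 2 * ‖xk - v‖ ^ 2 := funext hh
    rw [this]; fun_prop
  obtain ⟨w0, hw0mem, hw0⟩ := (isCompact_closedBall xk 1).exists_isMinOn
    ⟨xk, Metric.mem_closedBall_self zero_le_one⟩ hhcont.continuousOn
  obtain ⟨c, hcmin⟩ : ∃ c : ℝ, ∀ y ∈ Metric.closedBall xk 1, c ≤ h y :=
    ⟨h w0, fun y hy => hw0 hy⟩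
  obtain ⟨a, ha⟩ : ∃ a : ℝ, a = h xk := ⟨h xk, rfl⟩
  obtain ⟨D1, hD11, hD12⟩ : ∃ D1 : ℝ, 0 ≤ D1 ∧ -D1 ≤ c := ⟨|c|, abs_nonneg c, neg_abs_le c⟩
  obtain ⟨D2, hD21, hD22, hD23⟩ : ∃ D2 : ℝ, 0 ≤ D2 ∧ -D2 ≤ a ∧ a ≤ D2 :=
    ⟨|a|, abs_nonneg a, neg_abs_le a, le_abs_self a⟩
  obtain ⟨D, hD⟩ : ∃ D : ℝ, D = D1 + D2 := ⟨_, rfl⟩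
  have hD1 : 0 ≤ D := by linarith
  refine ⟨min c (-(D ^ 2) / (2 * L)), ?_⟩
  rintro _ ⟨z, rfl⟩
  simp only []
  have hgz : f z + L * ‖xk - z‖ ^ 2 = h z + L / 2 * ‖xk - z‖ ^ 2 := by
    rw [hh z]; ring
  rw [hgz]
  obtain ⟨s, hs, hs0⟩ : ∃ s : ℝ, s = ‖xk - z‖ ∧ 0 ≤ s := ⟨‖xk - z‖, rfl, norm_nonneg _⟩
  rw [← hs]
  by_cases hcase : s ≤ 1
  · -- z in the unit ball
    have hz : z ∈ Metric.closedBall xk 1 := by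
      rw [Metric.mem_closedBall, dist_eq_norm, norm_sub_rev, ← hs]
      exact hcase
    have h1 : c ≤ h z := hcmin z hz
    have h2 : min c (-(D ^ 2) / (2 * L)) ≤ c := min_le_left _ _
    have h3 : (0:ℝ) ≤ L / 2 * s ^ 2 := by positivity
    linarith
  · push_neg at hcase
    have hspos : 0 < s := lt_trans zero_lt_one hcase
    obtain ⟨w, hw⟩ : ∃ w : E, w = xk + s⁻¹ • (z - xk) := ⟨_, rfl⟩
    have hweq : w = (1 - s⁻¹) • xk + s⁻¹ • z := by
      rw [hw]; module
    have hnormzk : ‖z - xk‖ = s := by rw [norm_sub_rev, ← hs]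
    have hwball : w ∈ Metric.closedBall xk 1 := by
      have h1 : w - xk = s⁻¹ • (z - xk) := by rw [hw]; abel
      rw [Metric.mem_closedBall, dist_eq_norm, h1, norm_smul, Real.norm_eq_abs,
        abs_of_pos (inv_pos.mpr hspos), hnormzk, inv_mul_cancel₀ (ne_of_gt hspos)]
    have hcw : c ≤ h w := hcmin w hwball
    have hsinv0 : (0:ℝ) ≤ s⁻¹ := le_of_lt (inv_pos.mpr hspos)
    have hconvw : h w ≤ (1 - s⁻¹) * h xk + s⁻¹ * h z := by
      have h0 := hhconv.2 (Set.mem_univ xk) (Set.mem_univ z)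
        (show (0:ℝ) ≤ 1 - s⁻¹ by
          simp only [sub_nonneg]; exact inv_le_one_of_one_le₀ (le_of_lt hcase)) hsinv0
        (show (1 - s⁻¹) + s⁻¹ = 1 by ring)
      simp only [smul_eq_mul] at h0
      rw [hweq]
      exact h0
    have hlow : s * c - (s - 1) * a ≤ h z := by
      have h2 : s * h w ≤ s * ((1 - s⁻¹) * a + s⁻¹ * h z) := by
        rw [ha]
        exact mul_le_mul_of_nonneg_left hconvw hs0
      have h3 : s * ((1 - s⁻¹) * a + s⁻¹ * h z) = (s - 1) * a + h z := by
        field_simp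
      have h4 : s * c ≤ s * h w := mul_le_mul_of_nonneg_left hcw hs0
      linarith
    have hca : -(s * D) ≤ s * c - (s - 1) * a := by
      have e1 : s * (-D1) ≤ s * c := mul_le_mul_of_nonneg_left hD12 hs0
      have e2 : (s - 1) * a ≤ (s - 1) * D2 :=
        mul_le_mul_of_nonneg_left hD23 (by linarith)
      have e3 : (s - 1) * D2 ≤ s * D2 := by nlinarith
      rw [hD]
      nlinarith
    have hquad : -(D ^ 2) / (2 * L) ≤ L / 2 * s ^ 2 - s * D := by
      rw [div_le_iff₀ (by positivity : (0:ℝ) < 2 * L)]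
      nlinarith [sq_nonneg (L * s - D)]
    have h5 : min c (-(D ^ 2) / (2 * L)) ≤ -(D ^ 2) / (2 * L) := min_le_right _ _
    linarith

end aux2


/-- Eq. (15) in the paper: if `f` is `L`-weakly convex and continuous,
`ε̃ > 0`, and `f(x_k) < min_{x'}[f(x') + L‖x_k − x'‖²] + ε̃`, then every `x̃` with
`‖x̃ − x_k‖ ≥ 4√(ε̃/L)` satisfies `f(x̃) + L‖x̃ − x_k‖² ≥ f(x_k) + ε̃`; consequently the
minimum of `x' ↦ f(x') + L‖x_k − x'‖²` is attained inside the ball of radius `4√(ε̃/L)`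
around `x_k`. -/
theorem stmt_14 {p : ℕ} (f : EuclideanSpace ℝ (Fin p) → ℝ) (L εt : ℝ)
    (hL : 0 < L) (hεt : 0 < εt)
    (hwc : ConvexOn ℝ Set.univ fun v => f v + L / 2 * ‖v‖ ^ 2)
    (hcont : Continuous f)
    (xk : EuclideanSpace ℝ (Fin p))
    (hx : f xk < (⨅ x' : EuclideanSpace ℝ (Fin p), f x' + L * ‖xk - x'‖ ^ 2) + εt) :
    (∀ xtil : EuclideanSpace ℝ (Fin p), 4 * Real.sqrt (εt / L) ≤ ‖xtil - xk‖ →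
        f xk + εt ≤ f xtil + L * ‖xtil - xk‖ ^ 2) ∧
    (∃ x' : EuclideanSpace ℝ (Fin p), ‖x' - xk‖ ≤ 4 * Real.sqrt (εt / L) ∧
        ∀ z, f x' + L * ‖xk - x'‖ ^ 2 ≤ f z + L * ‖xk - z‖ ^ 2) := by
  have hB := aux_bddBelow f L xk hL hwc hcont
  have part1 : ∀ xtil : EuclideanSpace ℝ (Fin p), 4 * Real.sqrt (εt / L) ≤ ‖xtil - xk‖ →
      f xk + εt ≤ f xtil + L * ‖xtil - xk‖ ^ 2 := by
    intro xt hxt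
    obtain ⟨r, hr, hr0⟩ : ∃ r : ℝ, r = ‖xt - xk‖ ∧ 0 ≤ r := ⟨_, rfl, norm_nonneg _⟩
    have hr2 : 16 * (εt / L) ≤ r ^ 2 := by
      have h0 : 0 ≤ Real.sqrt (εt / L) := Real.sqrt_nonneg _
      have h1 : Real.sqrt (εt / L) ^ 2 = εt / L :=
        Real.sq_sqrt (le_of_lt (div_pos hεt hL))
      rw [← hr] at hxt
      nlinarith
    have hLr2 : 16 * εt ≤ L * r ^ 2 := by
      calc 16 * εt = 16 * (εt / L) * L := by field_simp
        _ ≤ r ^ 2 * L := by nlinarith [div_pos hεt hL]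
        _ = L * r ^ 2 := by ring
    -- the midpoint
    obtain ⟨y, hy⟩ : ∃ y : EuclideanSpace ℝ (Fin p),
        y = (1/2 : ℝ) • xk + (1/2 : ℝ) • xt := ⟨_, rfl⟩
    -- value of f at the midpoint via weak convexity
    have hcv := hwc.2 (Set.mem_univ xk) (Set.mem_univ xt)
      (show (0:ℝ) ≤ 1/2 by norm_num) (show (0:ℝ) ≤ 1/2 by norm_num)
      (show (1:ℝ)/2 + 1/2 = 1 by norm_num)
    simp only [smul_eq_mul] at hcv
    rw [← hy] at hcv
    -- norm identities
    have hid1 : ‖xk - y‖ ^ 2 = r ^ 2 / 4 := by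
      have h1 : xk - y = (1/2 : ℝ) • (xk - xt) := by rw [hy]; module
      rw [h1, norm_smul, Real.norm_eq_abs, mul_pow, sq_abs]
      have h2 : ‖xk - xt‖ = r := by rw [norm_sub_rev, ← hr]
      rw [h2]; ring
    have hid2 : ‖y‖ ^ 2 = ‖xk‖ ^ 2 / 2 + ‖xt‖ ^ 2 / 2 - r ^ 2 / 4 := by
      have hpar := parallelogram_law_with_norm ℝ ((1/2 : ℝ) • xk + (1/2 : ℝ) • xt)
        ((1/2 : ℝ) • xk - (1/2 : ℝ) • xt)
      have e1 : (1/2 : ℝ) • xk + (1/2 : ℝ) • xt + ((1/2 : ℝ) • xk - (1/2 : ℝ) • xt)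
          = xk := by module
      have e2 : (1/2 : ℝ) • xk + (1/2 : ℝ) • xt - ((1/2 : ℝ) • xk - (1/2 : ℝ) • xt)
          = xt := by module
      rw [e1, e2] at hpar
      have e3 : (1/2 : ℝ) • xk - (1/2 : ℝ) • xt = (1/2 : ℝ) • (xk - xt) := by module
      have e4 : ‖(1/2 : ℝ) • xk - (1/2 : ℝ) • xt‖ ^ 2 = r ^ 2 / 4 := by
        rw [e3, norm_smul, Real.norm_eq_abs, mul_pow, sq_abs]
        have h2 : ‖xk - xt‖ = r := by rw [norm_sub_rev, ← hr]
        rw [h2]; ring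
      rw [hy]
      nlinarith [hpar, e4]
    -- the infimum is at most the value at y
    have hm : (⨅ x' : EuclideanSpace ℝ (Fin p), f x' + L * ‖xk - x'‖ ^ 2)
        ≤ f y + L * ‖xk - y‖ ^ 2 := ciInf_le hB y
    rw [← hr]
    -- abstract the norms into real variables
    obtain ⟨nk, hnk⟩ : ∃ t : ℝ, t = ‖xk‖ ^ 2 := ⟨_, rfl⟩
    obtain ⟨nt, hnt⟩ : ∃ t : ℝ, t = ‖xt‖ ^ 2 := ⟨_, rfl⟩
    obtain ⟨ny, hny⟩ : ∃ t : ℝ, t = ‖y‖ ^ 2 := ⟨_, rfl⟩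
    obtain ⟨nky, hnky⟩ : ∃ t : ℝ, t = ‖xk - y‖ ^ 2 := ⟨_, rfl⟩
    rw [← hnk, ← hnt, ← hny] at hcv
    rw [← hnky] at hid1 hm
    rw [← hnk, ← hnt, ← hny] at hid2
    have e5 : L * nky = L * (r ^ 2 / 4) := by rw [hid1]
    have e6 : L / 2 * ny = L / 2 * (nk / 2 + nt / 2 - r ^ 2 / 4) := by rw [hid2]
    linarith [hx, hm, hcv, e5, e6, hLr2]
  refine ⟨part1, ?_⟩
  -- part 2 : minimum attained in the ball
  obtain ⟨R, hR, hR0⟩ : ∃ R : ℝ, R = 4 * Real.sqrt (εt / L) ∧ 0 ≤ R :=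
    ⟨_, rfl, by positivity⟩
  have hgcont : Continuous fun x' : EuclideanSpace ℝ (Fin p) =>
      f x' + L * ‖xk - x'‖ ^ 2 := by fun_prop
  obtain ⟨x', hx'mem, hx'min⟩ := (isCompact_closedBall xk R).exists_isMinOn
    ⟨xk, Metric.mem_closedBall_self hR0⟩ hgcont.continuousOn
  refine ⟨x', ?_, ?_⟩
  · rw [← hR, ← dist_eq_norm]
    exact hx'mem
  · intro z
    by_cases hz : z ∈ Metric.closedBall xk R
    · exact hx'min hz
    · have hzfar : 4 * Real.sqrt (εt / L) ≤ ‖z - xk‖ := by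
        rw [Metric.mem_closedBall, not_le, dist_eq_norm] at hz
        rw [← hR]
        exact le_of_lt hz
      have h1 := part1 z hzfar
      have h2 : f x' + L * ‖xk - x'‖ ^ 2 ≤ f xk + L * ‖xk - xk‖ ^ 2 :=
        hx'min (Metric.mem_closedBall_self hR0)
      have h3 : ‖xk - xk‖ = 0 := by simp
      have h4 : ‖z - xk‖ = ‖xk - z‖ := norm_sub_rev z xk
      rw [h3] at h2
      rw [h4] at h1
      have h5 : L * (0:ℝ) ^ 2 = 0 := by ring
      rw [h5] at h2
      linarith
end

section
/- Let 𝒴 ⊆ ℝ^q be a nonempty compact convex set, let g : ℝ^p × 𝒴 → ℝ be L-smooth with g(x, ·) concave for every x, and let f(x) = max_{y ∈ 𝒴} g(x, y) be bounded below by f* > −∞. Fix ε > 0 and set ε̃ = ε²/(64L). Suppose a sequence (x_k)_{k ≥ 0} starting from x₀ satisfies, for every k, the proximal accuracy condition f(x_{k+1}) + L‖x_{k+1} − x_k‖² ≤ min_{x ∈ ℝ^p} [ f(x) + L‖x − x_k‖² ] + ε̃/4. Then there exists an index k ≤ ⌈4⁴ L (f(x₀) − f*) / (3ε²)⌉ at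 which the termination condition f(x_k) − 3ε̃/4 ≤ f(x_{k+1}) + L‖x_{k+1} − x_k‖² holds, and for any such k the point x_k is an ε-FOSP of f, i.e. ‖∇f_{1/(2L)}(x_k)‖ ≤ ε. -/
open scoped RealInnerProductSpace

section helpers
variable {E : Type*} [NormedAddCommGroup E] [InnerProductSpace ℝ E] [CompleteSpace E]

lemma line_hasDerivAt_s17 (G : E → ℝ) (c d : E) (t : ℝ) (hG : DifferentiableAt ℝ G (c + t • d)) :
    HasDerivAt (fun s : ℝ => G (c + s • d)) (⟪gradient G (c + t • d), d⟫) t := by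
  have hline : HasDerivAt (fun s : ℝ => c + s • d) d t := by
    simpa using ((hasDerivAt_id t).smul_const d).const_add c
  have := hG.hasGradientAt.hasFDerivAt.comp_hasDerivAt t hline
  exact this

omit [CompleteSpace E] in
lemma norm_line_sq (c d : E) (t : ℝ) :
    ‖c + t • d‖ ^ 2 = ‖c‖ ^ 2 + (2 * ⟪c, d⟫) * t + ‖d‖ ^ 2 * t ^ 2 := by
  rw [@norm_add_sq_real, real_inner_smul_right, norm_smul]
  simp [mul_pow, Real.norm_eq_abs, sq_abs]
  ring

lemma quad_hasDerivAt (a b c t : ℝ) :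
    HasDerivAt (fun s : ℝ => a + b * s + c * s ^ 2) (b + 2 * c * t) t := by
  have h1 : HasDerivAt (fun s : ℝ => a) 0 t := hasDerivAt_const t a
  have h2 : HasDerivAt (fun s : ℝ => b * s) b t := by
    simpa using (hasDerivAt_id t).const_mul b
  have h3 : HasDerivAt (fun s : ℝ => c * s ^ 2) (c * (2 * t)) t := by
    simpa using (hasDerivAt_pow 2 t).const_mul c
  have := (h1.add h2).add h3
  have e : b + 2 * c * t = 0 + b + c * (2 * t) := by ring
  rw [e]; exact this

lemma weak_convex_of_lip_grad (G : E → ℝ) (L : ℝ) (hd : Differentiable ℝ G)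
    (hlip : ∀ a b : E, ‖gradient G a - gradient G b‖ ≤ L * ‖a - b‖) :
    ConvexOn ℝ Set.univ (fun v => G v + (L / 2) * ‖v‖ ^ 2) := by
  constructor
  · exact convex_univ
  intro x₁ _ x₂ _ a b ha hb hab
  set d := x₂ - x₁ with hd_def
  set q : ℝ → ℝ := fun s => G (x₁ + s • d) + (L / 2) * ‖x₁ + s • d‖ ^ 2 with hq_def
  have hc : ∀ s t : ℝ, (x₁ + t • d) - (x₁ + s • d) = (t - s) • d := by
    intro s t; rw [add_sub_add_left_eq_sub, ← sub_smul]
  have hq' : ∀ t : ℝ, HasDerivAt q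
      (⟪gradient G (x₁ + t • d), d⟫ + (L / 2) * (2 * ⟪x₁, d⟫ + 2 * ‖d‖ ^ 2 * t)) t := by
    intro t
    have h1 := line_hasDerivAt_s17 G x₁ d t (hd _)
    have h2 : HasDerivAt (fun s : ℝ => (L / 2) * ‖x₁ + s • d‖ ^ 2)
        ((L / 2) * (2 * ⟪x₁, d⟫ + 2 * ‖d‖ ^ 2 * t)) t := by
      have hpoly := (quad_hasDerivAt (‖x₁‖ ^ 2) (2 * ⟪x₁, d⟫) (‖d‖ ^ 2) t).const_mul (L / 2)
      have : (fun s : ℝ => (L / 2) * ‖x₁ + s • d‖ ^ 2) =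
          fun s : ℝ => (L / 2) * (‖x₁‖ ^ 2 + (2 * ⟪x₁, d⟫) * s + ‖d‖ ^ 2 * s ^ 2) := by
        funext s; rw [norm_line_sq]
      rw [this]
      convert hpoly using 1
    exact h1.add h2
  have hqdiff : Differentiable ℝ q := fun t => (hq' t).differentiableAt
  have hmono : Monotone (deriv q) := by
    intro s t hst
    rw [(hq' s).deriv, (hq' t).deriv]
    have hb1 : ⟪gradient G (x₁ + s • d) - gradient G (x₁ + t • d), d⟫ ≤
        ‖gradient G (x₁ + s • d) - gradient G (x₁ + t • d)‖ * ‖d‖ :=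
      real_inner_le_norm _ _
    have hb2 : ‖gradient G (x₁ + s • d) - gradient G (x₁ + t • d)‖ ≤ L * ((t - s) * ‖d‖) := by
      have := hlip (x₁ + s • d) (x₁ + t • d)
      rw [hc t s] at this
      rw [norm_smul] at this
      simpa [abs_of_nonpos (sub_nonpos.2 hst), neg_sub] using this
    have hinner : ⟪gradient G (x₁ + s • d), d⟫ - ⟪gradient G (x₁ + t • d), d⟫ ≤
        L * ((t - s) * ‖d‖) * ‖d‖ := by
      rw [← inner_sub_left]
      calc _ ≤ _ := hb1
      _ ≤ _ := by
        apply mul_le_mul_of_nonneg_right hb2 (norm_nonneg d)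
    nlinarith [norm_nonneg d, sq_nonneg ‖d‖]
  have hqconv : ConvexOn ℝ Set.univ q := hmono.convexOn_univ_of_deriv hqdiff
  have key := hqconv.2 (Set.mem_univ (0 : ℝ)) (Set.mem_univ (1 : ℝ)) ha hb hab
  have h0 : x₁ + (a * (0:ℝ) + b * (1:ℝ)) • d = a • x₁ + b • x₂ := by
    simp only [mul_zero, mul_one, zero_add]
    have : a = 1 - b := by linarith
    subst this
    rw [hd_def]; rw [smul_sub, sub_smul, one_smul]; abel
  have h1 : x₁ + (0:ℝ) • d = x₁ := by simp
  have h2 : x₁ + (1:ℝ) • d = x₂ := by rw [one_smul, hd_def]; abel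
  simp only [hq_def, h1, h2, smul_eq_mul] at key
  rw [h0] at key
  simpa [smul_eq_mul] using key

end helpers

set_option maxHeartbeats 2000000 in
/-- Theorem 2, outer iteration of Prox-DIAG: let
`f(x) = max_{y ∈ 𝒴} g(x, y)` with `g` `L`-smooth, `g(x,·)` concave on the nonempty
compact convex set `𝒴`, and `f ≥ f* > −∞`. Fix `ε > 0` and `ε̃ = ε²/(64L)`. If the
sequence `(x_k)` satisfies the proximal accuracy condition
`f(x_{k+1}) + L‖x_{k+1} − x_k‖² ≤ min_x [f(x) + L‖x − x_k‖²] + ε̃/4` for all `k`, then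
the termination condition `f(x_k) − 3ε̃/4 ≤ f(x_{k+1}) + L‖x_{k+1} − x_k‖²` holds for
some `k ≤ ⌈4⁴L(f(x₀) − f*)/(3ε²)⌉`, and any `x_k` satisfying it is an `ε`-FOSP of `f`,
i.e. `‖∇f_{1/(2L)}(x_k)‖ ≤ ε`. -/
theorem stmt_17 {p q : ℕ} (Y : Set (EuclideanSpace ℝ (Fin q))) (hYne : Y.Nonempty)
    (hYcomp : IsCompact Y) (hYconv : Convex ℝ Y)
    (g : EuclideanSpace ℝ (Fin p) × EuclideanSpace ℝ (Fin q) → ℝ) (L : ℝ) (hL : 0 < L)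
    (hdx : ∀ y, Differentiable ℝ fun x => g (x, y))
    (hdy : ∀ x, Differentiable ℝ fun y => g (x, y))
    (hsmooth : ∀ x y x' y',
      ‖gradient (fun z => g (z, y)) x - gradient (fun z => g (z, y')) x'‖ ≤
          L * (‖x - x'‖ + ‖y - y'‖) ∧
      ‖gradient (fun z => g (x, z)) y - gradient (fun z => g (x', z)) y'‖ ≤
          L * (‖x - x'‖ + ‖y - y'‖))
    (hconc : ∀ x, ConcaveOn ℝ Y fun y => g (x, y))
    (f : EuclideanSpace ℝ (Fin p) → ℝ)
    (hf : ∀ x, f x = sSup ((fun y => g (x, y)) '' Y))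
    (fstar : ℝ) (hlb : ∀ x, fstar ≤ f x)
    (ε : ℝ) (hε : 0 < ε)
    (x : ℕ → EuclideanSpace ℝ (Fin p))
    (hstep : ∀ k, f (x (k + 1)) + L * ‖x (k + 1) - x k‖ ^ 2 ≤
        (⨅ x' : EuclideanSpace ℝ (Fin p), f x' + L * ‖x' - x k‖ ^ 2) +
          ε ^ 2 / (64 * L) / 4) :
    (∃ k ≤ ⌈(4 : ℝ) ^ 4 * L * (f (x 0) - fstar) / (3 * ε ^ 2)⌉₊,
      f (x k) - 3 * (ε ^ 2 / (64 * L)) / 4 ≤ f (x (k + 1)) + L * ‖x (k + 1) - x k‖ ^ 2) ∧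
    (∀ k, f (x k) - 3 * (ε ^ 2 / (64 * L)) / 4 ≤ f (x (k + 1)) + L * ‖x (k + 1) - x k‖ ^ 2 →
      ‖gradient
          (fun v => ⨅ x' : EuclideanSpace ℝ (Fin p), f x' + L * ‖v - x'‖ ^ 2) (x k)‖ ≤ ε) := by
  classical
  -- attainment of the max defining f
  have hgmax : ∀ v : EuclideanSpace ℝ (Fin p), ∃ y ∈ Y, (∀ y' ∈ Y, g (v, y') ≤ g (v, y)) ∧ f v = g (v, y) := by
    intro v
    obtain ⟨y, hyY, hymax⟩ := hYcomp.exists_isMaxOn hYne ((hdy v).continuous.continuousOn)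
    refine ⟨y, hyY, fun y' hy' => hymax hy', ?_⟩
    rw [hf]
    have : IsGreatest ((fun y => g (v, y)) '' Y) (g (v, y)) := by
      constructor
      · exact Set.mem_image_of_mem _ hyY
      · rintro _ ⟨y', hy', rfl⟩; exact hymax hy'
    exact this.csSup_eq
  -- weak convexity of f
  have hyconv : ∀ y, ConvexOn ℝ Set.univ (fun v : EuclideanSpace ℝ (Fin p) => g (v, y) + (L / 2) * ‖v‖ ^ 2) := by
    intro y
    apply weak_convex_of_lip_grad _ L (hdx y)
    intro a b
    have := (hsmooth a y b y).1
    simpa using this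
  have hFconv : ConvexOn ℝ Set.univ (fun v : EuclideanSpace ℝ (Fin p) => f v + (L / 2) * ‖v‖ ^ 2) := by
    refine ⟨convex_univ, ?_⟩
    intro x₁ _ x₂ _ a b ha hb hab
    obtain ⟨ym, hymY, _, hfm⟩ := hgmax (a • x₁ + b • x₂)
    obtain ⟨y₁, hy₁Y, hmax₁, hf₁⟩ := hgmax x₁
    obtain ⟨y₂, hy₂Y, hmax₂, hf₂⟩ := hgmax x₂
    have h1 := (hyconv ym).2 (Set.mem_univ x₁) (Set.mem_univ x₂) ha hb hab
    have e1 : g (x₁, ym) ≤ f x₁ := hf₁ ▸ hmax₁ ym hymY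
    have e2 : g (x₂, ym) ≤ f x₂ := hf₂ ▸ hmax₂ ym hymY
    simp only [smul_eq_mul] at h1 ⊢
    rw [hfm]
    nlinarith [h1, e1, e2]
  -- continuity of f
  have hFcont : Continuous (fun v : EuclideanSpace ℝ (Fin p) => f v + (L / 2) * ‖v‖ ^ 2) :=
    continuousOn_univ.1 (hFconv.continuousOn isOpen_univ)
  have hnormsq : Continuous (fun v : EuclideanSpace ℝ (Fin p) => (L / 2) * ‖v‖ ^ 2) :=
    continuous_const.mul (continuous_norm.pow 2)
  have hfcont : Continuous f := by
    have : f = fun v => (f v + (L / 2) * ‖v‖ ^ 2) - (L / 2) * ‖v‖ ^ 2 := by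
      funext v; ring
    rw [this]
    exact hFcont.sub hnormsq
  -- lower bounds
  have hlb2 : ∀ v z : EuclideanSpace ℝ (Fin p), fstar ≤ f z + L * ‖v - z‖ ^ 2 := by
    intro v z
    have : (0:ℝ) ≤ L * ‖v - z‖ ^ 2 := by positivity
    linarith [hlb z]
  -- existence of proximal minimizers
  have hprox : ∀ v : EuclideanSpace ℝ (Fin p), ∃ w : EuclideanSpace ℝ (Fin p), ∀ z : EuclideanSpace ℝ (Fin p), f w + L * ‖w - v‖ ^ 2 ≤ f z + L * ‖z - v‖ ^ 2 := by
    intro v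
    have hcont : Continuous (fun z : EuclideanSpace ℝ (Fin p) => f z + L * ‖z - v‖ ^ 2) :=
      hfcont.add (continuous_const.mul ((continuous_id.sub continuous_const).norm.pow 2))
    have := hcont.exists_forall_le' v ?_
    · obtain ⟨w, hw⟩ := this
      refine ⟨w, fun z => ?_⟩
      have h1 := hw w
      have h2 := hw z
      exact h2
    · filter_upwards [tendsto_norm_cocompact_atTop.eventually_ge_atTop
        (‖v‖ + Real.sqrt ((f v - fstar) / L))] with z hz
      have hns : Real.sqrt ((f v - fstar) / L) ≤ ‖z - v‖ := by
        have := norm_sub_norm_le z v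
        linarith
      have hnn : 0 ≤ (f v - fstar) / L := div_nonneg (by linarith [hlb v]) hL.le
      have h2 : (f v - fstar) / L ≤ ‖z - v‖ ^ 2 := by
        calc (f v - fstar) / L = (Real.sqrt ((f v - fstar) / L)) ^ 2 :=
              (Real.sq_sqrt hnn).symm
          _ ≤ ‖z - v‖ ^ 2 := by
              apply pow_le_pow_left₀ (Real.sqrt_nonneg _) hns
      have h3 : f v - fstar ≤ L * ‖z - v‖ ^ 2 := by
        rw [div_le_iff₀ hL] at h2; linarith
      have h4 : ‖v - v‖ = (0:ℝ) := by simp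
      rw [h4]
      have h5 := hlb z
      norm_num
      linarith
  -- strong convexity inequality at the minimizer
  have hstrong : ∀ v w : EuclideanSpace ℝ (Fin p), (∀ z : EuclideanSpace ℝ (Fin p), f w + L * ‖w - v‖ ^ 2 ≤ f z + L * ‖z - v‖ ^ 2) →
      f w + L * ‖w - v‖ ^ 2 + (L / 2) * ‖v - w‖ ^ 2 ≤ f v := by
    intro v w hmin
    set ψ : EuclideanSpace ℝ (Fin p) → ℝ := fun z => f z + (L / 2) * ‖z‖ ^ 2 - 2 * L * ⟪z, v⟫ + L * ⟪z, w⟫ with hψdef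
    have hψh : ∀ z : EuclideanSpace ℝ (Fin p), ψ z = f z + L * ‖z - v‖ ^ 2 - (L / 2) * ‖z - w‖ ^ 2
        - L * ‖v‖ ^ 2 + (L / 2) * ‖w‖ ^ 2 := by
      intro z
      have e1 : ‖z - v‖ ^ 2 = ‖z‖ ^ 2 - 2 * ⟪z, v⟫ + ‖v‖ ^ 2 := norm_sub_sq_real z v
      have e2 : ‖z - w‖ ^ 2 = ‖z‖ ^ 2 - 2 * ⟪z, w⟫ + ‖w‖ ^ 2 := norm_sub_sq_real z w
      rw [hψdef]
      simp only []
      rw [e1, e2]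
      ring
    have hψconv : ConvexOn ℝ Set.univ ψ := by
      refine ⟨convex_univ, ?_⟩
      intro x₁ _ x₂ _ a b ha hb hab
      have hF := hFconv.2 (Set.mem_univ x₁) (Set.mem_univ x₂) ha hb hab
      simp only [smul_eq_mul] at hF ⊢
      have l1 : ⟪a • x₁ + b • x₂, v⟫ = a * ⟪x₁, v⟫ + b * ⟪x₂, v⟫ := by
        rw [inner_add_left, real_inner_smul_left, real_inner_smul_left]
      have l2 : ⟪a • x₁ + b • x₂, w⟫ = a * ⟪x₁, w⟫ + b * ⟪x₂, w⟫ := by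
        rw [inner_add_left, real_inner_smul_left, real_inner_smul_left]
      simp only [hψdef]
      rw [l1, l2]
      linarith [hF]
    clear hψdef
    clear_value ψ
    have key : ∀ t : ℝ, 0 < t → t ≤ 1 → ψ w ≤ ψ v + (L / 2) * t * ‖v - w‖ ^ 2 := by
      intro t ht0 ht1
      have hcomb := hψconv.2 (Set.mem_univ w) (Set.mem_univ v)
        (by linarith : (0:ℝ) ≤ 1 - t) ht0.le (by ring)
      set z := (1 - t) • w + t • v with hzdef
      have hz : z - w = t • (v - w) := by
        rw [hzdef, sub_smul, one_smul, smul_sub]; abel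
      have hzw : ‖z - w‖ ^ 2 = t ^ 2 * ‖v - w‖ ^ 2 := by
        rw [hz, norm_smul]; simp [mul_pow, sq_abs]
      have hm := hmin z
      have hψz := hψh z
      have hψw := hψh w
      have hψv := hψh v
      have hww : ‖w - w‖ = (0:ℝ) := by simp
      rw [hww] at hψw
      rw [hzw] at hψz
      simp only [smul_eq_mul] at hcomb
      clear hzdef hz
      clear_value z
      have hts : t * ψ w ≤ t * (ψ v + (L / 2) * t * ‖v - w‖ ^ 2) := by
        linarith [hm, hcomb, hψz, hψw, hψv]
      exact (mul_le_mul_iff_right₀ ht0).1 hts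
    have hψwv : ψ w ≤ ψ v := by
      by_cases hd0 : ‖v - w‖ ^ 2 = 0
      · have h1 := key 1 one_pos le_rfl
        rw [hd0] at h1; linarith
      · have hdpos : 0 < ‖v - w‖ ^ 2 := lt_of_le_of_ne (sq_nonneg _) (Ne.symm hd0)
        apply le_of_forall_pos_le_add
        intro η hη
        have hpos : 0 < (L / 2) * ‖v - w‖ ^ 2 := by positivity
        set t := min 1 (η / ((L / 2) * ‖v - w‖ ^ 2)) with htdef
        have ht0 : 0 < t := lt_min one_pos (div_pos hη hpos)
        have hk := key t ht0 (min_le_left _ _)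
        have hbound : (L / 2) * t * ‖v - w‖ ^ 2 ≤ η := by
          have htle : t ≤ η / ((L / 2) * ‖v - w‖ ^ 2) := min_le_right _ _
          calc (L / 2) * t * ‖v - w‖ ^ 2 = t * ((L / 2) * ‖v - w‖ ^ 2) := by ring
            _ ≤ (η / ((L / 2) * ‖v - w‖ ^ 2)) * ((L / 2) * ‖v - w‖ ^ 2) :=
                mul_le_mul_of_nonneg_right htle hpos.le
            _ = η := div_mul_cancel₀ _ (ne_of_gt hpos)
        linarith
    have hψv := hψh v
    have hψw := hψh w
    have hvv : ‖v - v‖ = (0:ℝ) := by simp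
    have hww : ‖w - w‖ = (0:ℝ) := by simp
    rw [hvv] at hψv
    rw [hww] at hψw
    nlinarith [hψwv]
  -- value of the infimum
  have hIv : ∀ (v w : EuclideanSpace ℝ (Fin p)), (∀ z : EuclideanSpace ℝ (Fin p), f w + L * ‖w - v‖ ^ 2 ≤ f z + L * ‖z - v‖ ^ 2) →
      (⨅ x' : EuclideanSpace ℝ (Fin p), f x' + L * ‖x' - v‖ ^ 2) = f w + L * ‖w - v‖ ^ 2 := by
    intro v w hw
    apply le_antisymm
    · refine ciInf_le ⟨fstar, ?_⟩ w
      rintro _ ⟨z, rfl⟩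
      have h := hlb2 v z
      rw [norm_sub_rev v z] at h
      exact h
    · exact le_ciInf hw
  constructor
  · by_contra hcon
    push_neg at hcon
    set K := ⌈(4 : ℝ) ^ 4 * L * (f (x 0) - fstar) / (3 * ε ^ 2)⌉₊ with hKdef
    have hdec : ∀ k : ℕ, k ≤ K + 1 → f (x k) + k * (3 * (ε ^ 2 / (64 * L)) / 4) ≤ f (x 0) := by
      intro k
      induction k with
      | zero => intro _; simp
      | succ n ih =>
        intro hn
        have h1 := hcon n (by omega)
        have h2 : (0:ℝ) ≤ L * ‖x (n + 1) - x n‖ ^ 2 := by positivity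
        have h3 := ih (by omega)
        push_cast
        push_cast at h3
        linarith
    have hfinal := hdec (K + 1) le_rfl
    have hK := Nat.le_ceil ((4 : ℝ) ^ 4 * L * (f (x 0) - fstar) / (3 * ε ^ 2))
    have hc : (0:ℝ) < 3 * (ε ^ 2 / (64 * L)) / 4 := by positivity
    have hL' : L ≠ 0 := ne_of_gt hL
    have hε' : ε ≠ 0 := ne_of_gt hε
    have h1 : ((4 : ℝ) ^ 4 * L * (f (x 0) - fstar) / (3 * ε ^ 2)) * (3 * (ε ^ 2 / (64 * L)) / 4)
        = f (x 0) - fstar := by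
      field_simp
      ring
    have h2 : f (x 0) - fstar ≤ (K : ℝ) * (3 * (ε ^ 2 / (64 * L)) / 4) := by
      calc f (x 0) - fstar = _ := h1.symm
        _ ≤ (K : ℝ) * (3 * (ε ^ 2 / (64 * L)) / 4) :=
            mul_le_mul_of_nonneg_right hK hc.le
    have h4 := hlb (x (K + 1))
    push_cast at hfinal
    linarith
  · intro k hterm
    obtain ⟨w, hw⟩ := hprox (x k)
    have hIveq := hIv (x k) w hw
    have hstep' := hstep k
    rw [hIveq] at hstep'
    have hfv : f (x k) ≤ f w + L * ‖w - x k‖ ^ 2 + ε ^ 2 / (64 * L) := by linarith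
    have hsq : (L / 2) * ‖x k - w‖ ^ 2 ≤ ε ^ 2 / (64 * L) := by
      have := hstrong (x k) w hw
      linarith
    set φ : EuclideanSpace ℝ (Fin p) → ℝ :=
      fun u => ⨅ x' : EuclideanSpace ℝ (Fin p), f x' + L * ‖u - x'‖ ^ 2 with hφdef
    have hφle : ∀ u : EuclideanSpace ℝ (Fin p), φ u ≤ f w + L * ‖u - w‖ ^ 2 := by
      intro u
      refine ciInf_le ⟨fstar, ?_⟩ w
      rintro _ ⟨z, rfl⟩
      exact hlb2 u z
    have hφv : φ (x k) = f w + L * ‖x k - w‖ ^ 2 := by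
      refine le_antisymm (hφle _) (le_ciInf fun z => ?_)
      have h := hw z
      rw [norm_sub_rev (x k) w, norm_sub_rev (x k) z]
      exact h
    by_cases hdiff : DifferentiableAt ℝ φ (x k)
    · have hGeq : gradient φ (x k) = (2 * L) • (x k - w) := by
        apply ext_inner_right ℝ
        intro u
        have hA : HasDerivAt (fun t : ℝ => f w + L * ‖x k + t • u - w‖ ^ 2)
            (L * (2 * ⟪x k - w, u⟫)) 0 := by
          have heq : (fun t : ℝ => f w + L * ‖x k + t • u - w‖ ^ 2)
              = fun t : ℝ => (f w + L * ‖x k - w‖ ^ 2) + (L * (2 * ⟪x k - w, u⟫)) * t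
                  + (L * ‖u‖ ^ 2) * t ^ 2 := by
            funext t
            have e : x k + t • u - w = (x k - w) + t • u := by abel
            rw [e, norm_line_sq]
            ring
          rw [heq]
          have h := quad_hasDerivAt (f w + L * ‖x k - w‖ ^ 2) (L * (2 * ⟪x k - w, u⟫))
            (L * ‖u‖ ^ 2) 0
          simpa using h
        have hB : HasDerivAt (fun t : ℝ => φ (x k + t • u)) ⟪gradient φ (x k), u⟫ 0 := by
          have h := line_hasDerivAt_s17 φ (x k) u 0 (by simpa using hdiff)
          have e0 : x k + (0:ℝ) • u = x k := by simp
          rw [e0] at h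
          exact h
        have hδ := hA.sub hB
        have hmin0 : IsLocalMin (fun t : ℝ => (f w + L * ‖x k + t • u - w‖ ^ 2)
            - φ (x k + t • u)) 0 := by
          apply Filter.Eventually.of_forall
          intro t
          have e0 : x k + (0:ℝ) • u = x k := by simp
          simp only [e0, hφv]
          have h := hφle (x k + t • u)
          linarith
        have hzero := hmin0.hasDerivAt_eq_zero hδ
        rw [real_inner_smul_left]
        linarith [hzero]
      rw [hGeq, norm_smul, Real.norm_eq_abs, abs_of_pos (by linarith : (0:ℝ) < 2 * L)]
      have hn := norm_nonneg (x k - w)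
      have h64 : (0:ℝ) < 64 * L := by positivity
      have hsq3 : 32 * L ^ 2 * ‖x k - w‖ ^ 2 ≤ ε ^ 2 := by
        have h := (le_div_iff₀ h64).1 hsq
        linarith [h]
      have hsq4 : (2 * L * ‖x k - w‖) ^ 2 ≤ ε ^ 2 := by
        have hLs : (0:ℝ) ≤ L ^ 2 * ‖x k - w‖ ^ 2 := by positivity
        linarith [hsq3, hLs]
      exact (pow_le_pow_iff_left₀ (by positivity) hε.le two_ne_zero).1 hsq4
    · rw [gradient_eq_zero_of_not_differentiableAt hdiff]
      simp only [norm_zero]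
      exact hε.le
end
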